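/- arXiv:1703.10705 — 3 statements merged into one kernel-verified Lean document; each statement's English description precedes it below -/
import Mathlib

section
/- Let f : ℤ² → ℝ ∪ {+∞} be an integrally convex function. Then for all nonnegative integers a, b, the basic parallelogram inequality holds: f(0,0) + f(a+b, a) ≥ f(a,a) + f(b,0). -/
open scoped BigOperators

noncomputable section

/-- Integer neighborhood `N(x)` of a real point. -/
def intNbhd {n : ℕ} (x : Fin n → ℝ) : Set (Fin n → ℤ) :=
  {z | ∀ i, |x i - (z i : ℝ)| < 1}

/-- Local convex extension of `f : ℤⁿ → ℝ ∪ {+∞}`. -/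
noncomputable def localExt {n : ℕ} (f : (Fin n → ℤ) → EReal) (x : Fin n → ℝ) : EReal :=
  sInf { v : EReal | ∃ (m : ℕ) (lam : Fin m → ℝ) (y : Fin m → (Fin n → ℤ)),
      (∀ j, 0 ≤ lam j) ∧ (∑ j, lam j) = 1 ∧ (∀ j, y j ∈ intNbhd x) ∧
      (∀ i, (∑ j, lam j * ((y j i : ℝ))) = x i) ∧
      v = ∑ j, (((lam j : ℝ) : EReal) * f (y j)) }

/-- A function is integrally convex if its local convex extension is convex. -/
def IsIntegrallyConvexFn {n : ℕ} (f : (Fin n → ℤ) → EReal) : Prop :=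
  ∀ x y : Fin n → ℝ, ∀ t : ℝ, 0 ≤ t → t ≤ 1 →
    localExt f (fun i => t * x i + (1 - t) * y i) ≤
      ((t : ℝ) : EReal) * localExt f x + (((1 - t : ℝ)) : EReal) * localExt f y

/-- Coercion of an integer point to a real point. -/
def realify {n : ℕ} (z : Fin n → ℤ) : Fin n → ℝ := fun i => (z i : ℝ)

/-- A set `S ⊆ ℤⁿ` is integrally convex. -/
def IsIntegrallyConvexSet {n : ℕ} (S : Set (Fin n → ℤ)) : Prop :=
  ∀ x : Fin n → ℝ, x ∈ convexHull ℝ (realify '' S) →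
    x ∈ convexHull ℝ (realify '' (S ∩ intNbhd x))

/- ---------------- Auxiliary lemmas ---------------- -/

lemma vec2_eq {A B C D : ℤ} (h1 : A = C) (h2 : B = D) :
    (![A, B] : Fin 2 → ℤ) = ![C, D] := by rw [h1, h2]

lemma ereal_sum_coe_mul {m : ℕ} (s : Finset (Fin m)) (lam : Fin m → ℝ)
    (h : ∀ j, 0 ≤ lam j) (c : EReal) (hc : c ≠ ⊥) :
    ∑ j ∈ s, ((lam j : ℝ) : EReal) * c = (((∑ j ∈ s, lam j : ℝ)) : EReal) * c := by
  induction c with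
  | bot => exact absurd rfl hc
  | coe r =>
      calc ∑ j ∈ s, ((lam j : ℝ) : EReal) * (r : EReal)
          = ∑ j ∈ s, ((lam j * r : ℝ) : EReal) := by
            refine Finset.sum_congr rfl fun j _ => ?_
            rw [EReal.coe_mul]
        _ = ((∑ j ∈ s, lam j * r : ℝ) : EReal) :=
            (map_sum (⟨⟨Real.toEReal, EReal.coe_zero⟩, EReal.coe_add⟩ : ℝ →+ EReal) _ _).symm
        _ = _ := by rw [← Finset.sum_mul, EReal.coe_mul]
  | top =>
      rcases eq_or_lt_of_le (Finset.sum_nonneg (fun j _ => h j)) with h0 | h0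
      · have hall := (Finset.sum_eq_zero_iff_of_nonneg (fun j _ => h j)).mp h0.symm
        rw [← h0]
        simp only [EReal.coe_zero, zero_mul]
        refine Finset.sum_eq_zero fun j hj => ?_
        rw [hall j hj]; simp
      · rw [EReal.coe_mul_top_of_pos h0]
        refine le_antisymm le_top ?_
        obtain ⟨j, hj, hjne⟩ := Finset.exists_ne_zero_of_sum_ne_zero h0.ne'
        have hjpos : 0 < lam j := lt_of_le_of_ne (h j) (Ne.symm hjne)
        calc (⊤ : EReal) = ((lam j : ℝ) : EReal) * ⊤ := (EReal.coe_mul_top_of_pos hjpos).symm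
          _ ≤ ∑ i ∈ s, ((lam i : ℝ) : EReal) * ⊤ := by
              refine Finset.single_le_sum
                (f := fun i => ((lam i : ℝ) : EReal) * ⊤) (fun i _ => ?_) hj
              exact mul_nonneg (by exact_mod_cast h i) le_top

lemma localExt_le_int {n : ℕ} (f : (Fin n → ℤ) → EReal) (z : Fin n → ℤ) :
    localExt f (realify z) ≤ f z := by
  apply sInf_le
  refine ⟨1, fun _ => 1, fun _ => z, fun j => zero_le_one, by simp, ?_, ?_, ?_⟩
  · intro j i
    simp [realify, intNbhd]
  · intro i
    simp [realify]
  · simp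

lemma int_eq_of_abs_lt {a b : ℤ} (h : |(a : ℝ) - (b : ℝ)| < 1) : a = b := by
  rw [abs_lt] at h
  have h1 : (-1 : ℝ) < ((a - b : ℤ) : ℝ) := by push_cast; linarith [h.1]
  have h2 : ((a - b : ℤ) : ℝ) < 1 := by push_cast; linarith [h.2]
  have h1' : (-1 : ℤ) < a - b := by exact_mod_cast h1
  have h2' : (a - b : ℤ) < 1 := by exact_mod_cast h2
  omega

lemma localExt_lb (f : (Fin 2 → ℤ) → EReal) (hbot : ∀ x, f x ≠ ⊥) (m k : ℤ) (s : ℝ)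
    (hk : (k : ℝ) ≤ s) (hk1 : s ≤ (k : ℝ) + 1) :
    (((k : ℝ) + 1 - s : ℝ) : EReal) * f ![m, k] + ((s - (k : ℝ) : ℝ) : EReal) * f ![m, k + 1]
      ≤ localExt f ![(m : ℝ), s] := by
  classical
  apply le_sInf
  rintro v ⟨M, lam, y, hpos, hsum, hnb, hlin, rfl⟩
  have hy0 : ∀ j, y j 0 = m := by
    intro j
    have h0 := hnb j 0
    rw [Matrix.cons_val_zero] at h0
    exact (int_eq_of_abs_lt h0).symm
  have hy1 : ∀ j, y j 1 = k ∨ y j 1 = k + 1 := by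
    intro j
    have h1 := hnb j 1
    rw [Matrix.cons_val_one, Matrix.cons_val_zero] at h1
    rw [abs_lt] at h1
    have hgt : ((k : ℤ) : ℝ) - 1 < ((y j 1 : ℤ) : ℝ) := by linarith [h1.2]
    have hlt : ((y j 1 : ℤ) : ℝ) < ((k : ℤ) : ℝ) + 2 := by linarith [h1.1]
    have hgt' : (k : ℤ) - 1 < y j 1 := by exact_mod_cast hgt
    have hlt' : y j 1 < (k : ℤ) + 2 := by exact_mod_cast hlt
    omega
  set p : Fin M → Prop := fun j => y j 1 = k + 1 with hp
  have hyT : ∀ j, p j → y j = ![m, k + 1] := by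
    intro j hj
    funext i
    fin_cases i
    · simpa using hy0 j
    · simpa using hj
  have hyTc : ∀ j, ¬ p j → y j = ![m, k] := by
    intro j hj
    have := (hy1 j).resolve_right hj
    funext i
    fin_cases i
    · simpa using hy0 j
    · simpa using this
  set B : ℝ := ∑ j ∈ Finset.univ.filter p, lam j with hB
  set A : ℝ := ∑ j ∈ Finset.univ.filter (fun j => ¬ p j), lam j with hA
  have hAB : B + A = 1 := by
    rw [hB, hA, Finset.sum_filter_add_sum_filter_not]
    exact hsum
  have hlin1 := hlin 1
  rw [Matrix.cons_val_one, Matrix.cons_val_zero] at hlin1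
  have hsplit : B * ((k : ℝ) + 1) + A * (k : ℝ) = s := by
    rw [hB, hA, Finset.sum_mul, Finset.sum_mul]
    rw [← hlin1, ← Finset.sum_filter_add_sum_filter_not Finset.univ p
      (fun j => lam j * ((y j 1 : ℤ) : ℝ))]
    congr 1
    · refine Finset.sum_congr rfl fun j hj => ?_
      rw [Finset.mem_filter] at hj
      have : y j 1 = k + 1 := hj.2
      rw [this]; push_cast; ring
    · refine Finset.sum_congr rfl fun j hj => ?_
      rw [Finset.mem_filter] at hj
      have : y j 1 = k := (hy1 j).resolve_right hj.2
      rw [this]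
  have hBv : B = s - (k : ℝ) := by
    have h2 : B + (B + A) * (k : ℝ) = s := by linear_combination hsplit
    rw [hAB, one_mul] at h2
    linarith
  have hAv : A = (k : ℝ) + 1 - s := by linarith
  have hvsplit : ∑ j, ((lam j : ℝ) : EReal) * f (y j)
      = ((A : ℝ) : EReal) * f ![m, k] + ((B : ℝ) : EReal) * f ![m, k + 1] := by
    rw [← Finset.sum_filter_add_sum_filter_not Finset.univ p
      (fun j => ((lam j : ℝ) : EReal) * f (y j))]
    rw [add_comm]
    congr 1
    · rw [← ereal_sum_coe_mul _ lam hpos _ (hbot _)]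
      refine Finset.sum_congr rfl fun j hj => ?_
      rw [Finset.mem_filter] at hj
      rw [hyTc j hj.2]
    · rw [← ereal_sum_coe_mul _ lam hpos _ (hbot _)]
      refine Finset.sum_congr rfl fun j hj => ?_
      rw [Finset.mem_filter] at hj
      rw [hyT j hj.2]
  rw [hvsplit, hAv, hBv]

lemma coe_mul_ne_bot (c : ℝ) (hc : 0 ≤ c) (d : EReal) (hd : d ≠ ⊥) :
    ((c : ℝ) : EReal) * d ≠ ⊥ := by
  induction d with
  | bot => exact absurd rfl hd
  | coe r => rw [← EReal.coe_mul]; exact EReal.coe_ne_bot _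
  | top =>
      rcases eq_or_lt_of_le hc with h | h
      · rw [← h]; simp
      · rw [EReal.coe_mul_top_of_pos h]; simp

lemma cc_lemma (f : (Fin 2 → ℤ) → EReal) (hbot : ∀ x, f x ≠ ⊥) (hf : IsIntegrallyConvexFn f)
    (p0 p1 q0 q1 m k : ℤ) (t s : ℝ) (ht0 : 0 ≤ t) (ht1 : t ≤ 1)
    (hm : t * (p0 : ℝ) + (1 - t) * (q0 : ℝ) = (m : ℝ))
    (hs : t * (p1 : ℝ) + (1 - t) * (q1 : ℝ) = s)
    (hk : (k : ℝ) ≤ s) (hk1 : s ≤ (k : ℝ) + 1) :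
    (((k : ℝ) + 1 - s : ℝ) : EReal) * f ![m, k] + ((s - (k : ℝ) : ℝ) : EReal) * f ![m, k + 1]
      ≤ ((t : ℝ) : EReal) * f ![p0, p1] + ((1 - t : ℝ) : EReal) * f ![q0, q1] := by
  have hcvx := hf (realify ![p0, p1]) (realify ![q0, q1]) t ht0 ht1
  have hxeq : (fun i => t * realify ![p0, p1] i + (1 - t) * realify ![q0, q1] i)
      = ![(m : ℝ), s] := by
    funext i
    fin_cases i
    · simpa [realify] using hm
    · simpa [realify] using hs
  rw [hxeq] at hcvx
  refine le_trans (localExt_lb f hbot m k s hk hk1) (le_trans hcvx ?_)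
  refine add_le_add ?_ ?_
  · exact mul_le_mul_of_nonneg_left (localExt_le_int f _) (by exact_mod_cast ht0)
  · exact mul_le_mul_of_nonneg_left (localExt_le_int f _)
      (by exact_mod_cast (by linarith : (0:ℝ) ≤ 1 - t))

lemma fin_lemma (f : (Fin 2 → ℤ) → EReal) (hbot : ∀ x, f x ≠ ⊥) (hf : IsIntegrallyConvexFn f)
    (p0 p1 q0 q1 m k : ℤ) (t s : ℝ) (ht0 : 0 ≤ t) (ht1 : t ≤ 1)
    (hm : t * (p0 : ℝ) + (1 - t) * (q0 : ℝ) = (m : ℝ))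
    (hs : t * (p1 : ℝ) + (1 - t) * (q1 : ℝ) = s)
    (hk : (k : ℝ) ≤ s) (hk1 : s ≤ (k : ℝ) + 1)
    (hp : f ![p0, p1] ≠ ⊤) (hq : f ![q0, q1] ≠ ⊤) :
    (0 < (k : ℝ) + 1 - s → f ![m, k] ≠ ⊤) ∧ (0 < s - (k : ℝ) → f ![m, k + 1] ≠ ⊤) := by
  have hCC := cc_lemma f hbot hf p0 p1 q0 q1 m k t s ht0 ht1 hm hs hk hk1
  rw [← EReal.coe_toReal hp (hbot _), ← EReal.coe_toReal hq (hbot _), ← EReal.coe_mul,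
    ← EReal.coe_mul, ← EReal.coe_add] at hCC
  constructor
  · intro hpos htop
    rw [htop, EReal.coe_mul_top_of_pos hpos,
      EReal.top_add_of_ne_bot (coe_mul_ne_bot _ (by linarith) _ (hbot _))] at hCC
    exact EReal.coe_ne_top _ (top_le_iff.mp hCC)
  · intro hpos htop
    rw [htop, EReal.coe_mul_top_of_pos hpos,
      EReal.add_top_of_ne_bot (coe_mul_ne_bot _ (by linarith) _ (hbot _))] at hCC
    exact EReal.coe_ne_top _ (top_le_iff.mp hCC)

lemma step_real (f : (Fin 2 → ℤ) → EReal) (hbot : ∀ x, f x ≠ ⊥) (hf : IsIntegrallyConvexFn f)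
    (p q : ℤ) (h0 : f ![p, q] ≠ ⊤) (h2 : f ![p + 2, q + 1] ≠ ⊤) :
    f ![p + 1, q] ≠ ⊤ ∧ f ![p + 1, q + 1] ≠ ⊤ ∧
      (f ![p + 1, q]).toReal + (f ![p + 1, q + 1]).toReal
        ≤ (f ![p, q]).toReal + (f ![p + 2, q + 1]).toReal := by
  have harith1 : (1/2 : ℝ) * (p : ℝ) + (1 - 1/2) * ((p + 2 : ℤ) : ℝ) = ((p + 1 : ℤ) : ℝ) := by
    push_cast; ring
  have harith2 : (1/2 : ℝ) * (q : ℝ) + (1 - 1/2) * ((q + 1 : ℤ) : ℝ) = (q : ℝ) + 1/2 := by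
    push_cast; ring
  have hfin := fin_lemma f hbot hf p q (p + 2) (q + 1) (p + 1) q (1/2) ((q : ℝ) + 1/2)
    (by norm_num) (by norm_num) harith1 harith2 (by linarith) (by linarith) h0 h2
  have hk0 : f ![p + 1, q] ≠ ⊤ := hfin.1 (by linarith)
  have hk1 : f ![p + 1, q + 1] ≠ ⊤ := hfin.2 (by linarith)
  refine ⟨hk0, hk1, ?_⟩
  have hCC := cc_lemma f hbot hf p q (p + 2) (q + 1) (p + 1) q (1/2) ((q : ℝ) + 1/2)
    (by norm_num) (by norm_num) harith1 harith2 (by linarith) (by linarith)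
  rw [← EReal.coe_toReal h0 (hbot _), ← EReal.coe_toReal h2 (hbot _),
    ← EReal.coe_toReal hk0 (hbot _), ← EReal.coe_toReal hk1 (hbot _),
    ← EReal.coe_mul, ← EReal.coe_mul, ← EReal.coe_mul, ← EReal.coe_mul,
    ← EReal.coe_add, ← EReal.coe_add, EReal.coe_le_coe_iff] at hCC
  linarith

lemma dom_fill (f : (Fin 2 → ℤ) → EReal) (hbot : ∀ x, f x ≠ ⊥) (hf : IsIntegrallyConvexFn f) :
    ∀ n : ℕ, ∀ a b : ℕ, ∀ p q : ℤ, a + b = n →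
    f ![p, q] ≠ ⊤ → f ![p + (a : ℤ) + (b : ℤ), q + (a : ℤ)] ≠ ⊤ →
    ∀ s t : ℕ, s ≤ a → t ≤ b → f ![p + (s : ℤ) + (t : ℤ), q + (s : ℤ)] ≠ ⊤ := by
  intro n
  induction n using Nat.strong_induction_on with
  | _ n IH =>
    intro a b p q hab hP hQ s t hs ht
    rcases Nat.eq_zero_or_pos a with ha0 | hapos
    · -- a = 0 : horizontal segment
      subst ha0
      have hs0 : s = 0 := Nat.le_zero.mp hs
      subst hs0
      rcases Nat.eq_zero_or_pos b with hb0 | hbpos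
      · subst hb0
        have ht0 : t = 0 := Nat.le_zero.mp ht
        subst ht0
        rw [vec2_eq (show p + ((0:ℕ):ℤ) + ((0:ℕ):ℤ) = p by push_cast; ring)
          (show q + ((0:ℕ):ℤ) = q by push_cast; ring)]
        exact hP
      · have hbR : (0 : ℝ) < (b : ℝ) := by exact_mod_cast hbpos
        have htR : (t : ℝ) ≤ (b : ℝ) := by exact_mod_cast ht
        have hfin := fin_lemma f hbot hf p q (p + ((0:ℕ):ℤ) + (b : ℤ)) (q + ((0:ℕ):ℤ))
          (p + (t : ℤ)) q (((b : ℝ) - t) / b) (q : ℝ)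
          (div_nonneg (by linarith) hbR.le) (by rw [div_le_one hbR]; linarith)
          (by field_simp; push_cast; ring)
          (by field_simp; ring)
          le_rfl (by linarith) hP hQ
        have := hfin.1 (by linarith)
        rw [vec2_eq (show p + ((0:ℕ):ℤ) + (t:ℤ) = p + (t:ℤ) by push_cast; ring)
          (show q + ((0:ℕ):ℤ) = q by push_cast; ring)]
        exact this
    · rcases Nat.eq_zero_or_pos b with hb0 | hbpos
      · -- b = 0 : diagonal segment
        subst hb0
        have ht0 : t = 0 := Nat.le_zero.mp ht
        subst ht0
        have haR : (0 : ℝ) < (a : ℝ) := by exact_mod_cast hapos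
        have hsR : (s : ℝ) ≤ (a : ℝ) := by exact_mod_cast hs
        have hfin := fin_lemma f hbot hf p q (p + (a : ℤ) + ((0:ℕ):ℤ)) (q + (a : ℤ))
          (p + (s : ℤ)) (q + (s : ℤ)) (((a : ℝ) - s) / a) ((q : ℝ) + s)
          (div_nonneg (by linarith) haR.le) (by rw [div_le_one haR]; linarith)
          (by field_simp; push_cast; ring)
          (by push_cast; field_simp; ring)
          (by push_cast; linarith) (by push_cast; linarith) hP hQ
        have := hfin.1 (by push_cast; linarith)
        rw [vec2_eq (show p + (s:ℤ) + ((0:ℕ):ℤ) = p + (s:ℤ) by push_cast; ring) rfl]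
        exact this
      · -- a ≥ 1, b ≥ 1
        have haR : (0 : ℝ) < (a : ℝ) := by exact_mod_cast hapos
        have hbR : (0 : ℝ) < (b : ℝ) := by exact_mod_cast hbpos
        set N : ℝ := (a : ℝ) + (b : ℝ) with hN
        have hNpos : (0 : ℝ) < N := by positivity
        have ha1 : (1 : ℝ) ≤ (a : ℝ) := by exact_mod_cast hapos
        have hdivpos : (0 : ℝ) < (a : ℝ) / N := by positivity
        have hdivlt : (a : ℝ) / N < 1 := by rw [div_lt_one hNpos]; linarith
        have hfin := fin_lemma f hbot hf p q (p + (a : ℤ) + (b : ℤ)) (q + (a : ℤ))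
          (p + 1) q ((N - 1) / N) ((q : ℝ) + (a : ℝ) / N)
          (div_nonneg (by linarith) hNpos.le)
          (by rw [div_le_one hNpos]; linarith)
          (by field_simp; push_cast; rw [hN]; ring)
          (by field_simp; push_cast; ring)
          (by linarith)
          (by linarith) hP hQ
        have hA : f ![p + 1, q] ≠ ⊤ := hfin.1 (by linarith)
        have hB : f ![p + 1, q + 1] ≠ ⊤ := hfin.2 (by linarith)
        rcases Nat.eq_zero_or_pos s with hs0 | hspos
        · subst hs0
          rcases Nat.eq_zero_or_pos t with ht0 | htpos
          · subst ht0
            rw [vec2_eq (show p + ((0:ℕ):ℤ) + ((0:ℕ):ℤ) = p by push_cast; ring)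
              (show q + ((0:ℕ):ℤ) = q by push_cast; ring)]
            exact hP
          · -- use IH with (a, b-1) at (p+1, q)
            have hQ' : f ![(p+1) + (a : ℤ) + ((b-1 : ℕ) : ℤ), q + (a : ℤ)] ≠ ⊤ := by
              rw [vec2_eq (show (p+1) + (a : ℤ) + ((b-1 : ℕ) : ℤ) = p + (a:ℤ) + (b:ℤ) by omega)
                rfl]
              exact hQ
            have := IH (n-1) (by omega) a (b-1) (p+1) q (by omega) hA hQ' 0 (t-1)
              (Nat.zero_le _) (by omega)
            rw [vec2_eq (show p + ((0:ℕ):ℤ) + (t:ℤ) = (p+1) + ((0:ℕ):ℤ) + ((t-1:ℕ):ℤ) by omega)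
              (show q + ((0:ℕ):ℤ) = q + ((0:ℕ):ℤ) by rfl)]
            exact this
        · -- use IH with (a-1, b) at (p+1, q+1)
          have hQ' : f ![(p+1) + ((a-1 : ℕ) : ℤ) + (b : ℤ), (q+1) + ((a-1 : ℕ) : ℤ)] ≠ ⊤ := by
            rw [vec2_eq (show (p+1) + ((a-1 : ℕ) : ℤ) + (b : ℤ) = p + (a:ℤ) + (b:ℤ) by omega)
              (show (q+1) + ((a-1 : ℕ) : ℤ) = q + (a:ℤ) by omega)]
            exact hQ
          have := IH (n-1) (by omega) (a-1) b (p+1) (q+1) (by omega) hB hQ' (s-1) t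
            (by omega) ht
          rw [vec2_eq (show p + (s:ℤ) + (t:ℤ) = (p+1) + ((s-1:ℕ):ℤ) + (t:ℤ) by omega)
            (show q + (s:ℤ) = (q+1) + ((s-1:ℕ):ℤ) by omega)]
          exact this

lemma ineq_real (f : (Fin 2 → ℤ) → EReal) (hbot : ∀ x, f x ≠ ⊥) (hf : IsIntegrallyConvexFn f)
    (p q : ℤ) (a b : ℕ)
    (hdom : ∀ s t : ℕ, s ≤ a → t ≤ b → f ![p + (s : ℤ) + (t : ℤ), q + (s : ℤ)] ≠ ⊤) :
    f ![p + (a : ℤ), q + (a : ℤ)] + f ![p + (b : ℤ), q] ≤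
      f ![p, q] + f ![p + (a : ℤ) + (b : ℤ), q + (a : ℤ)] := by
  set G : ℕ → ℕ → ℝ := fun s t => (f ![p + (s : ℤ) + (t : ℤ), q + (s : ℤ)]).toReal with hG
  have hSM : ∀ s t : ℕ, s + 1 ≤ a → t + 1 ≤ b →
      G (s+1) t + G s (t+1) ≤ G s t + G (s+1) (t+1) := by
    intro s t hsa htb
    have hstep := step_real f hbot hf (p + (s:ℤ) + (t:ℤ)) (q + (s:ℤ))
      (hdom s t (by omega) (by omega))
      (by
        rw [vec2_eq (show p + (s:ℤ) + (t:ℤ) + 2 = p + ((s+1:ℕ):ℤ) + ((t+1:ℕ):ℤ) by omega)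
          (show q + (s:ℤ) + 1 = q + ((s+1:ℕ):ℤ) by omega)]
        exact hdom (s+1) (t+1) hsa htb)
    obtain ⟨-, -, hle⟩ := hstep
    have e1 : (![p + (s:ℤ) + (t:ℤ) + 1, q + (s:ℤ)] : Fin 2 → ℤ)
        = ![p + (s:ℤ) + ((t+1:ℕ):ℤ), q + (s:ℤ)] := vec2_eq (by omega) rfl
    have e2 : (![p + (s:ℤ) + (t:ℤ) + 1, q + (s:ℤ) + 1] : Fin 2 → ℤ)
        = ![p + ((s+1:ℕ):ℤ) + (t:ℤ), q + ((s+1:ℕ):ℤ)] := vec2_eq (by omega) (by omega)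
    have e3 : (![p + (s:ℤ) + (t:ℤ) + 2, q + (s:ℤ) + 1] : Fin 2 → ℤ)
        = ![p + ((s+1:ℕ):ℤ) + ((t+1:ℕ):ℤ), q + ((s+1:ℕ):ℤ)] := vec2_eq (by omega) (by omega)
    rw [e1, e2, e3] at hle
    simp only [hG]
    linarith
  have hrow : ∀ s : ℕ, s + 1 ≤ a → ∀ t : ℕ, t ≤ b →
      G (s+1) 0 + G s t ≤ G s 0 + G (s+1) t := by
    intro s hsa t
    induction t with
    | zero => intro _; linarith
    | succ t iht =>
        intro htb
        have h1 := iht (by omega)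
        have h2 := hSM s t hsa htb
        linarith
  have hmain : ∀ s : ℕ, s ≤ a → G s 0 + G 0 b ≤ G 0 0 + G s b := by
    intro s
    induction s with
    | zero => intro _; linarith
    | succ s ihs =>
        intro hsa
        have h1 := ihs (by omega)
        have h2 := hrow s (by omega) b le_rfl
        linarith
  have hfinal := hmain a le_rfl
  -- convert back to EReal
  have c1 : f ![p + (a : ℤ), q + (a : ℤ)] = ((G a 0 : ℝ) : EReal) := by
    rw [hG]
    rw [vec2_eq (show p + (a:ℤ) = p + ((a:ℕ):ℤ) + ((0:ℕ):ℤ) by omega) rfl]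
    exact (EReal.coe_toReal (hdom a 0 le_rfl (Nat.zero_le _)) (hbot _)).symm
  have c2 : f ![p + (b : ℤ), q] = ((G 0 b : ℝ) : EReal) := by
    rw [hG]
    rw [vec2_eq (show p + (b:ℤ) = p + ((0:ℕ):ℤ) + ((b:ℕ):ℤ) by omega)
      (show q = q + ((0:ℕ):ℤ) by omega)]
    exact (EReal.coe_toReal (hdom 0 b (Nat.zero_le _) le_rfl) (hbot _)).symm
  have c3 : f ![p, q] = ((G 0 0 : ℝ) : EReal) := by
    rw [hG]
    rw [vec2_eq (show p = p + ((0:ℕ):ℤ) + ((0:ℕ):ℤ) by omega)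
      (show q = q + ((0:ℕ):ℤ) by omega)]
    exact (EReal.coe_toReal (hdom 0 0 (Nat.zero_le _) (Nat.zero_le _)) (hbot _)).symm
  have c4 : f ![p + (a : ℤ) + (b : ℤ), q + (a : ℤ)] = ((G a b : ℝ) : EReal) := by
    rw [hG]
    exact (EReal.coe_toReal (hdom a b le_rfl le_rfl) (hbot _)).symm
  rw [c1, c2, c3, c4, ← EReal.coe_add, ← EReal.coe_add, EReal.coe_le_coe_iff]
  exact hfinal

/-- Basic parallelogram inequality for integrally convex functions on ℤ². -/
theorem basic_parallelogram_inequality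
    (f : (Fin 2 → ℤ) → EReal) (hbot : ∀ x, f x ≠ ⊥)
    (hf : IsIntegrallyConvexFn f) (a b : ℕ) :
    f ![(a : ℤ), (a : ℤ)] + f ![(b : ℤ), 0] ≤
      f ![0, 0] + f ![(a : ℤ) + (b : ℤ), (a : ℤ)] := by
  by_cases hP : f ![(0:ℤ), (0:ℤ)] = ⊤
  · rw [hP, EReal.top_add_of_ne_bot (hbot _)]
    exact le_top
  by_cases hQ : f ![(a : ℤ) + (b : ℤ), (a : ℤ)] = ⊤
  · rw [hQ, EReal.add_top_of_ne_bot (hbot _)]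
    exact le_top
  have hP' : f ![(0:ℤ) , (0:ℤ)] ≠ ⊤ := hP
  have hQ' : f ![(0:ℤ) + (a : ℤ) + (b : ℤ), (0:ℤ) + (a : ℤ)] ≠ ⊤ := by
    rw [vec2_eq (show (0:ℤ) + (a:ℤ) + (b:ℤ) = (a:ℤ) + (b:ℤ) by ring)
      (show (0:ℤ) + (a:ℤ) = (a:ℤ) by ring)]
    exact hQ
  have hdom := dom_fill f hbot hf (a+b) a b 0 0 rfl hP' hQ'
  have := ineq_real f hbot hf 0 0 a b hdom
  rw [vec2_eq (show (0:ℤ) + (a:ℤ) = (a:ℤ) by ring) (show (0:ℤ) + (a:ℤ) = (a:ℤ) by ring),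
    vec2_eq (show (0:ℤ) + (b:ℤ) = (b:ℤ) by ring) (rfl : (0:ℤ) = 0),
    vec2_eq (show (0:ℤ) + (a:ℤ) + (b:ℤ) = (a:ℤ) + (b:ℤ) by ring)
      (show (0:ℤ) + (a:ℤ) = (a:ℤ) by ring)] at this
  exact this
end
end

section
/- Let S ⊆ ℤ² be an integrally convex set and α a positive integer. Then the set S^α = {x ∈ ℤ² : αx ∈ S} is an integrally convex set. -/
open scoped BigOperators

noncomputable section

namespace ICProof

/-- Generic linear lower bound on points of a convex hull in ℝ². -/
lemma linBound (r1 r2 c : ℝ) (A : Set (Fin 2 → ℝ))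
    (h : ∀ z ∈ A, c ≤ r1 * z 0 + r2 * z 1) {x : Fin 2 → ℝ}
    (hx : x ∈ convexHull ℝ A) : c ≤ r1 * x 0 + r2 * x 1 := by
  have hlin : IsLinearMap ℝ (fun y : Fin 2 → ℝ => r1 * y 0 + r2 * y 1) := by
    constructor
    · intro a b; simp [Pi.add_apply]; ring
    · intro c' a; simp [Pi.smul_apply, smul_eq_mul]; ring
  have hconv : Convex ℝ {y : Fin 2 → ℝ | c ≤ r1 * y 0 + r2 * y 1} :=
    convex_halfSpace_ge hlin c
  have := convexHull_min (fun z hz => h z hz) hconv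
  exact this hx

lemma intNbhd_self_int (w z : Fin 2 → ℤ) (h : z ∈ intNbhd (realify w)) : z = w := by
  funext i
  have hi := h i
  simp only [realify] at hi
  rw [abs_sub_lt_iff] at hi
  have h1 : (w i : ℝ) - z i < 1 := hi.1
  have h2 : (z i : ℝ) - w i < 1 := hi.2
  have h1' : w i - z i < 1 := by exact_mod_cast h1
  have h2' : z i - w i < 1 := by exact_mod_cast h2
  omega

/-- An integral point of the hull of `realify '' S` belongs to `S` (for IC `S`). -/
lemma int_point_mem {S : Set (Fin 2 → ℤ)} (hS : IsIntegrallyConvexSet S)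
    (w : Fin 2 → ℤ) (h : realify w ∈ convexHull ℝ (realify '' S)) : w ∈ S := by
  have h2 := hS _ h
  have hne : (S ∩ intNbhd (realify w)).Nonempty := by
    by_contra hemp
    rw [Set.not_nonempty_iff_eq_empty] at hemp
    rw [hemp] at h2
    simp at h2
  obtain ⟨z, hzS, hzN⟩ := hne
  rwa [intNbhd_self_int w z hzN] at hzS

/-- combo of three points of A lies in the hull. -/
lemma mem_hull_three {A : Set (Fin 2 → ℝ)} {p q r x : Fin 2 → ℝ} {w1 w2 w3 : ℝ}
    (hp : p ∈ A) (hq : q ∈ A) (hr : r ∈ A)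
    (h1 : 0 ≤ w1) (h2 : 0 ≤ w2) (h3 : 0 ≤ w3) (hsum : w1 + w2 + w3 = 1)
    (hx : x = w1 • p + w2 • q + w3 • r) : x ∈ convexHull ℝ A := by
  have := Finset.centerMass_mem_convexHull (s := A) (Finset.univ : Finset (Fin 3))
    (w := ![w1, w2, w3]) (by
      intro i _
      fin_cases i <;> simpa)
    (by rw [Fin.sum_univ_three]; simp only [Matrix.cons_val_zero, Matrix.cons_val_one,
        Matrix.head_cons, Matrix.cons_val_two, Matrix.tail_cons]; linarith)
    (z := ![p, q, r]) (by intro i _; fin_cases i <;> simpa)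
  rw [Finset.centerMass] at this
  rw [Fin.sum_univ_three, Fin.sum_univ_three] at this
  simp only [Matrix.cons_val_zero, Matrix.cons_val_one, Matrix.head_cons,
    Matrix.cons_val_two, Matrix.tail_cons] at this
  rw [hsum] at this
  rw [hx]
  simpa using this

lemma mem_hull_two {A : Set (Fin 2 → ℝ)} {p q x : Fin 2 → ℝ} {w1 w2 : ℝ}
    (hp : p ∈ A) (hq : q ∈ A)
    (h1 : 0 ≤ w1) (h2 : 0 ≤ w2) (hsum : w1 + w2 = 1)
    (hx : x = w1 • p + w2 • q) : x ∈ convexHull ℝ A := by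
  apply mem_hull_three (w3 := 0) hp hq hq h1 h2 le_rfl (by linarith)
  rw [hx]; simp

lemma mem_hull_one {A : Set (Fin 2 → ℝ)} {p : Fin 2 → ℝ} (hp : p ∈ A) :
    p ∈ convexHull ℝ A := subset_convexHull ℝ A hp

lemma int_mono (f : ℤ → ℤ) (A B : ℤ) (h : ∀ k, A ≤ k → k < B → f k ≤ f (k + 1)) :
    ∀ u v, A ≤ u → u ≤ v → v ≤ B → f u ≤ f v := by
  intro u v hAu huv hvB
  have key : ∀ w, u ≤ w → (w ≤ B → f u ≤ f w) := by
    intro w hw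
    refine Int.le_induction (motive := fun w _ => w ≤ B → f u ≤ f w) (fun _ => le_rfl) ?_ w hw
    intro n hn ih hnB
    have h1 : f u ≤ f n := ih (by omega)
    have h2 : f n ≤ f (n + 1) := h n (by omega) (by omega)
    omega
  exact key v huv hvB

/-- Core bound for integer convex sequences. -/
lemma seq_bound (m : ℤ → ℤ) (A B t₀ : ℤ) (hA : A ≤ t₀) (hB : t₀ ≤ B)
    (hconv : ∀ k, A < k → k < B → 2 * m k ≤ m (k - 1) + m (k + 1))
    (hmin : ∀ k, A ≤ k → k ≤ B → m t₀ ≤ m k)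
    (u : ℤ) (hu1 : A ≤ u) (hu2 : u ≤ B) :
    m u ≤ m t₀ ∨ m u ≤ m B - B + u ∨ m u ≤ m A + A - u := by
  by_cases hcase : m u ≤ m t₀
  · exact Or.inl hcase
  push_neg at hcase
  have dmono : ∀ j k, A ≤ j → j ≤ k → k < B → m (j + 1) - m j ≤ m (k + 1) - m k := by
    intro j k hj hjk hk
    have := int_mono (fun k => m (k + 1) - m k) A (B - 1)
      (by
        intro l hl hlB
        show m (l + 1) - m l ≤ m (l + 1 + 1) - m (l + 1)
        have := hconv (l + 1) (by omega) (by omega)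
        simp only [add_sub_cancel_right] at this
        omega) j k hj hjk (by omega)
    simpa using this
  rcases lt_trichotomy u t₀ with hlt | heq | hgt
  · -- u < t₀ : show m u ≤ m A + A - u
    right; right
    have hex : ∃ j, u ≤ j ∧ j < t₀ ∧ m (j + 1) - m j ≤ -1 := by
      by_contra hno
      push_neg at hno
      have hmono : m u ≤ m t₀ := by
        have := int_mono m u t₀ (fun k hk hkB => by
          have := hno k hk hkB; omega) u t₀ le_rfl (by omega) le_rfl
        exact this
      omega
    obtain ⟨j, hj1, hj2, hj3⟩ := hex
    have tele := int_mono (fun k => -(m k + k)) A u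
      (by
        intro k hk hkB
        show -(m k + k) ≤ -(m (k + 1) + (k + 1))
        have := dmono k j hk (by omega) (by omega)
        omega) A u le_rfl hu1 le_rfl
    have tele' : -(m A + A) ≤ -(m u + u) := tele
    omega
  · exact Or.inl (by rw [heq])
  · -- u > t₀ : show m u ≤ m B - B + u
    right; left
    have hex : ∃ j, t₀ ≤ j ∧ j < u ∧ 1 ≤ m (j + 1) - m j := by
      by_contra hno
      push_neg at hno
      have hmono : m u ≤ m t₀ := by
        have := int_mono (fun k => -(m k)) t₀ u (fun k hk hkB => by
          show -(m k) ≤ -(m (k + 1))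
          have := hno k hk hkB; omega) t₀ u le_rfl (by omega) le_rfl
        have : -(m t₀) ≤ -(m u) := this
        omega
      omega
    obtain ⟨j, hj1, hj2, hj3⟩ := hex
    have tele := int_mono (fun k => m k - k) u B
      (by
        intro k hk hkB
        show m k - k ≤ m (k + 1) - (k + 1)
        have := dmono j k (by omega) (by omega) (by omega)
        omega) u B le_rfl hu2 le_rfl
    have tele' : m u - u ≤ m B - B := tele
    omega

/-! ### Geometric structure lemmas -/

def pt (u v : ℤ) : Fin 2 → ℤ := ![u, v]

@[simp] lemma pt0 (u v : ℤ) : pt u v 0 = u := rfl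
@[simp] lemma pt1 (u v : ℤ) : pt u v 1 = v := rfl

lemma pt_eta (z : Fin 2 → ℤ) : pt (z 0) (z 1) = z := by
  funext i; fin_cases i <;> simp [pt]

lemma realify_pt (u v : ℤ) (i : Fin 2) : realify (pt u v) i = if i = 0 then (u:ℝ) else (v:ℝ) := by
  fin_cases i <;> simp [realify, pt]

/-- linear bound over hull of realified integer set -/
lemma linBoundZ (r1 r2 c : ℝ) (A : Set (Fin 2 → ℤ))
    (h : ∀ z ∈ A, c ≤ r1 * (z 0 : ℝ) + r2 * (z 1 : ℝ)) {x : Fin 2 → ℝ}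
    (hx : x ∈ convexHull ℝ (realify '' A)) : c ≤ r1 * x 0 + r2 * x 1 := by
  apply linBound r1 r2 c (realify '' A) _ hx
  rintro y ⟨z, hz, rfl⟩
  exact h z hz

/-- Two integer points of S give hull membership for convex combinations. -/
lemma two_comb_mem {S : Set (Fin 2 → ℤ)} {z1 z2 : Fin 2 → ℤ} (h1 : z1 ∈ S) (h2 : z2 ∈ S)
    {θ : ℝ} (h0 : 0 ≤ θ) (h1' : θ ≤ 1) :
    θ • realify z1 + (1 - θ) • realify z2 ∈ convexHull ℝ (realify '' S) := by
  apply mem_hull_two (Set.mem_image_of_mem _ h1) (Set.mem_image_of_mem _ h2) h0 (by linarith)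
    (by ring) rfl

/-- The set `S ∩ intNbhd x` is nonempty when `x` is in the hull of `S` (IC `S`). -/
lemma nbhd_nonempty {S : Set (Fin 2 → ℤ)} (hS : IsIntegrallyConvexSet S) {x : Fin 2 → ℝ}
    (hx : x ∈ convexHull ℝ (realify '' S)) :
    x ∈ convexHull ℝ (realify '' (S ∩ intNbhd x)) ∧ (S ∩ intNbhd x).Nonempty := by
  have h2 := hS x hx
  refine ⟨h2, ?_⟩
  by_contra hemp
  rw [Set.not_nonempty_iff_eq_empty] at hemp
  rw [hemp] at h2
  simp at h2

/-- Column-interval property of IC sets. -/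
lemma col_interval {S : Set (Fin 2 → ℤ)} (hS : IsIntegrallyConvexSet S)
    {k c₁ c₂ c : ℤ} (h1 : pt k c₁ ∈ S) (h2 : pt k c₂ ∈ S) (hc1 : c₁ ≤ c) (hc2 : c ≤ c₂) :
    pt k c ∈ S := by
  rcases eq_or_lt_of_le hc1 with rfl | hlt1
  · exact h1
  rcases eq_or_lt_of_le hc2 with rfl | hlt2
  · exact h2
  set θ : ℝ := ((c₂ : ℝ) - c) / ((c₂ : ℝ) - c₁) with hθ
  have hden : (0:ℝ) < (c₂ : ℝ) - c₁ := by
    have : (c₁ : ℝ) < c₂ := by exact_mod_cast lt_trans hlt1 hlt2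
    linarith
  have hθ0 : 0 ≤ θ := by
    apply div_nonneg _ (le_of_lt hden)
    have : (c : ℝ) ≤ c₂ := by exact_mod_cast hc2
    linarith
  have hθ1 : θ ≤ 1 := by
    rw [div_le_one hden]
    have : (c₁ : ℝ) ≤ c := by exact_mod_cast hc1
    linarith
  have hmem := two_comb_mem h1 h2 hθ0 hθ1
  have hne' : (c₂:ℝ) - c₁ ≠ 0 := ne_of_gt hden
  have heq : θ • realify (pt k c₁) + (1 - θ) • realify (pt k c₂) = realify (pt k c) := by
    funext i
    fin_cases i
    · show θ * ((pt k c₁ 0 : ℤ) : ℝ) + (1 - θ) * ((pt k c₂ 0 : ℤ) : ℝ) = ((pt k c 0 : ℤ) : ℝ)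
      simp only [pt0]
      ring
    · show θ * ((pt k c₁ 1 : ℤ) : ℝ) + (1 - θ) * ((pt k c₂ 1 : ℤ) : ℝ) = ((pt k c 1 : ℤ) : ℝ)
      simp only [pt1]
      rw [hθ]
      field_simp
      ring
  rw [heq] at hmem
  exact int_point_mem hS _ hmem

/-- Support-interval property: nonempty columns form an interval. -/
lemma support_interval {S : Set (Fin 2 → ℤ)} (hS : IsIntegrallyConvexSet S)
    {k₁ k₂ k c₁ c₂ : ℤ} (h1 : pt k₁ c₁ ∈ S) (h2 : pt k₂ c₂ ∈ S)
    (hk1 : k₁ ≤ k) (hk2 : k ≤ k₂) : ∃ c, pt k c ∈ S := by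
  rcases eq_or_lt_of_le hk1 with rfl | hlt1
  · exact ⟨c₁, h1⟩
  rcases eq_or_lt_of_le hk2 with rfl | hlt2
  · exact ⟨c₂, h2⟩
  set θ : ℝ := ((k₂ : ℝ) - k) / ((k₂ : ℝ) - k₁) with hθ
  have hden : (0:ℝ) < (k₂ : ℝ) - k₁ := by
    have : (k₁ : ℝ) < k₂ := by exact_mod_cast lt_trans hlt1 hlt2
    linarith
  have hθ0 : 0 ≤ θ := by
    apply div_nonneg _ (le_of_lt hden)
    have : (k : ℝ) ≤ k₂ := by exact_mod_cast hk2
    linarith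
  have hθ1 : θ ≤ 1 := by
    rw [div_le_one hden]
    have : (k₁ : ℝ) ≤ k := by exact_mod_cast hk1
    linarith
  have hmem := two_comb_mem h1 h2 hθ0 hθ1
  set x := θ • realify (pt k₁ c₁) + (1 - θ) • realify (pt k₂ c₂) with hx
  have hne' : (k₂:ℝ) - k₁ ≠ 0 := ne_of_gt hden
  have hx0 : x 0 = (k : ℝ) := by
    show θ * ((pt k₁ c₁ 0 : ℤ) : ℝ) + (1 - θ) * ((pt k₂ c₂ 0 : ℤ) : ℝ) = (k : ℝ)
    simp only [pt0]
    rw [hθ]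
    field_simp
    ring
  obtain ⟨_, z, hzS, hzN⟩ := nbhd_nonempty hS hmem
  have hz0 : z 0 = k := by
    have := hzN 0
    rw [hx0] at this
    rw [abs_sub_lt_iff] at this
    have l1 : (k : ℝ) - z 0 < 1 := this.1
    have l2 : (z 0 : ℝ) - k < 1 := this.2
    have l1' : (k : ℤ) - z 0 < 1 := by exact_mod_cast l1
    have l2' : (z 0 : ℤ) - k < 1 := by exact_mod_cast l2
    omega
  refine ⟨z 1, ?_⟩
  rw [← hz0, pt_eta]
  exact hzS

/-- coordinates of the midpoint of two realified points -/
lemma mid_coord (z1 z2 : Fin 2 → ℤ) (i : Fin 2) :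
    ((1/2 : ℝ) • realify z1 + (1/2 : ℝ) • realify z2) i = ((z1 i : ℝ) + (z2 i : ℝ)) / 2 := by
  simp only [Pi.add_apply, Pi.smul_apply, smul_eq_mul, realify]
  ring

lemma nbhd_coord_bounds {x : Fin 2 → ℝ} {z : Fin 2 → ℤ} (h : z ∈ intNbhd x) (i : Fin 2) :
    x i - 1 < (z i : ℝ) ∧ (z i : ℝ) < x i + 1 := by
  have := h i
  rw [abs_sub_lt_iff] at this
  constructor <;> linarith [this.1, this.2]

/-- The least element of an adjacent column exceeds any column element by at most 1. -/
lemma least_adjacent {S : Set (Fin 2 → ℤ)} (hS : IsIntegrallyConvexSet S)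
    {k k' c₁ c₂ : ℤ} (h1 : pt k c₁ ∈ S) (h2 : pt k' c₂ ∈ S)
    (hadj : k' = k + 1 ∨ k' = k - 1) (hleast : ∀ c, pt k' c ∈ S → c₂ ≤ c) :
    c₂ ≤ c₁ + 1 := by
  by_contra hcon
  push_neg at hcon
  have hd : c₁ + 2 ≤ c₂ := by omega
  have hmem := two_comb_mem h1 h2 (θ := 1/2) (by norm_num) (by norm_num)
  rw [show (1 - (1/2:ℝ)) = 1/2 by norm_num] at hmem
  set x := (1/2 : ℝ) • realify (pt k c₁) + (1/2 : ℝ) • realify (pt k' c₂) with hxdef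
  have hx0 : x 0 = ((k:ℝ) + (k':ℝ))/2 := by rw [hxdef, mid_coord]; norm_num
  have hx1 : x 1 = ((c₁:ℝ) + (c₂:ℝ))/2 := by rw [hxdef, mid_coord]; norm_num
  obtain ⟨hmem2, -⟩ := nbhd_nonempty hS hmem
  -- basic integer facts about any z in S ∩ N(x)
  have hzfacts : ∀ z ∈ S ∩ intNbhd x, (z 0 = k ∨ z 0 = k') ∧ c₁ + 1 ≤ z 1 ∧ (z 0 = k' → c₂ ≤ z 1) := by
    rintro z ⟨hzS, hzN⟩
    have hb0 := nbhd_coord_bounds hzN 0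
    have hb1 := nbhd_coord_bounds hzN 1
    rw [hx0] at hb0
    rw [hx1] at hb1
    have i1 : (k:ℝ) + k' - 2 < 2 * z 0 := by linarith [hb0.1]
    have i2 : (2:ℝ) * z 0 < k + k' + 2 := by linarith [hb0.2]
    have i3 : (c₁:ℝ) + c₂ - 2 < 2 * z 1 := by linarith [hb1.1]
    have i1' : k + k' - 2 < 2 * z 0 := by exact_mod_cast i1
    have i2' : 2 * z 0 < k + k' + 2 := by exact_mod_cast i2
    have i3' : c₁ + c₂ - 2 < 2 * z 1 := by exact_mod_cast i3
    have hz0 : z 0 = k ∨ z 0 = k' := by omega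
    refine ⟨hz0, by omega, ?_⟩
    intro hzk'
    have : pt k' (z 1) = z := by rw [← hzk', pt_eta]
    apply hleast
    rw [this]
    exact hzS
  rcases hadj with rfl | rfl
  · -- k' = k + 1
    have hbd := linBoundZ (-(((c₂:ℝ) - c₁) - 1)) 1 ((c₁:ℝ) + 1 - (((c₂:ℝ) - c₁) - 1) * k)
      (S ∩ intNbhd x) ?_ hmem2
    · rw [hx0, hx1] at hbd
      have hcast : (c₁:ℝ) + 2 ≤ (c₂:ℝ) := by exact_mod_cast hd
      push_cast at hbd
      nlinarith [hbd, hcast]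
    · intro z hz
      obtain ⟨hz0, hz1, hz2⟩ := hzfacts z hz
      rcases hz0 with h | h
      · rw [h]
        have : (c₁:ℝ) + 1 ≤ (z 1 : ℝ) := by exact_mod_cast hz1
        nlinarith [this]
      · rw [h]
        have hc2 : (c₂:ℝ) ≤ (z 1:ℝ) := by exact_mod_cast hz2 h
        push_cast
        nlinarith [hc2]
  · -- k' = k - 1
    have hbd := linBoundZ ((((c₂:ℝ) - c₁) - 1)) 1 ((c₁:ℝ) + 1 + (((c₂:ℝ) - c₁) - 1) * k)
      (S ∩ intNbhd x) ?_ hmem2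
    · rw [hx0, hx1] at hbd
      have hcast : (c₁:ℝ) + 2 ≤ (c₂:ℝ) := by exact_mod_cast hd
      push_cast at hbd
      nlinarith [hbd, hcast]
    · intro z hz
      obtain ⟨hz0, hz1, hz2⟩ := hzfacts z hz
      rcases hz0 with h | h
      · rw [h]
        have : (c₁:ℝ) + 1 ≤ (z 1 : ℝ) := by exact_mod_cast hz1
        nlinarith [this]
      · rw [h]
        have hc2 : (c₂:ℝ) ≤ (z 1:ℝ) := by exact_mod_cast hz2 h
        push_cast
        nlinarith [hc2]

/-- The greatest element of an adjacent column is below any column element by at most 1. -/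
lemma greatest_adjacent {S : Set (Fin 2 → ℤ)} (hS : IsIntegrallyConvexSet S)
    {k k' c₁ c₂ : ℤ} (h1 : pt k c₁ ∈ S) (h2 : pt k' c₂ ∈ S)
    (hadj : k' = k + 1 ∨ k' = k - 1) (hgreat : ∀ c, pt k' c ∈ S → c ≤ c₂) :
    c₁ - 1 ≤ c₂ := by
  by_contra hcon
  push_neg at hcon
  have hd : c₂ + 2 ≤ c₁ := by omega
  have hmem := two_comb_mem h1 h2 (θ := 1/2) (by norm_num) (by norm_num)
  rw [show (1 - (1/2:ℝ)) = 1/2 by norm_num] at hmem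
  set x := (1/2 : ℝ) • realify (pt k c₁) + (1/2 : ℝ) • realify (pt k' c₂) with hxdef
  have hx0 : x 0 = ((k:ℝ) + (k':ℝ))/2 := by rw [hxdef, mid_coord]; norm_num
  have hx1 : x 1 = ((c₁:ℝ) + (c₂:ℝ))/2 := by rw [hxdef, mid_coord]; norm_num
  obtain ⟨hmem2, -⟩ := nbhd_nonempty hS hmem
  have hzfacts : ∀ z ∈ S ∩ intNbhd x, (z 0 = k ∨ z 0 = k') ∧ z 1 ≤ c₁ - 1 ∧ (z 0 = k' → z 1 ≤ c₂) := by
    rintro z ⟨hzS, hzN⟩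
    have hb0 := nbhd_coord_bounds hzN 0
    have hb1 := nbhd_coord_bounds hzN 1
    rw [hx0] at hb0
    rw [hx1] at hb1
    have i1 : (k:ℝ) + k' - 2 < 2 * z 0 := by linarith [hb0.1]
    have i2 : (2:ℝ) * z 0 < k + k' + 2 := by linarith [hb0.2]
    have i3 : (2:ℝ) * z 1 < c₁ + c₂ + 2 := by linarith [hb1.2]
    have i1' : k + k' - 2 < 2 * z 0 := by exact_mod_cast i1
    have i2' : 2 * z 0 < k + k' + 2 := by exact_mod_cast i2
    have i3' : 2 * z 1 < c₁ + c₂ + 2 := by exact_mod_cast i3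
    have hz0 : z 0 = k ∨ z 0 = k' := by omega
    refine ⟨hz0, by omega, ?_⟩
    intro hzk'
    have : pt k' (z 1) = z := by rw [← hzk', pt_eta]
    apply hgreat
    rw [this]
    exact hzS
  rcases hadj with rfl | rfl
  · have hbd := linBoundZ (-(((c₁:ℝ) - c₂) - 1)) (-1) (-((c₁:ℝ) - 1) - (((c₁:ℝ) - c₂) - 1) * k)
      (S ∩ intNbhd x) ?_ hmem2
    · rw [hx0, hx1] at hbd
      have hcast : (c₂:ℝ) + 2 ≤ (c₁:ℝ) := by exact_mod_cast hd
      push_cast at hbd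
      nlinarith [hbd, hcast]
    · intro z hz
      obtain ⟨hz0, hz1, hz2⟩ := hzfacts z hz
      rcases hz0 with h | h
      · rw [h]
        have : (z 1 : ℝ) ≤ (c₁:ℝ) - 1 := by exact_mod_cast hz1
        nlinarith [this]
      · rw [h]
        have hc2 : (z 1:ℝ) ≤ (c₂:ℝ) := by exact_mod_cast hz2 h
        push_cast
        nlinarith [hc2]
  · have hbd := linBoundZ ((((c₁:ℝ) - c₂) - 1)) (-1) (-((c₁:ℝ) - 1) + (((c₁:ℝ) - c₂) - 1) * k)
      (S ∩ intNbhd x) ?_ hmem2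
    · rw [hx0, hx1] at hbd
      have hcast : (c₂:ℝ) + 2 ≤ (c₁:ℝ) := by exact_mod_cast hd
      push_cast at hbd
      nlinarith [hbd, hcast]
    · intro z hz
      obtain ⟨hz0, hz1, hz2⟩ := hzfacts z hz
      rcases hz0 with h | h
      · rw [h]
        have : (z 1 : ℝ) ≤ (c₁:ℝ) - 1 := by exact_mod_cast hz1
        nlinarith [this]
      · rw [h]
        have hc2 : (z 1:ℝ) ≤ (c₂:ℝ) := by exact_mod_cast hz2 h
        push_cast
        nlinarith [hc2]

/-- Midpoint over an integer column: lower bound version (convexity of column minima). -/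
lemma mid_lower {S : Set (Fin 2 → ℤ)} (hS : IsIntegrallyConvexSet S)
    {k₁ k₂ k c₁ c₂ b : ℤ} (h1 : pt k₁ c₁ ∈ S) (h2 : pt k₂ c₂ ∈ S)
    (hk : k₁ + k₂ = 2 * k) (hlow : ∀ c, pt k c ∈ S → b ≤ c) : 2 * b ≤ c₁ + c₂ := by
  have hmem := two_comb_mem h1 h2 (θ := 1/2) (by norm_num) (by norm_num)
  rw [show (1 - (1/2:ℝ)) = 1/2 by norm_num] at hmem
  set x := (1/2 : ℝ) • realify (pt k₁ c₁) + (1/2 : ℝ) • realify (pt k₂ c₂) with hxdef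
  have hx0 : x 0 = ((k₁:ℝ) + (k₂:ℝ))/2 := by rw [hxdef, mid_coord]; norm_num
  have hx1 : x 1 = ((c₁:ℝ) + (c₂:ℝ))/2 := by rw [hxdef, mid_coord]; norm_num
  obtain ⟨hmem2, -⟩ := nbhd_nonempty hS hmem
  have hbd := linBoundZ 0 1 (b:ℝ) (S ∩ intNbhd x) ?_ hmem2
  · rw [hx1] at hbd
    have : 2 * (b:ℝ) ≤ (c₁:ℝ) + c₂ := by linarith
    exact_mod_cast this
  · rintro z ⟨hzS, hzN⟩
    have hb0 := nbhd_coord_bounds hzN 0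
    rw [hx0] at hb0
    have i1 : (k₁:ℝ) + k₂ - 2 < 2 * z 0 := by linarith [hb0.1]
    have i2 : (2:ℝ) * z 0 < k₁ + k₂ + 2 := by linarith [hb0.2]
    have i1' : k₁ + k₂ - 2 < 2 * z 0 := by exact_mod_cast i1
    have i2' : 2 * z 0 < k₁ + k₂ + 2 := by exact_mod_cast i2
    have hz0 : z 0 = k := by omega
    have hcol : pt k (z 1) = z := by rw [← hz0, pt_eta]
    have hb := hlow (z 1) (by rw [hcol]; exact hzS)
    have : (b:ℝ) ≤ (z 1 : ℝ) := by exact_mod_cast hb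
    linarith

/-- Midpoint over an integer column: upper bound version (concavity of column maxima). -/
lemma mid_upper {S : Set (Fin 2 → ℤ)} (hS : IsIntegrallyConvexSet S)
    {k₁ k₂ k c₁ c₂ b : ℤ} (h1 : pt k₁ c₁ ∈ S) (h2 : pt k₂ c₂ ∈ S)
    (hk : k₁ + k₂ = 2 * k) (hup : ∀ c, pt k c ∈ S → c ≤ b) : c₁ + c₂ ≤ 2 * b := by
  have hmem := two_comb_mem h1 h2 (θ := 1/2) (by norm_num) (by norm_num)
  rw [show (1 - (1/2:ℝ)) = 1/2 by norm_num] at hmem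
  set x := (1/2 : ℝ) • realify (pt k₁ c₁) + (1/2 : ℝ) • realify (pt k₂ c₂) with hxdef
  have hx0 : x 0 = ((k₁:ℝ) + (k₂:ℝ))/2 := by rw [hxdef, mid_coord]; norm_num
  have hx1 : x 1 = ((c₁:ℝ) + (c₂:ℝ))/2 := by rw [hxdef, mid_coord]; norm_num
  obtain ⟨hmem2, -⟩ := nbhd_nonempty hS hmem
  have hbd := linBoundZ 0 (-1) (-(b:ℝ)) (S ∩ intNbhd x) ?_ hmem2
  · rw [hx1] at hbd
    have : (c₁:ℝ) + c₂ ≤ 2 * (b:ℝ) := by linarith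
    exact_mod_cast this
  · rintro z ⟨hzS, hzN⟩
    have hb0 := nbhd_coord_bounds hzN 0
    rw [hx0] at hb0
    have i1 : (k₁:ℝ) + k₂ - 2 < 2 * z 0 := by linarith [hb0.1]
    have i2 : (2:ℝ) * z 0 < k₁ + k₂ + 2 := by linarith [hb0.2]
    have i1' : k₁ + k₂ - 2 < 2 * z 0 := by exact_mod_cast i1
    have i2' : 2 * z 0 < k₁ + k₂ + 2 := by exact_mod_cast i2
    have hz0 : z 0 = k := by omega
    have hcol : pt k (z 1) = z := by rw [← hz0, pt_eta]
    have hb := hup (z 1) (by rw [hcol]; exact hzS)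
    have : (z 1 : ℝ) ≤ (b:ℝ) := by exact_mod_cast hb
    linarith

/-- Octagon representation of bounded nonempty integrally convex sets in ℤ². -/
theorem octagon_rep (S : Set (Fin 2 → ℤ)) (hS : IsIntegrallyConvexSet S) (N : ℤ)
    (hbd : ∀ z ∈ S, |z 0| ≤ N ∧ |z 1| ≤ N) (hne : S.Nonempty) :
    ∃ a₁ b₁ a₂ b₂ a₃ b₃ a₄ b₄ : ℤ,
      (∀ z ∈ S, a₁ ≤ z 0 ∧ z 0 ≤ b₁ ∧ a₂ ≤ z 1 ∧ z 1 ≤ b₂ ∧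
        a₃ ≤ z 1 - z 0 ∧ z 1 - z 0 ≤ b₃ ∧ a₄ ≤ z 0 + z 1 ∧ z 0 + z 1 ≤ b₄) ∧
      (∀ z : Fin 2 → ℤ, a₁ ≤ z 0 → z 0 ≤ b₁ → a₂ ≤ z 1 → z 1 ≤ b₂ →
        a₃ ≤ z 1 - z 0 → z 1 - z 0 ≤ b₃ → a₄ ≤ z 0 + z 1 → z 0 + z 1 ≤ b₄ → z ∈ S) := by
  obtain ⟨w₀, hw₀⟩ := hne
  -- extremal parameters
  obtain ⟨a₁, ⟨za₁, hza₁S, hza₁⟩, la₁⟩ := Int.exists_least_of_bdd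
    (P := fun n => ∃ z ∈ S, z 0 = n)
    ⟨-N, by rintro n ⟨z, hz, rfl⟩; have := abs_le.mp (hbd z hz).1; omega⟩ ⟨w₀ 0, w₀, hw₀, rfl⟩
  obtain ⟨b₁, ⟨zb₁, hzb₁S, hzb₁⟩, lb₁⟩ := Int.exists_greatest_of_bdd
    (P := fun n => ∃ z ∈ S, z 0 = n)
    ⟨N, by rintro n ⟨z, hz, rfl⟩; have := abs_le.mp (hbd z hz).1; omega⟩ ⟨w₀ 0, w₀, hw₀, rfl⟩
  obtain ⟨a₂, ⟨za₂, hza₂S, hza₂⟩, la₂⟩ := Int.exists_least_of_bdd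
    (P := fun n => ∃ z ∈ S, z 1 = n)
    ⟨-N, by rintro n ⟨z, hz, rfl⟩; have := abs_le.mp (hbd z hz).2; omega⟩ ⟨w₀ 1, w₀, hw₀, rfl⟩
  obtain ⟨b₂, ⟨zb₂, hzb₂S, hzb₂⟩, lb₂⟩ := Int.exists_greatest_of_bdd
    (P := fun n => ∃ z ∈ S, z 1 = n)
    ⟨N, by rintro n ⟨z, hz, rfl⟩; have := abs_le.mp (hbd z hz).2; omega⟩ ⟨w₀ 1, w₀, hw₀, rfl⟩
  obtain ⟨a₃, ⟨za₃, hza₃S, hza₃⟩, la₃⟩ := Int.exists_least_of_bdd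
    (P := fun n => ∃ z ∈ S, z 1 - z 0 = n)
    ⟨-2*N, by rintro n ⟨z, hz, rfl⟩; have h1 := abs_le.mp (hbd z hz).1; have h2 := abs_le.mp (hbd z hz).2; omega⟩
    ⟨w₀ 1 - w₀ 0, w₀, hw₀, rfl⟩
  obtain ⟨b₃, ⟨zb₃, hzb₃S, hzb₃⟩, lb₃⟩ := Int.exists_greatest_of_bdd
    (P := fun n => ∃ z ∈ S, z 1 - z 0 = n)
    ⟨2*N, by rintro n ⟨z, hz, rfl⟩; have h1 := abs_le.mp (hbd z hz).1; have h2 := abs_le.mp (hbd z hz).2; omega⟩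
    ⟨w₀ 1 - w₀ 0, w₀, hw₀, rfl⟩
  obtain ⟨a₄, ⟨za₄, hza₄S, hza₄⟩, la₄⟩ := Int.exists_least_of_bdd
    (P := fun n => ∃ z ∈ S, z 0 + z 1 = n)
    ⟨-2*N, by rintro n ⟨z, hz, rfl⟩; have h1 := abs_le.mp (hbd z hz).1; have h2 := abs_le.mp (hbd z hz).2; omega⟩
    ⟨w₀ 0 + w₀ 1, w₀, hw₀, rfl⟩
  obtain ⟨b₄, ⟨zb₄, hzb₄S, hzb₄⟩, lb₄⟩ := Int.exists_greatest_of_bdd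
    (P := fun n => ∃ z ∈ S, z 0 + z 1 = n)
    ⟨2*N, by rintro n ⟨z, hz, rfl⟩; have h1 := abs_le.mp (hbd z hz).1; have h2 := abs_le.mp (hbd z hz).2; omega⟩
    ⟨w₀ 0 + w₀ 1, w₀, hw₀, rfl⟩
  have ha₁ : ∀ z ∈ S, a₁ ≤ z 0 := fun z hz => la₁ _ ⟨z, hz, rfl⟩
  have hb₁ : ∀ z ∈ S, z 0 ≤ b₁ := fun z hz => lb₁ _ ⟨z, hz, rfl⟩
  have ha₂ : ∀ z ∈ S, a₂ ≤ z 1 := fun z hz => la₂ _ ⟨z, hz, rfl⟩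
  have hb₂ : ∀ z ∈ S, z 1 ≤ b₂ := fun z hz => lb₂ _ ⟨z, hz, rfl⟩
  have ha₃ : ∀ z ∈ S, a₃ ≤ z 1 - z 0 := fun z hz => la₃ _ ⟨z, hz, rfl⟩
  have hb₃ : ∀ z ∈ S, z 1 - z 0 ≤ b₃ := fun z hz => lb₃ _ ⟨z, hz, rfl⟩
  have ha₄ : ∀ z ∈ S, a₄ ≤ z 0 + z 1 := fun z hz => la₄ _ ⟨z, hz, rfl⟩
  have hb₄ : ∀ z ∈ S, z 0 + z 1 ≤ b₄ := fun z hz => lb₄ _ ⟨z, hz, rfl⟩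
  refine ⟨a₁, b₁, a₂, b₂, a₃, b₃, a₄, b₄, fun z hz =>
    ⟨ha₁ z hz, hb₁ z hz, ha₂ z hz, hb₂ z hz, ha₃ z hz, hb₃ z hz, ha₄ z hz, hb₄ z hz⟩, ?_⟩
  -- completeness
  intro z h₁ h₂ h₃ h₄ h₅ h₆ h₇ h₈
  -- the column functions
  set m : ℤ → ℤ := fun k => sInf {c | pt k c ∈ S} with hm
  set M : ℤ → ℤ := fun k => sSup {c | pt k c ∈ S} with hM
  have hbddB : ∀ k, BddBelow {c | pt k c ∈ S} := by
    intro k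
    refine ⟨-N, fun c hc => ?_⟩
    have := abs_le.mp (hbd _ hc).2
    simpa using this.1
  have hbddA : ∀ k, BddAbove {c | pt k c ∈ S} := by
    intro k
    refine ⟨N, fun c hc => ?_⟩
    have := abs_le.mp (hbd _ hc).2
    simpa using this.2
  have hcolNE : ∀ k, a₁ ≤ k → k ≤ b₁ → ({c | pt k c ∈ S} : Set ℤ).Nonempty := by
    intro k hk1 hk2
    have hA : pt a₁ (za₁ 1) ∈ S := by rw [← hza₁, pt_eta]; exact hza₁S
    have hB : pt b₁ (zb₁ 1) ∈ S := by rw [← hzb₁, pt_eta]; exact hzb₁S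
    obtain ⟨c, hc⟩ := support_interval hS hA hB hk1 hk2
    exact ⟨c, hc⟩
  have hm_mem : ∀ k, a₁ ≤ k → k ≤ b₁ → pt k (m k) ∈ S := by
    intro k hk1 hk2
    exact Int.csInf_mem (hcolNE k hk1 hk2) (hbddB k)
  have hM_mem : ∀ k, a₁ ≤ k → k ≤ b₁ → pt k (M k) ∈ S := by
    intro k hk1 hk2
    exact Int.csSup_mem (hcolNE k hk1 hk2) (hbddA k)
  have hm_least : ∀ k c, pt k c ∈ S → m k ≤ c := fun k c hc => csInf_le (hbddB k) hc
  have hM_great : ∀ k c, pt k c ∈ S → c ≤ M k := fun k c hc => le_csSup (hbddA k) hc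
  -- slopes
  have hm_up : ∀ k, a₁ ≤ k → k + 1 ≤ b₁ → m (k + 1) ≤ m k + 1 := by
    intro k hk1 hk2
    exact least_adjacent hS (hm_mem k hk1 (by omega)) (hm_mem (k+1) (by omega) hk2)
      (Or.inl rfl) (hm_least (k+1))
  have hm_dn : ∀ k, a₁ ≤ k → k + 1 ≤ b₁ → m k ≤ m (k + 1) + 1 := by
    intro k hk1 hk2
    exact least_adjacent hS (hm_mem (k+1) (by omega) hk2) (hm_mem k hk1 (by omega))
      (Or.inr (by ring)) (hm_least k)
  have hM_up : ∀ k, a₁ ≤ k → k + 1 ≤ b₁ → M k - 1 ≤ M (k + 1) := by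
    intro k hk1 hk2
    exact greatest_adjacent hS (hM_mem k hk1 (by omega)) (hM_mem (k+1) (by omega) hk2)
      (Or.inl rfl) (hM_great (k+1))
  have hM_dn : ∀ k, a₁ ≤ k → k + 1 ≤ b₁ → M (k + 1) - 1 ≤ M k := by
    intro k hk1 hk2
    exact greatest_adjacent hS (hM_mem (k+1) (by omega) hk2) (hM_mem k hk1 (by omega))
      (Or.inr (by ring)) (hM_great k)
  -- convexity/concavity
  have hm_conv : ∀ k, a₁ < k → k < b₁ → 2 * m k ≤ m (k - 1) + m (k + 1) := by
    intro k hk1 hk2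
    exact mid_lower hS (hm_mem (k-1) (by omega) (by omega)) (hm_mem (k+1) (by omega) (by omega))
      (by ring) (hm_least k)
  have hM_conc : ∀ k, a₁ < k → k < b₁ → M (k - 1) + M (k + 1) ≤ 2 * M k := by
    intro k hk1 hk2
    exact mid_upper hS (hM_mem (k-1) (by omega) (by omega)) (hM_mem (k+1) (by omega) (by omega))
      (by ring) (hM_great k)
  -- global min of m is attained where a₂ is attained
  have hza₂' : pt (za₂ 0) a₂ ∈ S := by rw [← hza₂, pt_eta]; exact hza₂S
  have ht₂range : a₁ ≤ za₂ 0 ∧ za₂ 0 ≤ b₁ := ⟨ha₁ _ hza₂S, hb₁ _ hza₂S⟩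
  have hmt₂ : m (za₂ 0) ≤ a₂ := hm_least _ _ hza₂'
  have hminm : ∀ k, a₁ ≤ k → k ≤ b₁ → m (za₂ 0) ≤ m k := by
    intro k hk1 hk2
    have := ha₂ _ (hm_mem k hk1 hk2)
    simpa using le_trans hmt₂ (by simpa using this)
  -- analogous for M and b₂
  have hzb₂' : pt (zb₂ 0) b₂ ∈ S := by rw [← hzb₂, pt_eta]; exact hzb₂S
  have ht₂'range : a₁ ≤ zb₂ 0 ∧ zb₂ 0 ≤ b₁ := ⟨ha₁ _ hzb₂S, hb₁ _ hzb₂S⟩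
  have hMt₂ : b₂ ≤ M (zb₂ 0) := hM_great _ _ hzb₂'
  have hmaxM : ∀ k, a₁ ≤ k → k ≤ b₁ → M k ≤ M (zb₂ 0) := by
    intro k hk1 hk2
    have := hb₂ _ (hM_mem k hk1 hk2)
    simpa using le_trans (by simpa using this) hMt₂
  -- range facts for z
  have hz0r : a₁ ≤ z 0 ∧ z 0 ≤ b₁ := ⟨h₁, h₂⟩
  -- endpoint identities
  have hend₃ : m b₁ - b₁ ≤ a₃ := by
    have hza₃' : pt (za₃ 0) (za₃ 1) ∈ S := by rw [pt_eta]; exact hza₃S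
    have h0 : m (za₃ 0) - za₃ 0 ≤ a₃ := by
      have := hm_least (za₃ 0) (za₃ 1) hza₃'
      omega
    have hmono := int_mono (fun k => -(m k - k)) a₁ b₁
      (by
        intro k hk1 hk2
        show -(m k - k) ≤ -(m (k+1) - (k+1))
        have := hm_up k hk1 (by omega)
        omega) (za₃ 0) b₁ (ha₁ _ hza₃S) (hb₁ _ hza₃S) le_rfl
    have : -(m (za₃ 0) - za₃ 0) ≤ -(m b₁ - b₁) := hmono
    omega
  have hend₄ : m a₁ + a₁ ≤ a₄ := by
    have hza₄' : pt (za₄ 0) (za₄ 1) ∈ S := by rw [pt_eta]; exact hza₄S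
    have h0 : m (za₄ 0) + za₄ 0 ≤ a₄ := by
      have := hm_least (za₄ 0) (za₄ 1) hza₄'
      omega
    have hmono := int_mono (fun k => m k + k) a₁ b₁
      (by
        intro k hk1 hk2
        show m k + k ≤ m (k+1) + (k+1)
        have := hm_dn k hk1 (by omega)
        omega) a₁ (za₄ 0) le_rfl (ha₁ _ hza₄S) (hb₁ _ hza₄S)
    have : m a₁ + a₁ ≤ m (za₄ 0) + za₄ 0 := hmono
    omega
  have hendM₃ : b₃ ≤ M a₁ - a₁ := by
    have hzb₃' : pt (zb₃ 0) (zb₃ 1) ∈ S := by rw [pt_eta]; exact hzb₃S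
    have h0 : b₃ ≤ M (zb₃ 0) - zb₃ 0 := by
      have := hM_great (zb₃ 0) (zb₃ 1) hzb₃'
      omega
    have hmono := int_mono (fun k => -(M k - k)) a₁ b₁
      (by
        intro k hk1 hk2
        show -(M k - k) ≤ -(M (k+1) - (k+1))
        have := hM_dn k hk1 (by omega)
        omega) a₁ (zb₃ 0) le_rfl (ha₁ _ hzb₃S) (hb₁ _ hzb₃S)
    have : -(M a₁ - a₁) ≤ -(M (zb₃ 0) - zb₃ 0) := hmono
    omega
  have hendM₄ : b₄ ≤ M b₁ + b₁ := by
    have hzb₄' : pt (zb₄ 0) (zb₄ 1) ∈ S := by rw [pt_eta]; exact hzb₄S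
    have h0 : b₄ ≤ M (zb₄ 0) + zb₄ 0 := by
      have := hM_great (zb₄ 0) (zb₄ 1) hzb₄'
      omega
    have hmono := int_mono (fun k => M k + k) a₁ b₁
      (by
        intro k hk1 hk2
        show M k + k ≤ M (k+1) + (k+1)
        have := hM_up k hk1 (by omega)
        omega) (zb₄ 0) b₁ (ha₁ _ hzb₄S) (hb₁ _ hzb₄S) le_rfl
    have : M (zb₄ 0) + zb₄ 0 ≤ M b₁ + b₁ := hmono
    omega
  -- lower bound for z 1 via seq_bound on m
  have hmlow : m (z 0) ≤ z 1 := by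
    have hsb := seq_bound m a₁ b₁ (za₂ 0) ht₂range.1 ht₂range.2 hm_conv hminm (z 0) h₁ h₂
    rcases hsb with h | h | h
    · omega
    · omega
    · omega
  have hMhigh : z 1 ≤ M (z 0) := by
    have hsb := seq_bound (fun k => -(M k)) a₁ b₁ (zb₂ 0) ht₂'range.1 ht₂'range.2
      (by
        intro k hk1 hk2
        show 2 * (-(M k)) ≤ -(M (k-1)) + -(M (k+1))
        have := hM_conc k hk1 hk2
        omega)
      (by
        intro k hk1 hk2
        show -(M (zb₂ 0)) ≤ -(M k)
        have := hmaxM k hk1 hk2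
        omega) (z 0) h₁ h₂
    rcases hsb with h | h | h
    · have h' : -(M (z 0)) ≤ -(M (zb₂ 0)) := h
      omega
    · have h' : -(M (z 0)) ≤ -(M b₁) - b₁ + z 0 := h
      omega
    · have h' : -(M (z 0)) ≤ -(M a₁) + a₁ - z 0 := h
      omega
  have := col_interval hS (hm_mem (z 0) h₁ h₂) (hM_mem (z 0) h₁ h₂) hmlow hMhigh
  rwa [pt_eta] at this

/-! ### Final local argument inside a unit cell -/

lemma combo3_eq (x : Fin 2 → ℝ) (w1 w2 w3 : ℝ) (u1 v1 u2 v2 u3 v3 : ℤ)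
    (h0 : x 0 = w1 * u1 + w2 * u2 + w3 * u3) (h1 : x 1 = w1 * v1 + w2 * v2 + w3 * v3) :
    x = w1 • realify (pt u1 v1) + w2 • realify (pt u2 v2) + w3 • realify (pt u3 v3) := by
  funext i; fin_cases i
  · exact h0
  · exact h1

lemma combo2_eq (x : Fin 2 → ℝ) (w1 w2 : ℝ) (u1 v1 u2 v2 : ℤ)
    (h0 : x 0 = w1 * u1 + w2 * u2) (h1 : x 1 = w1 * v1 + w2 * v2) :
    x = w1 • realify (pt u1 v1) + w2 • realify (pt u2 v2) := by
  funext i; fin_cases i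
  · exact h0
  · exact h1

lemma nbhd_mk (x : Fin 2 → ℝ) (u v : ℤ) (h0 : |x 0 - (u:ℝ)| < 1) (h1 : |x 1 - (v:ℝ)| < 1) :
    pt u v ∈ intNbhd x := by
  intro i; fin_cases i
  · exact h0
  · exact h1

/-- The key local lemma: a tight "octagon lattice" set is integrally convex at any point. -/
theorem omega_star (T : Set (Fin 2 → ℤ)) (A1 B1 A2 B2 A3 B3 A4 B4 : ℤ)
    (hb : ∀ z ∈ T, A1 ≤ z 0 ∧ z 0 ≤ B1 ∧ A2 ≤ z 1 ∧ z 1 ≤ B2 ∧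
      A3 ≤ z 1 - z 0 ∧ z 1 - z 0 ≤ B3 ∧ A4 ≤ z 0 + z 1 ∧ z 0 + z 1 ≤ B4)
    (w1 : ∃ z ∈ T, z 0 = A1) (w2 : ∃ z ∈ T, z 0 = B1)
    (w3 : ∃ z ∈ T, z 1 = A2) (w4 : ∃ z ∈ T, z 1 = B2)
    (hcomp : ∀ z : Fin 2 → ℤ, A1 ≤ z 0 → z 0 ≤ B1 → A2 ≤ z 1 → z 1 ≤ B2 →
      A3 ≤ z 1 - z 0 → z 1 - z 0 ≤ B3 → A4 ≤ z 0 + z 1 → z 0 + z 1 ≤ B4 → z ∈ T)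
    (x : Fin 2 → ℝ) (hx : x ∈ convexHull ℝ (realify '' T)) :
    x ∈ convexHull ℝ (realify '' (T ∩ intNbhd x)) := by
  set a1 : ℤ := ⌊x 0⌋ with ha1
  set a2 : ℤ := ⌊x 1⌋ with ha2
  have hfa1 : (a1:ℝ) ≤ x 0 := Int.floor_le (x 0)
  have hfa1' : x 0 < (a1:ℝ) + 1 := by exact_mod_cast Int.lt_floor_add_one (x 0)
  have hfa2 : (a2:ℝ) ≤ x 1 := Int.floor_le (x 1)
  have hfa2' : x 1 < (a2:ℝ) + 1 := by exact_mod_cast Int.lt_floor_add_one (x 1)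
  -- real bounds on x from the hull
  have hA1x : (A1:ℝ) ≤ x 0 := by
    have := linBoundZ 1 0 (A1:ℝ) T (by
      intro z hz
      have h := (hb z hz).1
      have : (A1:ℝ) ≤ (z 0 : ℝ) := by exact_mod_cast h
      linarith) hx
    linarith
  have hB1x : x 0 ≤ (B1:ℝ) := by
    have := linBoundZ (-1) 0 (-(B1:ℝ)) T (by
      intro z hz
      have h := (hb z hz).2.1
      have : (z 0 : ℝ) ≤ (B1:ℝ) := by exact_mod_cast h
      linarith) hx
    linarith
  have hA2x : (A2:ℝ) ≤ x 1 := by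
    have := linBoundZ 0 1 (A2:ℝ) T (by
      intro z hz
      have h := (hb z hz).2.2.1
      have : (A2:ℝ) ≤ (z 1 : ℝ) := by exact_mod_cast h
      linarith) hx
    linarith
  have hB2x : x 1 ≤ (B2:ℝ) := by
    have := linBoundZ 0 (-1) (-(B2:ℝ)) T (by
      intro z hz
      have h := (hb z hz).2.2.2.1
      have : (z 1 : ℝ) ≤ (B2:ℝ) := by exact_mod_cast h
      linarith) hx
    linarith
  have hA3x : (A3:ℝ) ≤ x 1 - x 0 := by
    have := linBoundZ (-1) 1 (A3:ℝ) T (by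
      intro z hz
      have h := (hb z hz).2.2.2.2.1
      have : (A3:ℝ) ≤ (z 1 : ℝ) - (z 0 : ℝ) := by exact_mod_cast h
      linarith) hx
    linarith
  have hB3x : x 1 - x 0 ≤ (B3:ℝ) := by
    have := linBoundZ 1 (-1) (-(B3:ℝ)) T (by
      intro z hz
      have h := (hb z hz).2.2.2.2.2.1
      have : (z 1 : ℝ) - (z 0 : ℝ) ≤ (B3:ℝ) := by exact_mod_cast h
      linarith) hx
    linarith
  have hA4x : (A4:ℝ) ≤ x 0 + x 1 := by
    have := linBoundZ 1 1 (A4:ℝ) T (by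
      intro z hz
      have h := (hb z hz).2.2.2.2.2.2.1
      have : (A4:ℝ) ≤ (z 0 : ℝ) + (z 1 : ℝ) := by exact_mod_cast h
      linarith) hx
    linarith
  have hB4x : x 0 + x 1 ≤ (B4:ℝ) := by
    have := linBoundZ (-1) (-1) (-(B4:ℝ)) T (by
      intro z hz
      have h := (hb z hz).2.2.2.2.2.2.2
      have : (z 0 : ℝ) + (z 1 : ℝ) ≤ (B4:ℝ) := by exact_mod_cast h
      linarith) hx
    linarith
  -- integer consequences
  have iA1 : A1 ≤ a1 := by
    have : (A1:ℝ) < a1 + 1 := by linarith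
    have : A1 < a1 + 1 := by exact_mod_cast this
    omega
  have iB1 : a1 ≤ B1 := by
    have : (a1:ℝ) ≤ B1 := by linarith
    exact_mod_cast this
  have iB1' : (a1:ℝ) < x 0 → a1 + 1 ≤ B1 := by
    intro h
    have : (a1:ℝ) < B1 := by linarith
    have : a1 < B1 := by exact_mod_cast this
    omega
  have iA2 : A2 ≤ a2 := by
    have : (A2:ℝ) < a2 + 1 := by linarith
    have : A2 < a2 + 1 := by exact_mod_cast this
    omega
  have iB2 : a2 ≤ B2 := by
    have : (a2:ℝ) ≤ B2 := by linarith
    exact_mod_cast this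
  have iB2' : (a2:ℝ) < x 1 → a2 + 1 ≤ B2 := by
    intro h
    have : (a2:ℝ) < B2 := by linarith
    have : a2 < B2 := by exact_mod_cast this
    omega
  have iA3 : A3 ≤ a2 - a1 := by
    have : (A3:ℝ) < (a2:ℝ) - a1 + 1 := by linarith
    have : A3 < a2 - a1 + 1 := by exact_mod_cast this
    omega
  have iA3' : x 1 - (a2:ℝ) < x 0 - a1 → A3 ≤ a2 - a1 - 1 := by
    intro h
    have : (A3:ℝ) < (a2:ℝ) - a1 := by linarith
    have : A3 < a2 - a1 := by exact_mod_cast this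
    omega
  have iB3 : a2 - a1 ≤ B3 := by
    have : (a2:ℝ) - a1 - 1 < B3 := by linarith
    have : a2 - a1 - 1 < B3 := by exact_mod_cast this
    omega
  have iB3' : x 0 - (a1:ℝ) < x 1 - a2 → a2 - a1 + 1 ≤ B3 := by
    intro h
    have : (a2:ℝ) - a1 < B3 := by linarith
    have : a2 - a1 < B3 := by exact_mod_cast this
    omega
  have iA4 : A4 ≤ a1 + a2 + 1 := by
    have : (A4:ℝ) < (a1:ℝ) + a2 + 2 := by linarith
    have : A4 < a1 + a2 + 2 := by exact_mod_cast this
    omega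
  have iA4' : x 0 + x 1 < (a1:ℝ) + a2 + 1 → A4 ≤ a1 + a2 := by
    intro h
    have : (A4:ℝ) < (a1:ℝ) + a2 + 1 := by linarith
    have : A4 < a1 + a2 + 1 := by exact_mod_cast this
    omega
  have iB4 : a1 + a2 ≤ B4 := by
    have : (a1:ℝ) + a2 - 1 < B4 := by linarith
    have : a1 + a2 - 1 < B4 := by exact_mod_cast this
    omega
  have iB4' : (a1:ℝ) + a2 < x 0 + x 1 → a1 + a2 + 1 ≤ B4 := by
    intro h
    have : (a1:ℝ) + a2 < B4 := by linarith
    have : a1 + a2 < B4 := by exact_mod_cast this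
    omega
  have iB4'' : (a1:ℝ) + a2 + 1 < x 0 + x 1 → a1 + a2 + 2 ≤ B4 := by
    intro h
    have : (a1:ℝ) + a2 + 1 < B4 := by linarith
    have : a1 + a2 + 1 < B4 := by exact_mod_cast this
    omega
  -- relations from attained bounds
  have r1 : A3 + A4 ≤ 2 * A2 := by
    obtain ⟨zw, hzwT, hzw⟩ := w3
    have h := hb zw hzwT
    omega
  have r2 : A4 - B3 ≤ 2 * A1 := by
    obtain ⟨zw, hzwT, hzw⟩ := w1
    have h := hb zw hzwT
    omega
  have r3 : 2 * B1 ≤ B4 - A3 := by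
    obtain ⟨zw, hzwT, hzw⟩ := w2
    have h := hb zw hzwT
    omega
  have r4 : 2 * B2 ≤ B4 + B3 := by
    obtain ⟨zw, hzwT, hzw⟩ := w4
    have h := hb zw hzwT
    omega
  -- corner membership criteria
  have hc00 : A4 ≤ a1 + a2 → pt a1 a2 ∈ T := by
    intro h
    refine hcomp _ ?_ ?_ ?_ ?_ ?_ ?_ ?_ ?_ <;> simp only [pt0, pt1] <;> omega
  have hc10 : a1 + 1 ≤ B1 → A3 ≤ a2 - a1 - 1 → a1 + a2 + 1 ≤ B4 → pt (a1+1) a2 ∈ T := by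
    intro h1 h2 h3
    refine hcomp _ ?_ ?_ ?_ ?_ ?_ ?_ ?_ ?_ <;> simp only [pt0, pt1] <;> omega
  have hc01 : a2 + 1 ≤ B2 → a2 - a1 + 1 ≤ B3 → a1 + a2 + 1 ≤ B4 → pt a1 (a2+1) ∈ T := by
    intro h1 h2 h3
    refine hcomp _ ?_ ?_ ?_ ?_ ?_ ?_ ?_ ?_ <;> simp only [pt0, pt1] <;> omega
  have hc11 : a1 + 1 ≤ B1 → a2 + 1 ≤ B2 → a1 + a2 + 2 ≤ B4 → pt (a1+1) (a2+1) ∈ T := by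
    intro h1 h2 h3
    refine hcomp _ ?_ ?_ ?_ ?_ ?_ ?_ ?_ ?_ <;> simp only [pt0, pt1] <;> omega
  -- neighborhood membership of corners
  have n00 : pt a1 a2 ∈ intNbhd x := by
    apply nbhd_mk <;> rw [abs_sub_lt_iff] <;> constructor <;> linarith
  have n10 : (a1:ℝ) < x 0 → pt (a1+1) a2 ∈ intNbhd x := by
    intro h
    apply nbhd_mk <;> rw [abs_sub_lt_iff] <;> constructor <;> push_cast <;> linarith
  have n01 : (a2:ℝ) < x 1 → pt a1 (a2+1) ∈ intNbhd x := by
    intro h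
    apply nbhd_mk <;> rw [abs_sub_lt_iff] <;> constructor <;> push_cast <;> linarith
  have n11 : (a1:ℝ) < x 0 → (a2:ℝ) < x 1 → pt (a1+1) (a2+1) ∈ intNbhd x := by
    intro h h'
    apply nbhd_mk <;> rw [abs_sub_lt_iff] <;> constructor <;> push_cast <;> linarith
  have img : ∀ u v : ℤ, pt u v ∈ T → pt u v ∈ intNbhd x →
      realify (pt u v) ∈ realify '' (T ∩ intNbhd x) :=
    fun u v h1 h2 => Set.mem_image_of_mem _ ⟨h1, h2⟩
  -- case analysis
  rcases eq_or_lt_of_le hfa1 with hteq | htpos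
  · rcases eq_or_lt_of_le hfa2 with hseq | hspos
    · -- x = corner (a1, a2)
      have hc : pt a1 a2 ∈ T := hc00 (iA4' (by linarith))
      have hxe : x = realify (pt a1 a2) := by
        funext i; fin_cases i
        · exact hteq.symm
        · exact hseq.symm
      have hmm := mem_hull_one (img _ _ hc n00)
      rw [← hxe] at hmm
      exact hmm
    · -- t = 0, s > 0 : combo of c00, c01
      have hc0 : pt a1 a2 ∈ T := hc00 (iA4' (by linarith))
      have hc1 : pt a1 (a2+1) ∈ T := hc01 (iB2' hspos) (iB3' (by linarith)) (iB4' (by linarith))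
      refine mem_hull_two (img _ _ hc0 n00) (img _ _ hc1 (n01 hspos))
        (w1 := (a2:ℝ) + 1 - x 1) (w2 := x 1 - a2) (by linarith) (by linarith) (by ring)
        (combo2_eq x _ _ _ _ _ _ (by push_cast; ring_nf <;> linarith) (by push_cast; ring_nf <;> linarith))
  · rcases eq_or_lt_of_le hfa2 with hseq | hspos
    · -- s = 0, t > 0 : combo of c00, c10
      have hc0 : pt a1 a2 ∈ T := hc00 (iA4' (by linarith))
      have hc1 : pt (a1+1) a2 ∈ T := hc10 (iB1' htpos) (iA3' (by linarith)) (iB4' (by linarith))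
      refine mem_hull_two (img _ _ hc0 n00) (img _ _ hc1 (n10 htpos))
        (w1 := (a1:ℝ) + 1 - x 0) (w2 := x 0 - a1) (by linarith) (by linarith) (by ring)
        (combo2_eq x _ _ _ _ _ _ (by push_cast; ring_nf <;> linarith) (by push_cast; ring_nf <;> linarith))
    · -- main case : t > 0, s > 0
      rcases le_or_gt A4 (a1 + a2) with hD1 | hD2
      · -- c00 available
        have hc0 : pt a1 a2 ∈ T := hc00 hD1
        rcases lt_trichotomy (x 1 - (a2:ℝ)) (x 0 - (a1:ℝ)) with hst | hst | hst
        · -- s < t : c10 available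
          have hc1 : pt (a1+1) a2 ∈ T := hc10 (iB1' htpos) (iA3' hst) (iB4' (by linarith))
          rcases le_or_gt (x 0 + x 1) ((a1:ℝ) + a2 + 1) with hsum | hsum
          · rcases le_or_gt (a2 - a1 + 1) B3 with hB3c | hB3c
            · -- c01 also available : combo c00, c01, c10
              have hc2 : pt a1 (a2+1) ∈ T := hc01 (iB2' hspos) hB3c (iB4' (by linarith))
              refine mem_hull_three (img _ _ hc0 n00) (img _ _ hc2 (n01 hspos))
                (img _ _ hc1 (n10 htpos))
                (w1 := (a1:ℝ) + a2 + 1 - x 0 - x 1) (w2 := x 1 - a2) (w3 := x 0 - a1)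
                (by linarith) (by linarith) (by linarith) (by ring)
                (combo3_eq x _ _ _ _ _ _ _ _ _ (by push_cast; ring_nf <;> linarith)
                  (by push_cast; ring_nf <;> linarith))
            · -- B3 = a2 - a1 : c11 available via r4
              have hB4c : a1 + a2 + 2 ≤ B4 := by
                have := iB2' hspos
                omega
              have hc3 : pt (a1+1) (a2+1) ∈ T := hc11 (iB1' htpos) (iB2' hspos) hB4c
              refine mem_hull_three (img _ _ hc0 n00) (img _ _ hc1 (n10 htpos))
                (img _ _ hc3 (n11 htpos hspos))
                (w1 := (a1:ℝ) + 1 - x 0) (w2 := (x 0 - a1) - (x 1 - a2)) (w3 := x 1 - a2)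
                (by linarith) (by linarith) (by linarith) (by ring)
                (combo3_eq x _ _ _ _ _ _ _ _ _ (by push_cast; ring_nf <;> linarith)
                  (by push_cast; ring_nf <;> linarith))
          · -- s + t > 1 : c11 available
            have hc3 : pt (a1+1) (a2+1) ∈ T := hc11 (iB1' htpos) (iB2' hspos) (iB4'' hsum)
            refine mem_hull_three (img _ _ hc0 n00) (img _ _ hc1 (n10 htpos))
              (img _ _ hc3 (n11 htpos hspos))
              (w1 := (a1:ℝ) + 1 - x 0) (w2 := (x 0 - a1) - (x 1 - a2)) (w3 := x 1 - a2)
              (by linarith) (by linarith) (by linarith) (by ring)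
              (combo3_eq x _ _ _ _ _ _ _ _ _ (by push_cast; ring_nf <;> linarith)
                (by push_cast; ring_nf <;> linarith))
        · -- s = t
          rcases le_or_gt (a1 + a2 + 2) B4 with hB4c | hB4c
          · -- c11 available : combo c00, c11
            have hc3 : pt (a1+1) (a2+1) ∈ T := hc11 (iB1' htpos) (iB2' hspos) hB4c
            refine mem_hull_two (img _ _ hc0 n00) (img _ _ hc3 (n11 htpos hspos))
              (w1 := (a1:ℝ) + 1 - x 0) (w2 := x 0 - a1) (by linarith) (by linarith) (by ring)
              (combo2_eq x _ _ _ _ _ _ (by push_cast; ring_nf <;> linarith)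
                (by push_cast; ring_nf <;> linarith))
          · -- B4 = a1 + a2 + 1 : c10 and c01 via r3, r4
            have hB4e : B4 = a1 + a2 + 1 := by
              have := iB4' (by linarith)
              omega
            have hA3c : A3 ≤ a2 - a1 - 1 := by
              have := iB1' htpos
              omega
            have hB3c : a2 - a1 + 1 ≤ B3 := by
              have := iB2' hspos
              omega
            have hc1 : pt (a1+1) a2 ∈ T := hc10 (iB1' htpos) hA3c (by omega)
            have hc2 : pt a1 (a2+1) ∈ T := hc01 (iB2' hspos) hB3c (by omega)
            have hsum : x 0 + x 1 ≤ (a1:ℝ) + a2 + 1 := by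
              have : (B4:ℝ) = (a1:ℝ) + a2 + 1 := by exact_mod_cast hB4e
              linarith
            refine mem_hull_three (img _ _ hc0 n00) (img _ _ hc2 (n01 hspos))
              (img _ _ hc1 (n10 htpos))
              (w1 := (a1:ℝ) + a2 + 1 - x 0 - x 1) (w2 := x 1 - a2) (w3 := x 0 - a1)
              (by linarith) (by linarith) (by linarith) (by ring)
              (combo3_eq x _ _ _ _ _ _ _ _ _ (by push_cast; ring_nf <;> linarith)
                (by push_cast; ring_nf <;> linarith))
        · -- s > t : c01 available
          have hc2 : pt a1 (a2+1) ∈ T := hc01 (iB2' hspos) (iB3' hst) (iB4' (by linarith))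
          rcases le_or_gt (x 0 + x 1) ((a1:ℝ) + a2 + 1) with hsum | hsum
          · rcases le_or_gt A3 (a2 - a1 - 1) with hA3c | hA3c
            · -- c10 also available
              have hc1 : pt (a1+1) a2 ∈ T := hc10 (iB1' htpos) hA3c (iB4' (by linarith))
              refine mem_hull_three (img _ _ hc0 n00) (img _ _ hc2 (n01 hspos))
                (img _ _ hc1 (n10 htpos))
                (w1 := (a1:ℝ) + a2 + 1 - x 0 - x 1) (w2 := x 1 - a2) (w3 := x 0 - a1)
                (by linarith) (by linarith) (by linarith) (by ring)
                (combo3_eq x _ _ _ _ _ _ _ _ _ (by push_cast; ring_nf <;> linarith)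
                  (by push_cast; ring_nf <;> linarith))
            · -- A3 = a2
              have hB4c : a1 + a2 + 2 ≤ B4 := by
                have := iB1' htpos
                omega
              have hc3 : pt (a1+1) (a2+1) ∈ T := hc11 (iB1' htpos) (iB2' hspos) hB4c
              refine mem_hull_three (img _ _ hc0 n00) (img _ _ hc2 (n01 hspos))
                (img _ _ hc3 (n11 htpos hspos))
                (w1 := (a2:ℝ) + 1 - x 1) (w2 := (x 1 - a2) - (x 0 - a1)) (w3 := x 0 - a1)
                (by linarith) (by linarith) (by linarith) (by ring)
                (combo3_eq x _ _ _ _ _ _ _ _ _ (by push_cast; ring_nf <;> linarith)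
                  (by push_cast; ring_nf <;> linarith))
          · -- s + t > 1 : c11 available
            have hc3 : pt (a1+1) (a2+1) ∈ T := hc11 (iB1' htpos) (iB2' hspos) (iB4'' hsum)
            refine mem_hull_three (img _ _ hc0 n00) (img _ _ hc2 (n01 hspos))
              (img _ _ hc3 (n11 htpos hspos))
              (w1 := (a2:ℝ) + 1 - x 1) (w2 := (x 1 - a2) - (x 0 - a1)) (w3 := x 0 - a1)
              (by linarith) (by linarith) (by linarith) (by ring)
              (combo3_eq x _ _ _ _ _ _ _ _ _ (by push_cast; ring_nf <;> linarith)
                (by push_cast; ring_nf <;> linarith))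
      · -- A4 = a1 + a2 + 1 : c01 and c10 via r1, r2 ; c00 unavailable
        have hA4e : A4 = a1 + a2 + 1 := by omega
        have hst1 : (a1:ℝ) + a2 + 1 ≤ x 0 + x 1 := by
          have : ((a1:ℝ) + a2 + 1) ≤ (A4:ℝ) := by exact_mod_cast hD2
          linarith
        have hA3c : A3 ≤ a2 - a1 - 1 := by omega
        have hB3c : a2 - a1 + 1 ≤ B3 := by omega
        have hB4A4 : A4 ≤ B4 := by
          obtain ⟨zw, hzwT, hzw⟩ := w1
          have h := hb zw hzwT
          omega
        have hc1 : pt (a1+1) a2 ∈ T := hc10 (iB1' htpos) hA3c (by omega)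
        have hc2 : pt a1 (a2+1) ∈ T := hc01 (iB2' hspos) hB3c (by omega)
        rcases eq_or_lt_of_le hst1 with hsum | hsum
        · -- s + t = 1 : combo c01, c10
          refine mem_hull_two (img _ _ hc2 (n01 hspos)) (img _ _ hc1 (n10 htpos))
            (w1 := (a1:ℝ) + 1 - x 0) (w2 := (a2:ℝ) + 1 - x 1)
            (by linarith) (by linarith) (by linarith)
            (combo2_eq x _ _ _ _ _ _
              (by push_cast; rw [show x 1 = (a1:ℝ) + a2 + 1 - x 0 from by linarith]; ring)
              (by push_cast; rw [show x 1 = (a1:ℝ) + a2 + 1 - x 0 from by linarith]; ring))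
        · -- s + t > 1 : combo c01, c10, c11
          have hc3 : pt (a1+1) (a2+1) ∈ T := hc11 (iB1' htpos) (iB2' hspos) (iB4'' hsum)
          refine mem_hull_three (img _ _ hc2 (n01 hspos)) (img _ _ hc1 (n10 htpos))
            (img _ _ hc3 (n11 htpos hspos))
            (w1 := (a1:ℝ) + 1 - x 0) (w2 := (a2:ℝ) + 1 - x 1)
            (w3 := x 0 + x 1 - a1 - a2 - 1)
            (by linarith) (by linarith) (by linarith) (by ring)
            (combo3_eq x _ _ _ _ _ _ _ _ _ (by push_cast; ring_nf <;> linarith)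
              (by push_cast; ring_nf <;> linarith))

/-! ### Glue: box restriction and the main theorem -/

lemma IC_inter_box (S : Set (Fin 2 → ℤ)) (hS : IsIntegrallyConvexSet S) (N : ℤ) :
    IsIntegrallyConvexSet (S ∩ {z : Fin 2 → ℤ | |z 0| ≤ N ∧ |z 1| ≤ N}) := by
  intro x hx
  set B : Set (Fin 2 → ℤ) := {z | |z 0| ≤ N ∧ |z 1| ≤ N} with hB
  have hx' : x ∈ convexHull ℝ (realify '' S) :=
    convexHull_mono (Set.image_mono Set.inter_subset_left) hx
  have hb1 : -(N:ℝ) ≤ x 0 := by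
    have := linBoundZ 1 0 (-(N:ℝ)) (S ∩ B) (by
      intro z hz
      have h := (abs_le.mp hz.2.1).1
      have : -(N:ℝ) ≤ (z 0 : ℝ) := by exact_mod_cast h
      linarith) hx
    linarith
  have hb2 : x 0 ≤ (N:ℝ) := by
    have := linBoundZ (-1) 0 (-(N:ℝ)) (S ∩ B) (by
      intro z hz
      have h := (abs_le.mp hz.2.1).2
      have : (z 0 : ℝ) ≤ (N:ℝ) := by exact_mod_cast h
      linarith) hx
    linarith
  have hb3 : -(N:ℝ) ≤ x 1 := by
    have := linBoundZ 0 1 (-(N:ℝ)) (S ∩ B) (by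
      intro z hz
      have h := (abs_le.mp hz.2.2).1
      have : -(N:ℝ) ≤ (z 1 : ℝ) := by exact_mod_cast h
      linarith) hx
    linarith
  have hb4 : x 1 ≤ (N:ℝ) := by
    have := linBoundZ 0 (-1) (-(N:ℝ)) (S ∩ B) (by
      intro z hz
      have h := (abs_le.mp hz.2.2).2
      have : (z 1 : ℝ) ≤ (N:ℝ) := by exact_mod_cast h
      linarith) hx
    linarith
  have h2 := hS x hx'
  have hsub : S ∩ intNbhd x ⊆ (S ∩ B) ∩ intNbhd x := by
    rintro z ⟨hzS, hzN⟩
    refine ⟨⟨hzS, ?_, ?_⟩, hzN⟩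
    · have h0 := nbhd_coord_bounds hzN 0
      have l1 : -(N:ℝ) - 1 < (z 0 : ℝ) := by linarith [h0.1]
      have l2 : (z 0 : ℝ) < (N:ℝ) + 1 := by linarith [h0.2]
      have l1' : -N - 1 < z 0 := by exact_mod_cast l1
      have l2' : z 0 < N + 1 := by exact_mod_cast l2
      rw [abs_le]; omega
    · have h0 := nbhd_coord_bounds hzN 1
      have l1 : -(N:ℝ) - 1 < (z 1 : ℝ) := by linarith [h0.1]
      have l2 : (z 1 : ℝ) < (N:ℝ) + 1 := by linarith [h0.2]
      have l1' : -N - 1 < z 1 := by exact_mod_cast l1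
      have l2' : z 1 < N + 1 := by exact_mod_cast l2
      rw [abs_le]; omega
  exact convexHull_mono (Set.image_mono hsub) h2

theorem main_scaling (S : Set (Fin 2 → ℤ)) (hS : IsIntegrallyConvexSet S) (α : ℕ) (hα : 0 < α) :
    IsIntegrallyConvexSet {x : Fin 2 → ℤ | (fun i => (α : ℤ) * x i) ∈ S} := by
  classical
  intro x hx
  set Tf : Set (Fin 2 → ℤ) := {z | (fun i => (α : ℤ) * z i) ∈ S} with hTf
  have hα' : (1:ℤ) ≤ (α:ℤ) := by exact_mod_cast hα
  -- extract a finite convex combination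
  rw [convexHull_eq] at hx
  obtain ⟨ι, t, w, zf, hw0, hw1, hzt, hcm⟩ := hx
  have htne : t.Nonempty := by
    by_contra hemp
    rw [Finset.not_nonempty_iff_eq_empty] at hemp
    rw [hemp] at hw1
    simp at hw1
  -- choose integer preimages
  have hg : ∀ j ∈ t, ∃ g : Fin 2 → ℤ, g ∈ Tf ∧ realify g = zf j := by
    intro j hj
    obtain ⟨g, hg1, hg2⟩ := hzt j hj
    exact ⟨g, hg1, hg2⟩
  set g : ι → Fin 2 → ℤ := fun j => if h : ∃ g : Fin 2 → ℤ, g ∈ Tf ∧ realify g = zf j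
    then h.choose else 0 with hgdef
  have hgP : ∀ j ∈ t, g j ∈ Tf ∧ realify (g j) = zf j := by
    intro j hj
    have h := hg j hj
    simp only [hgdef, dif_pos h]
    exact h.choose_spec
  -- a bound for all the chosen points
  set C : ℕ := t.sup (fun j => (|g j 0| ⊔ |g j 1|).toNat) with hC
  have hCb : ∀ j ∈ t, |g j 0| ≤ (C:ℤ) ∧ |g j 1| ≤ (C:ℤ) := by
    intro j hj
    have h1 : (|g j 0| ⊔ |g j 1|).toNat ≤ C := Finset.le_sup (f := fun j => (|g j 0| ⊔ |g j 1|).toNat) hj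
    have h2 : ((|g j 0| ⊔ |g j 1|).toNat : ℤ) = |g j 0| ⊔ |g j 1| := by
      rw [Int.toNat_of_nonneg]
      exact le_trans (abs_nonneg _) le_sup_left
    have h3 : (((|g j 0| ⊔ |g j 1|).toNat : ℕ) : ℤ) ≤ (C:ℤ) := by exact_mod_cast h1
    rw [h2] at h3
    exact ⟨le_trans le_sup_left h3, le_trans le_sup_right h3⟩
  set NN : ℤ := (α:ℤ) * (C:ℤ) + 1 with hNN
  set S' : Set (Fin 2 → ℤ) := S ∩ {z : Fin 2 → ℤ | |z 0| ≤ NN ∧ |z 1| ≤ NN} with hS'def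
  have hS' : IsIntegrallyConvexSet S' := IC_inter_box S hS NN
  -- the scaled points lie in S'
  have hgS' : ∀ j ∈ t, (fun i => (α:ℤ) * g j i) ∈ S' := by
    intro j hj
    refine ⟨(hgP j hj).1, ?_, ?_⟩
    · have := (hCb j hj).1
      have habs : |(α:ℤ) * g j 0| = (α:ℤ) * |g j 0| := by
        rw [abs_mul, abs_of_nonneg (by positivity : (0:ℤ) ≤ (α:ℤ))]
      show |(α:ℤ) * g j 0| ≤ NN
      rw [habs, hNN]
      nlinarith [this, hα']
    · have := (hCb j hj).2
      have habs : |(α:ℤ) * g j 1| = (α:ℤ) * |g j 1| := by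
        rw [abs_mul, abs_of_nonneg (by positivity : (0:ℤ) ≤ (α:ℤ))]
      show |(α:ℤ) * g j 1| ≤ NN
      rw [habs, hNN]
      nlinarith [this, hα']
  obtain ⟨j₀, hj₀⟩ := htne
  have hS'bd : ∀ z ∈ S', |z 0| ≤ NN ∧ |z 1| ≤ NN := fun z hz => hz.2
  have hS'ne : S'.Nonempty := ⟨_, hgS' j₀ hj₀⟩
  obtain ⟨a₁, b₁, a₂, b₂, a₃, b₃, a₄, b₄, hoct, hcomp⟩ := octagon_rep S' hS' NN hS'bd hS'ne
  -- the scaled-down set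
  set T₀ : Set (Fin 2 → ℤ) := {z | (fun i => (α : ℤ) * z i) ∈ S'} with hT₀
  have hT₀sub : T₀ ⊆ Tf := by
    intro z hz
    have hz' : (fun i => (α:ℤ) * z i) ∈ S' := hz
    exact hz'.1
  have hxT₀ : x ∈ convexHull ℝ (realify '' T₀) := by
    rw [← hcm]
    apply Finset.centerMass_mem_convexHull t hw0 (by rw [hw1]; norm_num)
    intro j hj
    have := hgP j hj
    rw [← this.2]
    have hmemT : g j ∈ T₀ := hgS' j hj
    exact Set.mem_image_of_mem _ hmemT
  have hT₀g : ∀ z ∈ T₀, |z 0| ≤ NN ∧ |z 1| ≤ NN := by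
    intro z hz
    have hz' : (fun i => (α:ℤ) * z i) ∈ S' := hz
    have h := hz'.2
    have h0 : |(α:ℤ) * z 0| ≤ NN := h.1
    have h1 : |(α:ℤ) * z 1| ≤ NN := h.2
    constructor
    · have : |z 0| ≤ |(α:ℤ) * z 0| := by
        rw [abs_mul, abs_of_nonneg (by positivity : (0:ℤ) ≤ (α:ℤ))]
        nlinarith [abs_nonneg (z 0), hα']
      omega
    · have : |z 1| ≤ |(α:ℤ) * z 1| := by
        rw [abs_mul, abs_of_nonneg (by positivity : (0:ℤ) ≤ (α:ℤ))]
        nlinarith [abs_nonneg (z 1), hα']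
      omega
  have hT₀ne : T₀.Nonempty := ⟨g j₀, hgS' j₀ hj₀⟩
  obtain ⟨z₀, hz₀⟩ := hT₀ne
  -- tight parameters over T₀
  obtain ⟨A1, ⟨zA1, hzA1T, hzA1⟩, lA1⟩ := Int.exists_least_of_bdd
    (P := fun n => ∃ z ∈ T₀, z 0 = n)
    ⟨-NN, by rintro n ⟨z, hz, rfl⟩; have := abs_le.mp (hT₀g z hz).1; omega⟩ ⟨z₀ 0, z₀, hz₀, rfl⟩
  obtain ⟨B1, ⟨zB1, hzB1T, hzB1⟩, lB1⟩ := Int.exists_greatest_of_bdd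
    (P := fun n => ∃ z ∈ T₀, z 0 = n)
    ⟨NN, by rintro n ⟨z, hz, rfl⟩; have := abs_le.mp (hT₀g z hz).1; omega⟩ ⟨z₀ 0, z₀, hz₀, rfl⟩
  obtain ⟨A2, ⟨zA2, hzA2T, hzA2⟩, lA2⟩ := Int.exists_least_of_bdd
    (P := fun n => ∃ z ∈ T₀, z 1 = n)
    ⟨-NN, by rintro n ⟨z, hz, rfl⟩; have := abs_le.mp (hT₀g z hz).2; omega⟩ ⟨z₀ 1, z₀, hz₀, rfl⟩
  obtain ⟨B2, ⟨zB2, hzB2T, hzB2⟩, lB2⟩ := Int.exists_greatest_of_bdd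
    (P := fun n => ∃ z ∈ T₀, z 1 = n)
    ⟨NN, by rintro n ⟨z, hz, rfl⟩; have := abs_le.mp (hT₀g z hz).2; omega⟩ ⟨z₀ 1, z₀, hz₀, rfl⟩
  obtain ⟨A3, ⟨zA3, hzA3T, hzA3⟩, lA3⟩ := Int.exists_least_of_bdd
    (P := fun n => ∃ z ∈ T₀, z 1 - z 0 = n)
    ⟨-2*NN, by rintro n ⟨z, hz, rfl⟩; have h1 := abs_le.mp (hT₀g z hz).1; have h2 := abs_le.mp (hT₀g z hz).2; omega⟩
    ⟨z₀ 1 - z₀ 0, z₀, hz₀, rfl⟩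
  obtain ⟨B3, ⟨zB3, hzB3T, hzB3⟩, lB3⟩ := Int.exists_greatest_of_bdd
    (P := fun n => ∃ z ∈ T₀, z 1 - z 0 = n)
    ⟨2*NN, by rintro n ⟨z, hz, rfl⟩; have h1 := abs_le.mp (hT₀g z hz).1; have h2 := abs_le.mp (hT₀g z hz).2; omega⟩
    ⟨z₀ 1 - z₀ 0, z₀, hz₀, rfl⟩
  obtain ⟨A4, ⟨zA4, hzA4T, hzA4⟩, lA4⟩ := Int.exists_least_of_bdd
    (P := fun n => ∃ z ∈ T₀, z 0 + z 1 = n)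
    ⟨-2*NN, by rintro n ⟨z, hz, rfl⟩; have h1 := abs_le.mp (hT₀g z hz).1; have h2 := abs_le.mp (hT₀g z hz).2; omega⟩
    ⟨z₀ 0 + z₀ 1, z₀, hz₀, rfl⟩
  obtain ⟨B4, ⟨zB4, hzB4T, hzB4⟩, lB4⟩ := Int.exists_greatest_of_bdd
    (P := fun n => ∃ z ∈ T₀, z 0 + z 1 = n)
    ⟨2*NN, by rintro n ⟨z, hz, rfl⟩; have h1 := abs_le.mp (hT₀g z hz).1; have h2 := abs_le.mp (hT₀g z hz).2; omega⟩
    ⟨z₀ 0 + z₀ 1, z₀, hz₀, rfl⟩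
  have hTb : ∀ z ∈ T₀, A1 ≤ z 0 ∧ z 0 ≤ B1 ∧ A2 ≤ z 1 ∧ z 1 ≤ B2 ∧
      A3 ≤ z 1 - z 0 ∧ z 1 - z 0 ≤ B3 ∧ A4 ≤ z 0 + z 1 ∧ z 0 + z 1 ≤ B4 := by
    intro z hz
    exact ⟨lA1 _ ⟨z, hz, rfl⟩, lB1 _ ⟨z, hz, rfl⟩, lA2 _ ⟨z, hz, rfl⟩, lB2 _ ⟨z, hz, rfl⟩,
      lA3 _ ⟨z, hz, rfl⟩, lB3 _ ⟨z, hz, rfl⟩, lA4 _ ⟨z, hz, rfl⟩, lB4 _ ⟨z, hz, rfl⟩⟩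
  -- completeness of the tight parameters
  have hTcomp : ∀ z : Fin 2 → ℤ, A1 ≤ z 0 → z 0 ≤ B1 → A2 ≤ z 1 → z 1 ≤ B2 →
      A3 ≤ z 1 - z 0 → z 1 - z 0 ≤ B3 → A4 ≤ z 0 + z 1 → z 0 + z 1 ≤ B4 → z ∈ T₀ := by
    intro z h1 h2 h3 h4 h5 h6 h7 h8
    have hα0 : (0:ℤ) ≤ (α:ℤ) := by positivity
    show (fun i => (α : ℤ) * z i) ∈ S'
    apply hcomp
    · show a₁ ≤ (α:ℤ) * z 0
      have hw := (hoct _ (hzA1T : (fun i => (α:ℤ) * zA1 i) ∈ S')).1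
      have hw' : a₁ ≤ (α:ℤ) * A1 := by
        rw [show (α:ℤ) * zA1 0 = (α:ℤ) * zA1 0 from rfl, hzA1] at hw
        exact hw
      have hm := mul_le_mul_of_nonneg_left h1 hα0
      linarith
    · show (α:ℤ) * z 0 ≤ b₁
      have hw := (hoct _ (hzB1T : (fun i => (α:ℤ) * zB1 i) ∈ S')).2.1
      have hw' : (α:ℤ) * B1 ≤ b₁ := by
        rw [show (α:ℤ) * zB1 0 = (α:ℤ) * zB1 0 from rfl, hzB1] at hw
        exact hw
      have hm := mul_le_mul_of_nonneg_left h2 hα0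
      linarith
    · show a₂ ≤ (α:ℤ) * z 1
      have hw := (hoct _ (hzA2T : (fun i => (α:ℤ) * zA2 i) ∈ S')).2.2.1
      have hw' : a₂ ≤ (α:ℤ) * A2 := by
        rw [show (α:ℤ) * zA2 1 = (α:ℤ) * zA2 1 from rfl, hzA2] at hw
        exact hw
      have hm := mul_le_mul_of_nonneg_left h3 hα0
      linarith
    · show (α:ℤ) * z 1 ≤ b₂
      have hw := (hoct _ (hzB2T : (fun i => (α:ℤ) * zB2 i) ∈ S')).2.2.2.1
      have hw' : (α:ℤ) * B2 ≤ b₂ := by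
        rw [show (α:ℤ) * zB2 1 = (α:ℤ) * zB2 1 from rfl, hzB2] at hw
        exact hw
      have hm := mul_le_mul_of_nonneg_left h4 hα0
      linarith
    · show a₃ ≤ (α:ℤ) * z 1 - (α:ℤ) * z 0
      have hw := (hoct _ (hzA3T : (fun i => (α:ℤ) * zA3 i) ∈ S')).2.2.2.2.1
      have hw' : a₃ ≤ (α:ℤ) * A3 := by
        rw [show (α:ℤ) * zA3 1 - (α:ℤ) * zA3 0 = (α:ℤ) * (zA3 1 - zA3 0) from by ring, hzA3] at hw
        exact hw
      have hm := mul_le_mul_of_nonneg_left h5 hα0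
      rw [mul_sub] at hm
      linarith
    · show (α:ℤ) * z 1 - (α:ℤ) * z 0 ≤ b₃
      have hw := (hoct _ (hzB3T : (fun i => (α:ℤ) * zB3 i) ∈ S')).2.2.2.2.2.1
      have hw' : (α:ℤ) * B3 ≤ b₃ := by
        rw [show (α:ℤ) * zB3 1 - (α:ℤ) * zB3 0 = (α:ℤ) * (zB3 1 - zB3 0) from by ring, hzB3] at hw
        exact hw
      have hm := mul_le_mul_of_nonneg_left h6 hα0
      rw [mul_sub] at hm
      linarith
    · show a₄ ≤ (α:ℤ) * z 0 + (α:ℤ) * z 1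
      have hw := (hoct _ (hzA4T : (fun i => (α:ℤ) * zA4 i) ∈ S')).2.2.2.2.2.2.1
      have hw' : a₄ ≤ (α:ℤ) * A4 := by
        rw [show (α:ℤ) * zA4 0 + (α:ℤ) * zA4 1 = (α:ℤ) * (zA4 0 + zA4 1) from by ring, hzA4] at hw
        exact hw
      have hm := mul_le_mul_of_nonneg_left h7 hα0
      rw [mul_add] at hm
      linarith
    · show (α:ℤ) * z 0 + (α:ℤ) * z 1 ≤ b₄
      have hw := (hoct _ (hzB4T : (fun i => (α:ℤ) * zB4 i) ∈ S')).2.2.2.2.2.2.2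
      have hw' : (α:ℤ) * B4 ≤ b₄ := by
        rw [show (α:ℤ) * zB4 0 + (α:ℤ) * zB4 1 = (α:ℤ) * (zB4 0 + zB4 1) from by ring, hzB4] at hw
        exact hw
      have hm := mul_le_mul_of_nonneg_left h8 hα0
      rw [mul_add] at hm
      linarith
  have := omega_star T₀ A1 B1 A2 B2 A3 B3 A4 B4 hTb
    ⟨zA1, hzA1T, hzA1⟩ ⟨zB1, hzB1T, hzB1⟩ ⟨zA2, hzA2T, hzA2⟩ ⟨zB2, hzB2T, hzB2⟩
    hTcomp x hxT₀
  exact convexHull_mono (Set.image_mono (by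
    rintro z ⟨hz1, hz2⟩
    exact ⟨hT₀sub hz1, hz2⟩)) this

end ICProof

/-- Scaling preserves integral convexity of sets in ℤ². -/
theorem scaling_preserves_integrally_convex_set_dim2
    (S : Set (Fin 2 → ℤ)) (hS : IsIntegrallyConvexSet S) (α : ℕ) (hα : 0 < α) :
    IsIntegrallyConvexSet {x : Fin 2 → ℤ | (fun i => (α : ℤ) * x i) ∈ S} :=
  ICProof.main_scaling S hS α hα
end
end

section
/- A set S ⊆ ℤ² is integrally convex if and only if it can be represented as S = {(x₁,x₂) ∈ ℤ² : p_i x₁ + q_i x₂ ≤ r_i (i = 1,…,m)} for some coefficients p_i, q_i ∈ {−1, 0, +1} and integers r_i. -/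
open scoped BigOperators

noncomputable section

namespace ICProof

abbrev Pt := Fin 2 → ℤ
abbrev RPt := Fin 2 → ℝ

lemma hull_halfspace {A : Set RPt} {p q c : ℝ}
    (h : ∀ v ∈ A, p * v 0 + q * v 1 ≤ c) {x : RPt}
    (hx : x ∈ convexHull ℝ A) : p * x 0 + q * x 1 ≤ c := by
  have hlin : IsLinearMap ℝ (fun v : RPt => p * v 0 + q * v 1) := by
    constructor
    · intro u v; simp only [Pi.add_apply]; ring
    · intro c' v; simp only [Pi.smul_apply, smul_eq_mul]; ring
  exact convexHull_min h (convex_halfSpace_le hlin c) hx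

lemma combo_mem {k : ℕ} (v : Fin k → Pt) (A : Set Pt) (hv : ∀ i, v i ∈ A)
    (w : Fin k → ℝ) (h0 : ∀ i, 0 ≤ w i) (h1 : ∑ i, w i = 1) {x : RPt}
    (hx : ∀ j, x j = ∑ i, w i * (v i j : ℝ)) : x ∈ convexHull ℝ (realify '' A) := by
  have hmem := Finset.centerMass_mem_convexHull (Finset.univ : Finset (Fin k))
      (w := w) (z := fun i => realify (v i)) (fun i _ => h0 i)
      (by rw [h1]; norm_num)
      (fun i _ => Set.mem_image_of_mem _ (hv i))
  have hxeq : x = (Finset.univ : Finset (Fin k)).centerMass w (fun i => realify (v i)) := by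
    funext j
    simp only [Finset.centerMass, h1, inv_one, one_smul]
    rw [hx j]
    simp [realify, Finset.sum_apply]
  rw [hxeq]; exact hmem

lemma pin_int {k m : ℤ} (h : |((k : ℝ)) - (m : ℝ)| < 1) : m = k := by
  rw [abs_lt] at h
  have h1 : ((k - m : ℤ) : ℝ) < 1 := by push_cast; linarith [h.2]
  have h2 : (-1 : ℝ) < ((k - m : ℤ) : ℝ) := by push_cast; linarith [h.1]
  have h1' : (k - m : ℤ) < 1 := by exact_mod_cast h1
  have h2' : (-1 : ℤ) < k - m := by exact_mod_cast h2
  omega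

lemma pin_half {k m : ℤ} (h : |((k : ℝ) - 1/2 - (m : ℝ))| < 1) : m = k - 1 ∨ m = k := by
  rw [abs_lt] at h
  have h1 : ((k - m : ℤ) : ℝ) < 3/2 := by push_cast; linarith [h.2]
  have h2 : (-1/2 : ℝ) < ((k - m : ℤ) : ℝ) := by push_cast; linarith [h.1]
  have h1' : (k - m : ℤ) < 2 := by
    by_contra hc; push_neg at hc
    have : (2 : ℝ) ≤ ((k - m : ℤ) : ℝ) := by exact_mod_cast hc
    linarith
  have h2' : (0 : ℤ) ≤ k - m := by
    by_contra hc; push_neg at hc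
    have : ((k - m : ℤ) : ℝ) ≤ -1 := by exact_mod_cast (by omega : (k - m : ℤ) ≤ -1)
    linarith
  omega

/-- Workhorse: extract a "good" point of `S ∩ N(x)`. -/
lemma exists_good {S : Set Pt} (hS : IsIntegrallyConvexSet S) {x : RPt}
    (hx : x ∈ convexHull ℝ (realify '' S)) (G : Set Pt) (p q c : ℤ)
    (hT : ∀ z' : Pt, z' ∈ S → z' ∈ intNbhd x → z' ∈ G ∨ p * z' 0 + q * z' 1 ≤ c)
    (hxf : ¬((p : ℝ) * x 0 + (q : ℝ) * x 1 ≤ (c : ℝ))) :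
    ∃ g ∈ G, g ∈ S ∧ g ∈ intNbhd x := by
  by_contra hno
  push_neg at hno
  apply hxf
  refine hull_halfspace (fun v hv => ?_) (hS x hx)
  obtain ⟨z', hz', rfl⟩ := hv
  rcases hT z' hz'.1 hz'.2 with hG | hle
  · exact absurd hz'.2 (hno z' hG hz'.1)
  · have : ((p * z' 0 + q * z' 1 : ℤ) : ℝ) ≤ (c : ℝ) := by exact_mod_cast hle
    push_cast at this
    simpa [realify] using this

/-- The basic moving lemma: a segment point between `y, w ∈ S`. -/
lemma seg_facts {S : Set Pt} (y w : Pt) (hy : y ∈ S) (hw : w ∈ S) :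
    ∃ x : RPt, x ∈ convexHull ℝ (realify '' S) ∧
      (∀ z' ∈ intNbhd x, ∀ i,
        z' i = y i ∨ (z' i = y i + 1 ∧ y i < w i) ∨ (z' i = y i - 1 ∧ w i < y i)) ∧
      (∀ p q : ℤ, 0 < p * (w 0 - y 0) + q * (w 1 - y 1) →
        ¬((p : ℝ) * x 0 + (q : ℝ) * x 1 ≤ (p : ℝ) * y 0 + (q : ℝ) * y 1)) := by
  set A : ℤ := w 0 - y 0 with hA
  set B : ℤ := w 1 - y 1 with hB
  set M : ℤ := max (max A.natAbs B.natAbs) 1 with hM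
  have hM1 : (1 : ℤ) ≤ M := le_max_right _ _
  have hMR : (1 : ℝ) ≤ (M : ℝ) := by exact_mod_cast hM1
  set t : ℝ := 1 / (2 * (M : ℝ)) with ht
  have ht0 : 0 < t := by positivity
  have ht2 : t ≤ 1 / 2 := by
    rw [ht, div_le_div_iff₀ (by positivity) (by norm_num)]
    linarith
  have hZ : ∀ i, |w i - y i| ≤ M := by
    intro i
    fin_cases i
    · rw [Int.abs_eq_natAbs]; exact le_sup_of_le_left le_sup_left
    · rw [Int.abs_eq_natAbs]; exact le_sup_of_le_left le_sup_right
  have hsmall : ∀ i, |t * ((w i : ℝ) - (y i : ℝ))| ≤ 1 / 2 := by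
    intro i
    have hNA : |(w i : ℝ) - (y i : ℝ)| ≤ (M : ℝ) := by
      have h' : |((w i - y i : ℤ) : ℝ)| ≤ (M : ℝ) := by exact_mod_cast hZ i
      rw [Int.cast_sub] at h'; exact h'
    rw [abs_mul, abs_of_pos ht0]
    calc t * |(w i : ℝ) - (y i : ℝ)| ≤ t * (M : ℝ) :=
          mul_le_mul_of_nonneg_left hNA (le_of_lt ht0)
      _ = 1 / 2 := by rw [ht]; field_simp
  refine ⟨fun i => (y i : ℝ) + t * ((w i : ℝ) - (y i : ℝ)), ?_, ?_, ?_⟩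
  · refine combo_mem ![y, w] S (fun i => by fin_cases i <;> simpa) ![1 - t, t]
      (fun i => by fin_cases i <;> simp <;> linarith) (by simp) (fun j => ?_)
    simp [Fin.sum_univ_two]
    ring
  · intro z' hz' i
    have h1 := hz' i
    have h2 := hsmall i
    simp only at h1
    have hd : |((y i - z' i : ℤ) : ℝ)| < 3 / 2 := by
      push_cast
      have heq : (y i : ℝ) - (z' i : ℝ) =
          ((y i : ℝ) + t * ((w i : ℝ) - (y i : ℝ)) - (z' i : ℝ))
            + (-(t * ((w i : ℝ) - (y i : ℝ)))) := by ring
      rw [heq]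
      have := abs_add_le ((y i : ℝ) + t * ((w i : ℝ) - (y i : ℝ)) - (z' i : ℝ))
        (-(t * ((w i : ℝ) - (y i : ℝ))))
      rw [abs_neg] at this
      linarith
    rw [abs_lt] at hd
    have hdl : -1 ≤ y i - z' i := by
      by_contra hc; push_neg at hc
      have : ((y i - z' i : ℤ) : ℝ) ≤ -2 := by exact_mod_cast (by omega : (y i - z' i : ℤ) ≤ -2)
      linarith [hd.1]
    have hdu : y i - z' i ≤ 1 := by
      by_contra hc; push_neg at hc
      have : (2 : ℝ) ≤ ((y i - z' i : ℤ) : ℝ) := by exact_mod_cast (by omega : (2:ℤ) ≤ y i - z' i)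
      linarith [hd.2]
    rcases (by omega : z' i = y i ∨ z' i = y i + 1 ∨ z' i = y i - 1) with h | h | h
    · exact Or.inl h
    · refine Or.inr (Or.inl ⟨h, ?_⟩)
      by_contra hc; push_neg at hc
      have hcr : (w i : ℝ) ≤ (y i : ℝ) := by exact_mod_cast hc
      have hx : t * ((w i : ℝ) - (y i : ℝ)) ≤ 0 := by
        apply mul_nonpos_of_nonneg_of_nonpos (le_of_lt ht0); linarith
      have hz'r : (z' i : ℝ) = (y i : ℝ) + 1 := by exact_mod_cast h
      rw [abs_lt] at h1
      rw [hz'r] at h1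
      linarith [h1.1]
    · refine Or.inr (Or.inr ⟨h, ?_⟩)
      by_contra hc; push_neg at hc
      have hcr : (y i : ℝ) ≤ (w i : ℝ) := by exact_mod_cast hc
      have hx : 0 ≤ t * ((w i : ℝ) - (y i : ℝ)) := by
        apply mul_nonneg (le_of_lt ht0); linarith
      have hz'r : (z' i : ℝ) = (y i : ℝ) - 1 := by exact_mod_cast h
      rw [abs_lt] at h1
      rw [hz'r] at h1
      linarith [h1.2]
  · intro p q hpq
    push_neg
    have key : (p : ℝ) * ((y 0 : ℝ) + t * ((w 0 : ℝ) - (y 0 : ℝ)))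
        + (q : ℝ) * ((y 1 : ℝ) + t * ((w 1 : ℝ) - (y 1 : ℝ)))
        = (p : ℝ) * y 0 + (q : ℝ) * y 1 + t * ((p * A + q * B : ℤ) : ℝ) := by
      push_cast [hA, hB]; ring
    have hpos : (1 : ℝ) ≤ ((p * A + q * B : ℤ) : ℝ) := by
      exact_mod_cast (by omega : (1 : ℤ) ≤ p * A + q * B)
    have : 0 < t * ((p * A + q * B : ℤ) : ℝ) := by positivity
    simp only [key]
    linarith

lemma pt_ext {u : Pt} {a b : ℤ} (h0 : u 0 = a) (h1 : u 1 = b) : u = ![a, b] := by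
  funext i; fin_cases i <;> simp [h0, h1]

/-! ### Symmetries -/

def swZ (z : Pt) : Pt := ![z 1, z 0]
def swR (x : RPt) : RPt := ![x 1, x 0]
def n0Z (z : Pt) : Pt := ![-z 0, z 1]
def n0R (x : RPt) : RPt := ![-x 0, x 1]
def n1Z (z : Pt) : Pt := ![z 0, -z 1]
def n1R (x : RPt) : RPt := ![x 0, -x 1]

lemma swZ_inv : ∀ z, swZ (swZ z) = z := by
  intro z; funext i; fin_cases i <;> simp [swZ]
lemma n0Z_inv : ∀ z, n0Z (n0Z z) = z := by
  intro z; funext i; fin_cases i <;> simp [n0Z]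
lemma n1Z_inv : ∀ z, n1Z (n1Z z) = z := by
  intro z; funext i; fin_cases i <;> simp [n1Z]

lemma IC_image_of (tZ : Pt → Pt) (tR : RPt → RPt)
    (hlin : IsLinearMap ℝ tR)
    (hre : ∀ z, realify (tZ z) = tR (realify z))
    (hnb : ∀ (x : RPt) (z : Pt), tZ z ∈ intNbhd (tR x) ↔ z ∈ intNbhd x)
    {S : Set Pt} (hS : IsIntegrallyConvexSet S) :
    IsIntegrallyConvexSet (tZ '' S) := by
  intro x hx
  have hcomm : ∀ (A : Set Pt), realify '' (tZ '' A) = tR '' (realify '' A) := by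
    intro A
    rw [Set.image_image, Set.image_image]
    exact Set.image_congr fun z _ => hre z
  rw [hcomm, ← hlin.image_convexHull] at hx
  obtain ⟨x', hx', rfl⟩ := hx
  have hIC := hS x' hx'
  have hset : tZ '' S ∩ intNbhd (tR x') = tZ '' (S ∩ intNbhd x') := by
    ext u
    constructor
    · rintro ⟨⟨s, hs, rfl⟩, hu⟩
      exact ⟨s, ⟨hs, (hnb x' s).mp hu⟩, rfl⟩
    · rintro ⟨s, ⟨hs, hn⟩, rfl⟩
      exact ⟨⟨s, hs, rfl⟩, (hnb x' s).mpr hn⟩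
  rw [hset, hcomm, ← hlin.image_convexHull]
  exact ⟨x', hIC, rfl⟩

lemma swR_lin : IsLinearMap ℝ swR := by
  constructor
  · intro u v; funext i; fin_cases i <;> simp [swR]
  · intro c v; funext i; fin_cases i <;> simp [swR]
lemma n0R_lin : IsLinearMap ℝ n0R := by
  constructor
  · intro u v; funext i; fin_cases i <;> simp [n0R] <;> ring
  · intro c v; funext i; fin_cases i <;> simp [n0R] <;> ring
lemma n1R_lin : IsLinearMap ℝ n1R := by
  constructor
  · intro u v; funext i; fin_cases i <;> simp [n1R] <;> ring
  · intro c v; funext i; fin_cases i <;> simp [n1R] <;> ring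

lemma swZ_re : ∀ z, realify (swZ z) = swR (realify z) := by
  intro z; funext i; fin_cases i <;> simp [realify, swZ, swR]
lemma n0Z_re : ∀ z, realify (n0Z z) = n0R (realify z) := by
  intro z; funext i; fin_cases i <;> simp [realify, n0Z, n0R]
lemma n1Z_re : ∀ z, realify (n1Z z) = n1R (realify z) := by
  intro z; funext i; fin_cases i <;> simp [realify, n1Z, n1R]

lemma swZ_nb : ∀ (x : RPt) (z : Pt), swZ z ∈ intNbhd (swR x) ↔ z ∈ intNbhd x := by
  intro x z
  constructor <;> intro h i <;> fin_cases i
  · simpa [swZ, swR] using h 1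
  · simpa [swZ, swR] using h 0
  · simpa [swZ, swR] using h 1
  · simpa [swZ, swR] using h 0
lemma n0Z_nb : ∀ (x : RPt) (z : Pt), n0Z z ∈ intNbhd (n0R x) ↔ z ∈ intNbhd x := by
  intro x z
  have key : ∀ i : Fin 2, |n0R x i - ((n0Z z i : ℤ) : ℝ)| = |x i - (z i : ℝ)| := by
    intro i; fin_cases i
    · show |-(x 0) - ((-(z 0) : ℤ) : ℝ)| = _
      push_cast
      rw [show -x 0 - -((z 0 : ℤ) : ℝ) = -(x 0 - z 0) by ring, abs_neg]
    · show |x 1 - ((z 1 : ℤ) : ℝ)| = _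
      rfl
  constructor <;> intro h i
  · have := h i; rwa [key i] at this
  · rw [key i]; exact h i
lemma n1Z_nb : ∀ (x : RPt) (z : Pt), n1Z z ∈ intNbhd (n1R x) ↔ z ∈ intNbhd x := by
  intro x z
  have key : ∀ i : Fin 2, |n1R x i - ((n1Z z i : ℤ) : ℝ)| = |x i - (z i : ℝ)| := by
    intro i; fin_cases i
    · rfl
    · show |-(x 1) - ((-(z 1) : ℤ) : ℝ)| = _
      push_cast
      rw [show -x 1 - -((z 1 : ℤ) : ℝ) = -(x 1 - z 1) by ring, abs_neg]
  constructor <;> intro h i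
  · have := h i; rwa [key i] at this
  · rw [key i]; exact h i

lemma IC_sw {S : Set Pt} (hS : IsIntegrallyConvexSet S) :
    IsIntegrallyConvexSet (swZ '' S) := IC_image_of swZ swR swR_lin swZ_re swZ_nb hS
lemma IC_n0 {S : Set Pt} (hS : IsIntegrallyConvexSet S) :
    IsIntegrallyConvexSet (n0Z '' S) := IC_image_of n0Z n0R n0R_lin n0Z_re n0Z_nb hS
lemma IC_n1 {S : Set Pt} (hS : IsIntegrallyConvexSet S) :
    IsIntegrallyConvexSet (n1Z '' S) := IC_image_of n1Z n1R n1R_lin n1Z_re n1Z_nb hS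

/-! ### The witness property -/

def Star (S : Set Pt) (z : Pt) : Prop :=
  ∀ d0 d1 : ℤ, (d0 = -1 ∨ d0 = 0 ∨ d0 = 1) → (d1 = -1 ∨ d1 = 0 ∨ d1 = 1) →
    ∃ w ∈ S, d0 * z 0 + d1 * z 1 ≤ d0 * w 0 + d1 * w 1

lemma Star_sw {S : Set Pt} {z : Pt} (h : Star S z) : Star (swZ '' S) (swZ z) := by
  intro d0 d1 h0 h1
  obtain ⟨w, hw, hle⟩ := h d1 d0 h1 h0
  refine ⟨swZ w, Set.mem_image_of_mem _ hw, ?_⟩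
  simp only [swZ, Matrix.cons_val_zero, Matrix.cons_val_one, Matrix.head_cons]
  linarith
lemma Star_n0 {S : Set Pt} {z : Pt} (h : Star S z) : Star (n0Z '' S) (n0Z z) := by
  intro d0 d1 h0 h1
  obtain ⟨w, hw, hle⟩ := h (-d0) d1 (by omega) h1
  refine ⟨n0Z w, Set.mem_image_of_mem _ hw, ?_⟩
  simp only [n0Z, Matrix.cons_val_zero, Matrix.cons_val_one, Matrix.head_cons]
  linarith
lemma Star_n1 {S : Set Pt} {z : Pt} (h : Star S z) : Star (n1Z '' S) (n1Z z) := by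
  intro d0 d1 h0 h1
  obtain ⟨w, hw, hle⟩ := h d0 (-d1) h0 (by omega)
  refine ⟨n1Z w, Set.mem_image_of_mem _ hw, ?_⟩
  simp only [n1Z, Matrix.cons_val_zero, Matrix.cons_val_one, Matrix.head_cons]
  linarith

/-! ### Measure -/

def meas (z y : Pt) : ℕ :=
  2 * ((z 0 - y 0).natAbs + (z 1 - y 1).natAbs) + (if z 0 = y 0 ∨ z 1 = y 1 then 1 else 0)

lemma meas_sw (z y : Pt) : meas (swZ z) (swZ y) = meas z y := by
  unfold meas swZ
  simp only [Matrix.cons_val_zero, Matrix.cons_val_one, Matrix.head_cons]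
  rw [if_congr (or_comm) rfl rfl]
  by_cases h0 : z 0 = y 0 <;> by_cases h1 : z 1 = y 1 <;> simp [h0, h1] <;> omega
lemma meas_n0 (z y : Pt) : meas (n0Z z) (n0Z y) = meas z y := by
  unfold meas n0Z
  simp only [Matrix.cons_val_zero, Matrix.cons_val_one, Matrix.head_cons]
  by_cases h0 : z 0 = y 0 <;> by_cases h1 : z 1 = y 1 <;> simp [h0, h1] <;> omega
lemma meas_n1 (z y : Pt) : meas (n1Z z) (n1Z y) = meas z y := by
  unfold meas n1Z
  simp only [Matrix.cons_val_zero, Matrix.cons_val_one, Matrix.head_cons]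
  by_cases h0 : z 0 = y 0 <;> by_cases h1 : z 1 = y 1 <;> simp [h0, h1] <;> omega

/-! ### Tricks -/

lemma trick2 {S : Set Pt} (hS : IsIntegrallyConvexSet S) {z a b : Pt}
    (ha : a ∈ S) (hb : b ∈ S)
    (ha0 : a 0 = z 0) (ha1 : a 1 = z 1 + 1) (hb0 : b 0 = z 0) (hb1 : b 1 = z 1 - 1) :
    z ∈ S := by
  have hx : realify z ∈ convexHull ℝ (realify '' S) := by
    refine combo_mem ![a, b] S (fun i => by fin_cases i <;> simpa) ![1/2, 1/2]
      (fun i => by fin_cases i <;> norm_num) (by simp; norm_num) (fun j => ?_)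
    simp only [Fin.sum_univ_two, Matrix.cons_val_zero, Matrix.cons_val_one, Matrix.head_cons]
    fin_cases j
    · show ((z 0 : ℤ) : ℝ) = 1/2 * (a 0 : ℝ) + 1/2 * (b 0 : ℝ)
      rw [ha0, hb0]; ring
    · show ((z 1 : ℤ) : ℝ) = 1/2 * (a 1 : ℝ) + 1/2 * (b 1 : ℝ)
      rw [ha1, hb1]; push_cast; ring
  obtain ⟨g, hgG, hgS, _⟩ := exists_good hS hx {z} 0 0 (-1)
    (fun z' _ hz' => by
      left
      have h0 := pin_int (hz' 0)
      have h1 := pin_int (hz' 1)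
      have : z' = ![z 0, z 1] := pt_ext h0 h1
      rw [this]; exact (pt_ext rfl rfl : z = ![z 0, z 1]) ▸ rfl)
    (by push_cast; norm_num)
  rcases hgG with rfl
  exact hgS

lemma trick1 {S : Set Pt} (hS : IsIntegrallyConvexSet S) {z a b : Pt}
    (ha : a ∈ S) (hb : b ∈ S)
    (ha0 : a 0 = z 0) (ha1 : a 1 = z 1 + 1) (hb0 : b 0 = z 0 - 1) (hb1 : b 1 = z 1 - 1) :
    z ∈ S := by
  set x : RPt := ![(z 0 : ℝ) - 1/2, (z 1 : ℝ)] with hxdef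
  have hx : x ∈ convexHull ℝ (realify '' S) := by
    refine combo_mem ![a, b] S (fun i => by fin_cases i <;> simpa) ![1/2, 1/2]
      (fun i => by fin_cases i <;> norm_num) (by simp; norm_num) (fun j => ?_)
    simp only [Fin.sum_univ_two, Matrix.cons_val_zero, Matrix.cons_val_one, Matrix.head_cons]
    fin_cases j
    · show (z 0 : ℝ) - 1/2 = 1/2 * (a 0 : ℝ) + 1/2 * (b 0 : ℝ)
      rw [ha0, hb0]; push_cast; ring
    · show ((z 1 : ℤ) : ℝ) = 1/2 * (a 1 : ℝ) + 1/2 * (b 1 : ℝ)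
      rw [ha1, hb1]; push_cast; ring
  obtain ⟨g, hgG, hgS, _⟩ := exists_good hS hx {z} 1 0 (z 0 - 1)
    (fun z' _ hz' => by
      have h0 : z' 0 = z 0 - 1 ∨ z' 0 = z 0 := pin_half (by simpa [hxdef] using hz' 0)
      have h1 : z' 1 = z 1 := pin_int (by simpa [hxdef] using hz' 1)
      rcases h0 with h0 | h0
      · right; omega
      · left
        have : z' = ![z 0, z 1] := pt_ext h0 h1
        rw [this]; exact (pt_ext rfl rfl : z = ![z 0, z 1]) ▸ rfl)
    (by
      simp only [hxdef, Matrix.cons_val_zero, Matrix.cons_val_one, Matrix.head_cons]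
      push_cast
      intro hcon
      linarith)
  rcases hgG with rfl
  exact hgS

lemma sw_mem_rev {S : Set Pt} {z : Pt} (h : swZ z ∈ swZ '' S) : z ∈ S := by
  obtain ⟨u, hu, hequ⟩ := h
  have : u = z := by rw [← swZ_inv u, hequ, swZ_inv]
  rwa [← this]
lemma n0_mem_rev {S : Set Pt} {z : Pt} (h : n0Z z ∈ n0Z '' S) : z ∈ S := by
  obtain ⟨u, hu, hequ⟩ := h
  have : u = z := by rw [← n0Z_inv u, hequ, n0Z_inv]
  rwa [← this]
lemma n1_mem_rev {S : Set Pt} {z : Pt} (h : n1Z z ∈ n1Z '' S) : z ∈ S := by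
  obtain ⟨u, hu, hequ⟩ := h
  have : u = z := by rw [← n1Z_inv u, hequ, n1Z_inv]
  rwa [← this]

lemma stepA {S : Set Pt} (hS : IsIntegrallyConvexSet S) {z y : Pt}
    (hstar : Star S z) (hy : y ∈ S)
    (h0 : 1 ≤ z 0 - y 0) (h1 : 1 ≤ z 1 - y 1) :
    ∃ y' ∈ S, meas z y' < meas z y := by
  obtain ⟨w, hw, hwle⟩ := hstar 1 1 (Or.inr (Or.inr rfl)) (Or.inr (Or.inr rfl))
  obtain ⟨x, hxmem, hnbd, hfun⟩ := seg_facts y w hy hw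
  rcases lt_trichotomy (w 0) (y 0) with hA | hA | hA
  · -- A < 0, hence B ≥ 3
    obtain ⟨g, hgG, hgS, _⟩ := exists_good hS hxmem {![y 0, y 1 + 1]} 1 1 (y 0 + y 1)
      (fun z' hzS hzN => by
        rcases hnbd z' hzN 0 with e0 | ⟨e0, hlt⟩ | ⟨e0, hlt⟩ <;>
          rcases hnbd z' hzN 1 with e1 | ⟨e1, hlt1⟩ | ⟨e1, hlt1⟩ <;>
          first
            | (left; exact Set.mem_singleton_iff.mpr (pt_ext e0 e1))
            | (right; omega)
            | omega)
      (by intro hcon; exact hfun 1 1 (by omega) (by push_cast at hcon ⊢; linarith))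
    rcases hgG with rfl
    refine ⟨_, hgS, ?_⟩
    have e0 : (![y 0, y 1 + 1] : Pt) 0 = y 0 := rfl
    have e1 : (![y 0, y 1 + 1] : Pt) 1 = y 1 + 1 := rfl
    unfold meas; rw [e0, e1]; split_ifs <;> omega
  · -- A = 0, hence B ≥ 2
    obtain ⟨g, hgG, hgS, _⟩ := exists_good hS hxmem {![y 0, y 1 + 1]} 0 1 (y 1)
      (fun z' hzS hzN => by
        rcases hnbd z' hzN 0 with e0 | ⟨e0, hlt⟩ | ⟨e0, hlt⟩ <;>
          rcases hnbd z' hzN 1 with e1 | ⟨e1, hlt1⟩ | ⟨e1, hlt1⟩ <;>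
          first
            | (left; exact Set.mem_singleton_iff.mpr (pt_ext e0 e1))
            | (right; omega)
            | omega)
      (by intro hcon; exact hfun 0 1 (by omega) (by push_cast at hcon ⊢; linarith))
    rcases hgG with rfl
    refine ⟨_, hgS, ?_⟩
    have e0 : (![y 0, y 1 + 1] : Pt) 0 = y 0 := rfl
    have e1 : (![y 0, y 1 + 1] : Pt) 1 = y 1 + 1 := rfl
    unfold meas; rw [e0, e1]; split_ifs <;> omega
  · rcases lt_trichotomy (w 1) (y 1) with hB | hB | hB
    · -- B < 0, hence A ≥ 3
      obtain ⟨g, hgG, hgS, _⟩ := exists_good hS hxmem {![y 0 + 1, y 1]} 1 1 (y 0 + y 1)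
        (fun z' hzS hzN => by
          rcases hnbd z' hzN 0 with e0 | ⟨e0, hlt⟩ | ⟨e0, hlt⟩ <;>
            rcases hnbd z' hzN 1 with e1 | ⟨e1, hlt1⟩ | ⟨e1, hlt1⟩ <;>
            first
              | (left; exact Set.mem_singleton_iff.mpr (pt_ext e0 e1))
              | (right; omega)
              | omega)
        (by intro hcon; exact hfun 1 1 (by omega) (by push_cast at hcon ⊢; linarith))
      rcases hgG with rfl
      refine ⟨_, hgS, ?_⟩
      have e0 : (![y 0 + 1, y 1] : Pt) 0 = y 0 + 1 := rfl
      have e1 : (![y 0 + 1, y 1] : Pt) 1 = y 1 := rfl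
      unfold meas; rw [e0, e1]; split_ifs <;> omega
    · -- B = 0, hence A ≥ 2
      obtain ⟨g, hgG, hgS, _⟩ := exists_good hS hxmem {![y 0 + 1, y 1]} 1 0 (y 0)
        (fun z' hzS hzN => by
          rcases hnbd z' hzN 0 with e0 | ⟨e0, hlt⟩ | ⟨e0, hlt⟩ <;>
            rcases hnbd z' hzN 1 with e1 | ⟨e1, hlt1⟩ | ⟨e1, hlt1⟩ <;>
            first
              | (left; exact Set.mem_singleton_iff.mpr (pt_ext e0 e1))
              | (right; omega)
              | omega)
        (by intro hcon; exact hfun 1 0 (by omega) (by push_cast at hcon ⊢; linarith))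
      rcases hgG with rfl
      refine ⟨_, hgS, ?_⟩
      have e0 : (![y 0 + 1, y 1] : Pt) 0 = y 0 + 1 := rfl
      have e1 : (![y 0 + 1, y 1] : Pt) 1 = y 1 := rfl
      unfold meas; rw [e0, e1]; split_ifs <;> omega
    · -- A > 0, B > 0
      obtain ⟨g, hgG, hgS, _⟩ := exists_good hS hxmem
        {![y 0 + 1, y 1], ![y 0, y 1 + 1], ![y 0 + 1, y 1 + 1]} 1 1 (y 0 + y 1)
        (fun z' hzS hzN => by
          rcases hnbd z' hzN 0 with e0 | ⟨e0, hlt⟩ | ⟨e0, hlt⟩ <;>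
            rcases hnbd z' hzN 1 with e1 | ⟨e1, hlt1⟩ | ⟨e1, hlt1⟩ <;>
            first
              | (left; simp only [Set.mem_insert_iff, Set.mem_singleton_iff];
                  first
                    | exact Or.inl (pt_ext e0 e1)
                    | exact Or.inr (Or.inl (pt_ext e0 e1))
                    | exact Or.inr (Or.inr (pt_ext e0 e1)))
              | (right; omega)
              | omega)
        (by intro hcon; exact hfun 1 1 (by omega) (by push_cast at hcon ⊢; linarith))
      simp only [Set.mem_insert_iff, Set.mem_singleton_iff] at hgG
      rcases hgG with rfl | rfl | rfl <;> refine ⟨_, hgS, ?_⟩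
      · have e0 : (![y 0 + 1, y 1] : Pt) 0 = y 0 + 1 := rfl
        have e1 : (![y 0 + 1, y 1] : Pt) 1 = y 1 := rfl
        unfold meas; rw [e0, e1]; split_ifs <;> omega
      · have e0 : (![y 0, y 1 + 1] : Pt) 0 = y 0 := rfl
        have e1 : (![y 0, y 1 + 1] : Pt) 1 = y 1 + 1 := rfl
        unfold meas; rw [e0, e1]; split_ifs <;> omega
      · have e0 : (![y 0 + 1, y 1 + 1] : Pt) 0 = y 0 + 1 := rfl
        have e1 : (![y 0 + 1, y 1 + 1] : Pt) 1 = y 1 + 1 := rfl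
        unfold meas; rw [e0, e1]; split_ifs <;> omega

lemma stepB {S : Set Pt} (hS : IsIntegrallyConvexSet S) {z y : Pt}
    (hstar : Star S z) (hy : y ∈ S)
    (h0 : 2 ≤ z 0 - y 0) (h1 : z 1 = y 1) :
    ∃ y' ∈ S, meas z y' < meas z y := by
  obtain ⟨w, hw, hwle⟩ := hstar 1 0 (Or.inr (Or.inr rfl)) (Or.inr (Or.inl rfl))
  obtain ⟨x, hxmem, hnbd, hfun⟩ := seg_facts y w hy hw
  obtain ⟨g, hgG, hgS, _⟩ := exists_good hS hxmem
    {![y 0 + 1, y 1], ![y 0 + 1, y 1 + 1], ![y 0 + 1, y 1 - 1]} 1 0 (y 0)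
    (fun z' hzS hzN => by
      rcases hnbd z' hzN 0 with e0 | ⟨e0, hlt⟩ | ⟨e0, hlt⟩ <;>
        rcases hnbd z' hzN 1 with e1 | ⟨e1, hlt1⟩ | ⟨e1, hlt1⟩ <;>
        first
          | (left; simp only [Set.mem_insert_iff, Set.mem_singleton_iff];
              first
                | exact Or.inl (pt_ext e0 e1)
                | exact Or.inr (Or.inl (pt_ext e0 e1))
                | exact Or.inr (Or.inr (pt_ext e0 e1)))
          | (right; omega)
          | omega)
    (by intro hcon; exact hfun 1 0 (by omega) (by push_cast at hcon ⊢; linarith))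
  simp only [Set.mem_insert_iff, Set.mem_singleton_iff] at hgG
  rcases hgG with rfl | rfl | rfl <;> refine ⟨_, hgS, ?_⟩
  · have e0 : (![y 0 + 1, y 1] : Pt) 0 = y 0 + 1 := rfl
    have e1 : (![y 0 + 1, y 1] : Pt) 1 = y 1 := rfl
    unfold meas; rw [e0, e1]; split_ifs <;> omega
  · have e0 : (![y 0 + 1, y 1 + 1] : Pt) 0 = y 0 + 1 := rfl
    have e1 : (![y 0 + 1, y 1 + 1] : Pt) 1 = y 1 + 1 := rfl
    unfold meas; rw [e0, e1]; split_ifs <;> omega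
  · have e0 : (![y 0 + 1, y 1 - 1] : Pt) 0 = y 0 + 1 := rfl
    have e1 : (![y 0 + 1, y 1 - 1] : Pt) 1 = y 1 - 1 := rfl
    unfold meas; rw [e0, e1]; split_ifs <;> omega

lemma stepC2 {S : Set Pt} (hS : IsIntegrallyConvexSet S) {z y s : Pt}
    (hstar : Star S z) (hy : y ∈ S) (hs : s ∈ S)
    (hs0 : s 0 = y 0 + 1) (hs1 : s 1 = y 1 + 1)
    (hz0 : z 0 = y 0 + 1) (hz1 : z 1 = y 1) : z ∈ S := by
  have hzeq : z = ![y 0 + 1, y 1] := pt_ext hz0 hz1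
  obtain ⟨w, hw, hwle⟩ := hstar 1 (-1) (Or.inr (Or.inr rfl)) (Or.inl rfl)
  obtain ⟨x, hxmem, hnbd, hfun⟩ := seg_facts y w hy hw
  -- in every case, either z ∈ S directly, or y+(0,-1) ∈ S (then trick1 with s),
  -- or y+(1,-1) ∈ S (then trick2 with s)
  have finish1 : (![y 0, y 1 - 1] : Pt) ∈ S → z ∈ S := fun hb =>
    trick1 hS hs hb (by omega) (by omega) (by show y 0 = z 0 - 1; omega)
      (by show y 1 - 1 = z 1 - 1; omega)
  have finish2 : (![y 0 + 1, y 1 - 1] : Pt) ∈ S → z ∈ S := fun hb =>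
    trick2 hS hs hb (by omega) (by omega) (by show y 0 + 1 = z 0; omega)
      (by show y 1 - 1 = z 1 - 1; omega)
  rcases lt_trichotomy (w 0) (y 0) with hC | hC | hC
  · -- C < 0, D ≤ C - 1
    obtain ⟨g, hgG, hgS, _⟩ := exists_good hS hxmem {![y 0, y 1 - 1]} 1 (-1) (y 0 - y 1)
      (fun z' hzS hzN => by
        rcases hnbd z' hzN 0 with e0 | ⟨e0, hlt⟩ | ⟨e0, hlt⟩ <;>
          rcases hnbd z' hzN 1 with e1 | ⟨e1, hlt1⟩ | ⟨e1, hlt1⟩ <;>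
          first
            | (left; exact Set.mem_singleton_iff.mpr (pt_ext e0 e1))
            | (right; omega)
            | omega)
      (by intro hcon; exact hfun 1 (-1) (by omega) (by push_cast at hcon ⊢; linarith))
    rcases hgG with rfl
    exact finish1 hgS
  · -- C = 0, D ≤ -1
    obtain ⟨g, hgG, hgS, _⟩ := exists_good hS hxmem {![y 0, y 1 - 1]} 0 (-1) (-(y 1))
      (fun z' hzS hzN => by
        rcases hnbd z' hzN 0 with e0 | ⟨e0, hlt⟩ | ⟨e0, hlt⟩ <;>
          rcases hnbd z' hzN 1 with e1 | ⟨e1, hlt1⟩ | ⟨e1, hlt1⟩ <;>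
          first
            | (left; exact Set.mem_singleton_iff.mpr (pt_ext e0 e1))
            | (right; omega)
            | omega)
      (by intro hcon; exact hfun 0 (-1) (by omega) (by push_cast at hcon ⊢; linarith))
    rcases hgG with rfl
    exact finish1 hgS
  · rcases lt_trichotomy (w 1) (y 1) with hD | hD | hD
    · -- C > 0, D < 0
      obtain ⟨g, hgG, hgS, _⟩ := exists_good hS hxmem
        {![y 0 + 1, y 1], ![y 0, y 1 - 1], ![y 0 + 1, y 1 - 1]} 1 (-1) (y 0 - y 1)
        (fun z' hzS hzN => by
          rcases hnbd z' hzN 0 with e0 | ⟨e0, hlt⟩ | ⟨e0, hlt⟩ <;>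
            rcases hnbd z' hzN 1 with e1 | ⟨e1, hlt1⟩ | ⟨e1, hlt1⟩ <;>
            first
              | (left; simp only [Set.mem_insert_iff, Set.mem_singleton_iff];
                  first
                    | exact Or.inl (pt_ext e0 e1)
                    | exact Or.inr (Or.inl (pt_ext e0 e1))
                    | exact Or.inr (Or.inr (pt_ext e0 e1)))
              | (right; omega)
              | omega)
        (by intro hcon; exact hfun 1 (-1) (by omega) (by push_cast at hcon ⊢; linarith))
      simp only [Set.mem_insert_iff, Set.mem_singleton_iff] at hgG
      rcases hgG with rfl | rfl | rfl
      · rwa [hzeq]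
      · exact finish1 hgS
      · exact finish2 hgS
    · -- C > 0, D = 0
      obtain ⟨g, hgG, hgS, _⟩ := exists_good hS hxmem {![y 0 + 1, y 1]} 1 0 (y 0)
        (fun z' hzS hzN => by
          rcases hnbd z' hzN 0 with e0 | ⟨e0, hlt⟩ | ⟨e0, hlt⟩ <;>
            rcases hnbd z' hzN 1 with e1 | ⟨e1, hlt1⟩ | ⟨e1, hlt1⟩ <;>
            first
              | (left; exact Set.mem_singleton_iff.mpr (pt_ext e0 e1))
              | (right; omega)
              | omega)
        (by intro hcon; exact hfun 1 0 (by omega) (by push_cast at hcon ⊢; linarith))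
      rcases hgG with rfl
      rwa [hzeq]
    · -- C > 0, D > 0 : C - D ≥ 1 forces C ≥ 2; only y+(1,0) has value > c
      obtain ⟨g, hgG, hgS, _⟩ := exists_good hS hxmem {![y 0 + 1, y 1]} 1 (-1) (y 0 - y 1)
        (fun z' hzS hzN => by
          rcases hnbd z' hzN 0 with e0 | ⟨e0, hlt⟩ | ⟨e0, hlt⟩ <;>
            rcases hnbd z' hzN 1 with e1 | ⟨e1, hlt1⟩ | ⟨e1, hlt1⟩ <;>
            first
              | (left; exact Set.mem_singleton_iff.mpr (pt_ext e0 e1))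
              | (right; omega)
              | omega)
        (by intro hcon; exact hfun 1 (-1) (by omega) (by push_cast at hcon ⊢; linarith))
      rcases hgG with rfl
      rwa [hzeq]

lemma stepC {S : Set Pt} (hS : IsIntegrallyConvexSet S) {z y : Pt}
    (hstar : Star S z) (hy : y ∈ S)
    (hz0 : z 0 = y 0 + 1) (hz1 : z 1 = y 1) : z ∈ S := by
  have hzeq : z = ![y 0 + 1, y 1] := pt_ext hz0 hz1
  obtain ⟨w, hw, hwle⟩ := hstar 1 0 (Or.inr (Or.inr rfl)) (Or.inr (Or.inl rfl))
  obtain ⟨x, hxmem, hnbd, hfun⟩ := seg_facts y w hy hw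
  obtain ⟨g, hgG, hgS, _⟩ := exists_good hS hxmem
    {![y 0 + 1, y 1], ![y 0 + 1, y 1 + 1], ![y 0 + 1, y 1 - 1]} 1 0 (y 0)
    (fun z' hzS hzN => by
      rcases hnbd z' hzN 0 with e0 | ⟨e0, hlt⟩ | ⟨e0, hlt⟩ <;>
        rcases hnbd z' hzN 1 with e1 | ⟨e1, hlt1⟩ | ⟨e1, hlt1⟩ <;>
        first
          | (left; simp only [Set.mem_insert_iff, Set.mem_singleton_iff];
              first
                | exact Or.inl (pt_ext e0 e1)
                | exact Or.inr (Or.inl (pt_ext e0 e1))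
                | exact Or.inr (Or.inr (pt_ext e0 e1)))
          | (right; omega)
          | omega)
    (by intro hcon; exact hfun 1 0 (by omega) (by push_cast at hcon ⊢; linarith))
  simp only [Set.mem_insert_iff, Set.mem_singleton_iff] at hgG
  rcases hgG with rfl | rfl | rfl
  · rwa [hzeq]
  · -- y + (1,1) ∈ S : apply stepC2 directly
    exact stepC2 hS hstar hy hgS rfl rfl hz0 hz1
  · -- y + (1,-1) ∈ S : apply stepC2 to the n1-reflected instance
    apply n1_mem_rev (S := S)
    have hys : n1Z (![y 0 + 1, y 1 - 1] : Pt) ∈ n1Z '' S := Set.mem_image_of_mem _ hgS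
    refine stepC2 (IC_n1 hS) (Star_n1 hstar) (Set.mem_image_of_mem _ hy) hys ?_ ?_ ?_ ?_
    · show -- coordinate computations
        (n1Z (![y 0 + 1, y 1 - 1] : Pt)) 0 = (n1Z y) 0 + 1
      simp [n1Z]
    · show (n1Z (![y 0 + 1, y 1 - 1] : Pt)) 1 = (n1Z y) 1 + 1
      simp [n1Z]; omega
    · show (n1Z z) 0 = (n1Z y) 0 + 1
      simp [n1Z, hz0]
    · show (n1Z z) 1 = (n1Z y) 1
      simp [n1Z, hz1]

lemma main_mem {S : Set Pt} (hS : IsIntegrallyConvexSet S) {z : Pt} (hstar : Star S z)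
    {y : Pt} (hy : y ∈ S) : z ∈ S := by
  obtain ⟨n, hn⟩ : ∃ n, meas z y ≤ n := ⟨_, le_refl _⟩
  induction n generalizing y with
  | zero => exfalso; unfold meas at hn; split_ifs at hn <;> omega
  | succ n ih =>
    have recurse : ∀ y', y' ∈ S → meas z y' < meas z y → z ∈ S := fun y' hy' hlt =>
      ih hy' (by omega)
    by_cases hzy : z 0 = y 0 ∧ z 1 = y 1
    · have hz : z = ![y 0, y 1] := pt_ext hzy.1 hzy.2
      have hyy : y = ![y 0, y 1] := pt_ext rfl rfl
      rw [hz, ← hyy]; exact hy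
    rcases lt_trichotomy (z 0) (y 0) with h0 | h0 | h0 <;>
      rcases lt_trichotomy (z 1) (y 1) with h1 | h1 | h1
    · -- z0 < y0, z1 < y1 : negate both coordinates
      obtain ⟨y'', hy''S, hlt⟩ := stepA (IC_n1 (IC_n0 hS)) (Star_n1 (Star_n0 hstar))
        (Set.mem_image_of_mem _ (Set.mem_image_of_mem _ hy))
        (by simp [n1Z, n0Z]; omega) (by simp [n1Z, n0Z]; omega)
      obtain ⟨v, hv, rfl⟩ := hy''S
      obtain ⟨y', hy', rfl⟩ := hv
      rw [meas_n1, meas_n1, meas_n0, meas_n0] at hlt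
      exact recurse y' hy' hlt
    · -- z0 < y0, z1 = y1 : negate first coordinate
      rcases (by omega : y 0 - z 0 = 1 ∨ 2 ≤ y 0 - z 0) with hc | hc
      · refine n0_mem_rev (stepC (IC_n0 hS) (Star_n0 hstar) (Set.mem_image_of_mem _ hy)
          ?_ ?_)
        · show (n0Z z) 0 = (n0Z y) 0 + 1; simp [n0Z]; omega
        · show (n0Z z) 1 = (n0Z y) 1; simp [n0Z]; omega
      · obtain ⟨y'', hy''S, hlt⟩ := stepB (IC_n0 hS) (Star_n0 hstar)
          (Set.mem_image_of_mem _ hy) (by simp [n0Z]; omega) (by simp [n0Z]; omega)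
        obtain ⟨y', hy', rfl⟩ := hy''S
        rw [meas_n0, meas_n0] at hlt
        exact recurse y' hy' hlt
    · -- z0 < y0, z1 > y1
      obtain ⟨y'', hy''S, hlt⟩ := stepA (IC_n0 hS) (Star_n0 hstar)
        (Set.mem_image_of_mem _ hy) (by simp [n0Z]; omega) (by simp [n0Z]; omega)
      obtain ⟨y', hy', rfl⟩ := hy''S
      rw [meas_n0, meas_n0] at hlt
      exact recurse y' hy' hlt
    · -- z0 = y0, z1 < y1 : negate second, then swap
      rcases (by omega : y 1 - z 1 = 1 ∨ 2 ≤ y 1 - z 1) with hc | hc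
      · refine n1_mem_rev (sw_mem_rev (S := n1Z '' S) ?_)
        refine stepC (IC_sw (IC_n1 hS)) (Star_sw (Star_n1 hstar))
          (Set.mem_image_of_mem _ (Set.mem_image_of_mem _ hy)) ?_ ?_
        · show (swZ (n1Z z)) 0 = (swZ (n1Z y)) 0 + 1; simp [swZ, n1Z]; omega
        · show (swZ (n1Z z)) 1 = (swZ (n1Z y)) 1; simp [swZ, n1Z]; omega
      · obtain ⟨y'', hy''S, hlt⟩ := stepB (IC_sw (IC_n1 hS)) (Star_sw (Star_n1 hstar))
          (Set.mem_image_of_mem _ (Set.mem_image_of_mem _ hy))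
          (by simp [swZ, n1Z]; omega) (by simp [swZ, n1Z]; omega)
        obtain ⟨v, hv, rfl⟩ := hy''S
        obtain ⟨y', hy', rfl⟩ := hv
        rw [meas_sw, meas_sw, meas_n1, meas_n1] at hlt
        exact recurse y' hy' hlt
    · exact absurd ⟨h0, h1⟩ hzy
    · -- z0 = y0, z1 > y1 : swap
      rcases (by omega : z 1 - y 1 = 1 ∨ 2 ≤ z 1 - y 1) with hc | hc
      · refine sw_mem_rev (S := S) ?_
        refine stepC (IC_sw hS) (Star_sw hstar) (Set.mem_image_of_mem _ hy) ?_ ?_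
        · show (swZ z) 0 = (swZ y) 0 + 1; simp [swZ]; omega
        · show (swZ z) 1 = (swZ y) 1; simp [swZ]; omega
      · obtain ⟨y'', hy''S, hlt⟩ := stepB (IC_sw hS) (Star_sw hstar)
          (Set.mem_image_of_mem _ hy) (by simp [swZ]; omega) (by simp [swZ]; omega)
        obtain ⟨y', hy', rfl⟩ := hy''S
        rw [meas_sw, meas_sw] at hlt
        exact recurse y' hy' hlt
    · -- z0 > y0, z1 < y1 : negate second
      obtain ⟨y'', hy''S, hlt⟩ := stepA (IC_n1 hS) (Star_n1 hstar)
        (Set.mem_image_of_mem _ hy) (by simp [n1Z]; omega) (by simp [n1Z]; omega)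
      obtain ⟨y', hy', rfl⟩ := hy''S
      rw [meas_n1, meas_n1] at hlt
      exact recurse y' hy' hlt
    · -- z0 > y0, z1 = y1
      rcases (by omega : z 0 - y 0 = 1 ∨ 2 ≤ z 0 - y 0) with hc | hc
      · exact stepC hS hstar hy (by omega) (by omega)
      · obtain ⟨y', hy', hlt⟩ := stepB hS hstar hy (by omega) (by omega)
        exact recurse y' hy' hlt
    · -- z0 > y0, z1 > y1
      obtain ⟨y', hy', hlt⟩ := stepA hS hstar hy (by omega) (by omega)
      exact recurse y' hy' hlt

def dirs : Fin 8 → ℤ × ℤ := ![(1,0),(-1,0),(0,1),(0,-1),(1,1),(1,-1),(-1,1),(-1,-1)]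

lemma dirs_ok : ∀ i : Fin 8, ((dirs i).1 = -1 ∨ (dirs i).1 = 0 ∨ (dirs i).1 = 1) ∧
    ((dirs i).2 = -1 ∨ (dirs i).2 = 0 ∨ (dirs i).2 = 1) := by decide

lemma forward {S : Set Pt} (hS : IsIntegrallyConvexSet S) :
    ∃ (m : ℕ) (p q r : Fin m → ℤ),
      (∀ i, p i = -1 ∨ p i = 0 ∨ p i = 1) ∧
      (∀ i, q i = -1 ∨ q i = 0 ∨ q i = 1) ∧
      S = {x : Pt | ∀ i, p i * x 0 + q i * x 1 ≤ r i} := by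
  rcases Set.eq_empty_or_nonempty S with hemp | ⟨y₀, hy₀⟩
  · refine ⟨2, ![1, -1], ![0, 0], ![-1, -1], ?_, ?_, ?_⟩
    · intro i; fin_cases i <;> simp
    · intro i; fin_cases i <;> simp
    · rw [hemp]; ext x
      simp only [Set.mem_empty_iff_false, Set.mem_setOf_eq, false_iff]
      push_neg
      by_cases hx : x 0 ≤ -1
      · refine ⟨1, ?_⟩
        simp only [Matrix.cons_val_one, Matrix.head_cons, Matrix.cons_val_zero]
        omega
      · refine ⟨0, ?_⟩
        simp only [Matrix.cons_val_zero]
        omega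
  · have key : ∀ d0 d1 : ℤ, ∃ c : ℤ × ℤ × ℤ,
        ((d0 = -1 ∨ d0 = 0 ∨ d0 = 1) → (d1 = -1 ∨ d1 = 0 ∨ d1 = 1) →
          ((c.1 = -1 ∨ c.1 = 0 ∨ c.1 = 1) ∧ (c.2.1 = -1 ∨ c.2.1 = 0 ∨ c.2.1 = 1) ∧
           (∀ ζ, ζ ∈ S → c.1 * ζ 0 + c.2.1 * ζ 1 ≤ c.2.2) ∧
           (∀ z : Pt, c.1 * z 0 + c.2.1 * z 1 ≤ c.2.2 →
              ∃ w ∈ S, d0 * z 0 + d1 * z 1 ≤ d0 * w 0 + d1 * w 1))) := by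
      intro d0 d1
      by_cases hbdd : ∃ b : ℤ, ∀ v : ℤ, (∃ w ∈ S, v = d0 * w 0 + d1 * w 1) → v ≤ b
      · obtain ⟨r₀, ⟨w₀, hw₀, hw₀v⟩, hub⟩ := Int.exists_greatest_of_bdd hbdd
          ⟨d0 * y₀ 0 + d1 * y₀ 1, y₀, hy₀, rfl⟩
        refine ⟨(d0, d1, r₀), fun h0 h1 => ⟨h0, h1, ?_, ?_⟩⟩
        · intro ζ hζ
          exact hub _ ⟨ζ, hζ, rfl⟩
        · intro z hz
          refine ⟨w₀, hw₀, ?_⟩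
          simp only at hz
          omega
      · push_neg at hbdd
        refine ⟨(0, 0, 0), fun h0 h1 =>
          ⟨Or.inr (Or.inl rfl), Or.inr (Or.inl rfl), by simp, ?_⟩⟩
        intro z _
        obtain ⟨v, ⟨w, hw, rfl⟩, hv⟩ := hbdd (d0 * z 0 + d1 * z 1)
        exact ⟨w, hw, le_of_lt hv⟩
    choose c hc using key
    refine ⟨8, fun i => (c (dirs i).1 (dirs i).2).1, fun i => (c (dirs i).1 (dirs i).2).2.1,
      fun i => (c (dirs i).1 (dirs i).2).2.2, ?_, ?_, ?_⟩
    · exact fun i => (hc _ _ (dirs_ok i).1 (dirs_ok i).2).1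
    · exact fun i => (hc _ _ (dirs_ok i).1 (dirs_ok i).2).2.1
    · ext z
      simp only [Set.mem_setOf_eq]
      constructor
      · intro hz i
        exact (hc _ _ (dirs_ok i).1 (dirs_ok i).2).2.2.1 z hz
      · intro hz
        have hstar : Star S z := by
          intro d0 d1 h0 h1
          have pick : ∀ i : Fin 8, ∃ w ∈ S,
              (dirs i).1 * z 0 + (dirs i).2 * z 1 ≤ (dirs i).1 * w 0 + (dirs i).2 * w 1 :=
            fun i => (hc _ _ (dirs_ok i).1 (dirs_ok i).2).2.2.2 z (hz i)
          rcases h0 with rfl | rfl | rfl <;> rcases h1 with rfl | rfl | rfl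
          · obtain ⟨w, hw, hle⟩ := pick 7
            have hd1 : (dirs 7).1 = -1 := rfl
            have hd2 : (dirs 7).2 = -1 := rfl
            rw [hd1, hd2] at hle
            exact ⟨w, hw, by omega⟩
          · obtain ⟨w, hw, hle⟩ := pick 1
            have hd1 : (dirs 1).1 = -1 := rfl
            have hd2 : (dirs 1).2 = 0 := rfl
            rw [hd1, hd2] at hle
            exact ⟨w, hw, by omega⟩
          · obtain ⟨w, hw, hle⟩ := pick 6
            have hd1 : (dirs 6).1 = -1 := rfl
            have hd2 : (dirs 6).2 = 1 := rfl
            rw [hd1, hd2] at hle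
            exact ⟨w, hw, by omega⟩
          · obtain ⟨w, hw, hle⟩ := pick 3
            have hd1 : (dirs 3).1 = 0 := rfl
            have hd2 : (dirs 3).2 = -1 := rfl
            rw [hd1, hd2] at hle
            exact ⟨w, hw, by omega⟩
          · exact ⟨y₀, hy₀, by simp⟩
          · obtain ⟨w, hw, hle⟩ := pick 2
            have hd1 : (dirs 2).1 = 0 := rfl
            have hd2 : (dirs 2).2 = 1 := rfl
            rw [hd1, hd2] at hle
            exact ⟨w, hw, by omega⟩
          · obtain ⟨w, hw, hle⟩ := pick 5
            have hd1 : (dirs 5).1 = 1 := rfl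
            have hd2 : (dirs 5).2 = -1 := rfl
            rw [hd1, hd2] at hle
            exact ⟨w, hw, by omega⟩
          · obtain ⟨w, hw, hle⟩ := pick 0
            have hd1 : (dirs 0).1 = 1 := rfl
            have hd2 : (dirs 0).2 = 0 := rfl
            rw [hd1, hd2] at hle
            exact ⟨w, hw, by omega⟩
          · obtain ⟨w, hw, hle⟩ := pick 4
            have hd1 : (dirs 4).1 = 1 := rfl
            have hd2 : (dirs 4).2 = 1 := rfl
            rw [hd1, hd2] at hle
            exact ⟨w, hw, by omega⟩
        exact main_mem hS hstar hy₀

lemma backward {m : ℕ} (p q r : Fin m → ℤ)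
    (hp : ∀ i, p i = -1 ∨ p i = 0 ∨ p i = 1)
    (hq : ∀ i, q i = -1 ∨ q i = 0 ∨ q i = 1) :
    IsIntegrallyConvexSet {x : Pt | ∀ i, p i * x 0 + q i * x 1 ≤ r i} := by
  set S : Set Pt := {x : Pt | ∀ i, p i * x 0 + q i * x 1 ≤ r i} with hSdef
  intro x hx
  have hCx : ∀ i, (p i : ℝ) * x 0 + (q i : ℝ) * x 1 ≤ (r i : ℝ) := by
    intro i
    refine hull_halfspace (fun v hv => ?_) hx
    obtain ⟨ζ, hζ, rfl⟩ := hv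
    have h1 : p i * ζ 0 + q i * ζ 1 ≤ r i := hζ i
    have h2 : ((p i * ζ 0 + q i * ζ 1 : ℤ) : ℝ) ≤ (r i : ℝ) := by exact_mod_cast h1
    push_cast at h2
    simpa [realify] using h2
  set a : ℤ := ⌊x 0⌋ with hadef
  set b : ℤ := ⌊x 1⌋ with hbdef
  have ha1 : (a : ℝ) ≤ x 0 := Int.floor_le _
  have ha2 : x 0 < (a : ℝ) + 1 := by exact_mod_cast Int.lt_floor_add_one (x 0)
  have hb1 : (b : ℝ) ≤ x 1 := Int.floor_le _
  have hb2 : x 1 < (b : ℝ) + 1 := by exact_mod_cast Int.lt_floor_add_one (x 1)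
  by_cases e0 : x 0 = (a : ℝ) <;> by_cases e1 : x 1 = (b : ℝ)
  · -- both integral
    have hzS : (![a, b] : Pt) ∈ S := by
      intro i
      show p i * (![a, b] : Pt) 0 + q i * (![a, b] : Pt) 1 ≤ r i
      have hco : ((![a, b] : Pt) 0 : ℤ) = a := rfl
      have hco1 : ((![a, b] : Pt) 1 : ℤ) = b := rfl
      rw [hco, hco1]
      have := hCx i
      rw [e0, e1] at this
      exact_mod_cast this
    have hzN : (![a, b] : Pt) ∈ intNbhd x := by
      intro i; fin_cases i
      · show |x 0 - ((![a, b] : Pt) 0 : ℝ)| < 1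
        rw [show (((![a, b] : Pt) 0 : ℤ) : ℝ) = (a : ℝ) from rfl, e0]
        simp
      · show |x 1 - ((![a, b] : Pt) 1 : ℝ)| < 1
        rw [show (((![a, b] : Pt) 1 : ℤ) : ℝ) = (b : ℝ) from rfl, e1]
        simp
    have hxeq : x = realify ![a, b] := by
      funext j; fin_cases j
      · show x 0 = (((![a, b] : Pt) 0 : ℤ) : ℝ); rw [e0]; rfl
      · show x 1 = (((![a, b] : Pt) 1 : ℤ) : ℝ); rw [e1]; rfl
    exact subset_convexHull ℝ _ ⟨![a, b], ⟨hzS, hzN⟩, hxeq.symm⟩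
  · -- x 0 integral, x 1 not
    have hb1s : (b : ℝ) < x 1 := lt_of_le_of_ne hb1 (fun hh => e1 hh.symm)
    have haux : ∀ i, p i * a + q i * b ≤ r i ∧ p i * a + q i * (b + 1) ≤ r i := by
      intro i
      have hc := hCx i
      rw [e0] at hc
      rcases hq i with h2 | h2 | h2
      · have hcr : (p i : ℝ) * (a : ℝ) - x 1 ≤ (r i : ℝ) := by
          rw [h2] at hc; push_cast at hc; linarith
        have hir : ((p i * a - (b + 1) : ℤ) : ℝ) < (r i : ℝ) := by push_cast; linarith
        have hint : p i * a - (b + 1) < r i := by exact_mod_cast hir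
        constructor <;> rw [h2] <;> linarith
      · have hcr : (p i : ℝ) * (a : ℝ) ≤ (r i : ℝ) := by
          rw [h2] at hc; push_cast at hc; linarith
        have hint : p i * a ≤ r i := by exact_mod_cast (by push_cast; linarith : ((p i * a : ℤ) : ℝ) ≤ (r i : ℝ))
        constructor <;> rw [h2] <;> linarith
      · have hcr : (p i : ℝ) * (a : ℝ) + x 1 ≤ (r i : ℝ) := by
          rw [h2] at hc; push_cast at hc; linarith
        have hir : ((p i * a + b : ℤ) : ℝ) < (r i : ℝ) := by push_cast; linarith
        have hint : p i * a + b < r i := by exact_mod_cast hir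
        constructor <;> rw [h2] <;> linarith
    have hz1S : (![a, b] : Pt) ∈ S := fun i => by
      show p i * (![a, b] : Pt) 0 + q i * (![a, b] : Pt) 1 ≤ r i
      rw [show ((![a, b] : Pt) 0 : ℤ) = a from rfl, show ((![a, b] : Pt) 1 : ℤ) = b from rfl]
      exact (haux i).1
    have hz2S : (![a, b + 1] : Pt) ∈ S := fun i => by
      show p i * (![a, b + 1] : Pt) 0 + q i * (![a, b + 1] : Pt) 1 ≤ r i
      rw [show ((![a, b + 1] : Pt) 0 : ℤ) = a from rfl,
        show ((![a, b + 1] : Pt) 1 : ℤ) = b + 1 from rfl]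
      exact (haux i).2
    have hz1N : (![a, b] : Pt) ∈ intNbhd x := by
      intro i; fin_cases i
      · show |x 0 - (((![a, b] : Pt) 0 : ℤ) : ℝ)| < 1
        rw [show (((![a, b] : Pt) 0 : ℤ) : ℝ) = (a : ℝ) from rfl, e0]; simp
      · show |x 1 - (((![a, b] : Pt) 1 : ℤ) : ℝ)| < 1
        rw [show (((![a, b] : Pt) 1 : ℤ) : ℝ) = (b : ℝ) from rfl, abs_lt]
        constructor <;> linarith
    have hz2N : (![a, b + 1] : Pt) ∈ intNbhd x := by
      intro i; fin_cases i
      · show |x 0 - (((![a, b + 1] : Pt) 0 : ℤ) : ℝ)| < 1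
        rw [show (((![a, b + 1] : Pt) 0 : ℤ) : ℝ) = (a : ℝ) from rfl, e0]; simp
      · show |x 1 - ((b + 1 : ℤ) : ℝ)| < 1
        push_cast
        rw [abs_lt]
        constructor <;> linarith
    refine combo_mem ![![a, b], ![a, b + 1]] (S ∩ intNbhd x)
      (fun i => by fin_cases i <;> exact ⟨by assumption, by assumption⟩)
      ![1 - (x 1 - (b : ℝ)), x 1 - (b : ℝ)]
      (fun i => by fin_cases i <;> simp <;> linarith) (by simp) (fun j => ?_)
    fin_cases j
    · simp only [Fin.sum_univ_two]
      show x 0 = (1 - (x 1 - (b : ℝ))) * ((a : ℤ) : ℝ) + (x 1 - (b : ℝ)) * ((a : ℤ) : ℝ)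
      rw [e0]; ring
    · simp only [Fin.sum_univ_two]
      show x 1 = (1 - (x 1 - (b : ℝ))) * ((b : ℤ) : ℝ) + (x 1 - (b : ℝ)) * ((b + 1 : ℤ) : ℝ)
      push_cast; ring
  · -- x 1 integral, x 0 not
    have ha1s : (a : ℝ) < x 0 := lt_of_le_of_ne ha1 (fun hh => e0 hh.symm)
    have haux : ∀ i, p i * a + q i * b ≤ r i ∧ p i * (a + 1) + q i * b ≤ r i := by
      intro i
      have hc := hCx i
      rw [e1] at hc
      rcases hp i with h2 | h2 | h2
      · have hcr : -x 0 + (q i : ℝ) * (b : ℝ) ≤ (r i : ℝ) := by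
          rw [h2] at hc; push_cast at hc; linarith
        have hir : ((-(a + 1) + q i * b : ℤ) : ℝ) < (r i : ℝ) := by push_cast; linarith
        have hint : -(a + 1) + q i * b < r i := by exact_mod_cast hir
        constructor <;> rw [h2] <;> linarith
      · have hcr : (q i : ℝ) * (b : ℝ) ≤ (r i : ℝ) := by
          rw [h2] at hc; push_cast at hc; linarith
        have hint : q i * b ≤ r i := by
          exact_mod_cast (by push_cast; linarith : ((q i * b : ℤ) : ℝ) ≤ (r i : ℝ))
        constructor <;> rw [h2] <;> linarith
      · have hcr : x 0 + (q i : ℝ) * (b : ℝ) ≤ (r i : ℝ) := by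
          rw [h2] at hc; push_cast at hc; linarith
        have hir : ((a + q i * b : ℤ) : ℝ) < (r i : ℝ) := by push_cast; linarith
        have hint : a + q i * b < r i := by exact_mod_cast hir
        constructor <;> rw [h2] <;> linarith
    have hz1S : (![a, b] : Pt) ∈ S := fun i => by
      show p i * (![a, b] : Pt) 0 + q i * (![a, b] : Pt) 1 ≤ r i
      rw [show ((![a, b] : Pt) 0 : ℤ) = a from rfl, show ((![a, b] : Pt) 1 : ℤ) = b from rfl]
      exact (haux i).1
    have hz2S : (![a + 1, b] : Pt) ∈ S := fun i => by
      show p i * (![a + 1, b] : Pt) 0 + q i * (![a + 1, b] : Pt) 1 ≤ r i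
      rw [show ((![a + 1, b] : Pt) 0 : ℤ) = a + 1 from rfl,
        show ((![a + 1, b] : Pt) 1 : ℤ) = b from rfl]
      exact (haux i).2
    have hz1N : (![a, b] : Pt) ∈ intNbhd x := by
      intro i; fin_cases i
      · show |x 0 - (((![a, b] : Pt) 0 : ℤ) : ℝ)| < 1
        rw [show (((![a, b] : Pt) 0 : ℤ) : ℝ) = (a : ℝ) from rfl, abs_lt]
        constructor <;> linarith
      · show |x 1 - (((![a, b] : Pt) 1 : ℤ) : ℝ)| < 1
        rw [show (((![a, b] : Pt) 1 : ℤ) : ℝ) = (b : ℝ) from rfl, e1]; simp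
    have hz2N : (![a + 1, b] : Pt) ∈ intNbhd x := by
      intro i; fin_cases i
      · show |x 0 - ((a + 1 : ℤ) : ℝ)| < 1
        push_cast
        rw [abs_lt]
        constructor <;> linarith
      · show |x 1 - (((![a + 1, b] : Pt) 1 : ℤ) : ℝ)| < 1
        rw [show (((![a + 1, b] : Pt) 1 : ℤ) : ℝ) = (b : ℝ) from rfl, e1]; simp
    refine combo_mem ![![a, b], ![a + 1, b]] (S ∩ intNbhd x)
      (fun i => by fin_cases i <;> exact ⟨by assumption, by assumption⟩)
      ![1 - (x 0 - (a : ℝ)), x 0 - (a : ℝ)]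
      (fun i => by fin_cases i <;> simp <;> linarith) (by simp) (fun j => ?_)
    fin_cases j
    · simp only [Fin.sum_univ_two]
      show x 0 = (1 - (x 0 - (a : ℝ))) * ((a : ℤ) : ℝ) + (x 0 - (a : ℝ)) * ((a + 1 : ℤ) : ℝ)
      push_cast; ring
    · simp only [Fin.sum_univ_two]
      show x 1 = (1 - (x 0 - (a : ℝ))) * ((b : ℤ) : ℝ) + (x 0 - (a : ℝ)) * ((b : ℤ) : ℝ)
      rw [e1]; ring
  · -- fully fractional case
    have ha1s : (a : ℝ) < x 0 := lt_of_le_of_ne ha1 (fun hh => e0 hh.symm)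
    have hb1s : (b : ℝ) < x 1 := lt_of_le_of_ne hb1 (fun hh => e1 hh.symm)
    -- (1) exclusion keys
    have key11 : (![a + 1, b + 1] : Pt) ∉ S → ∃ i, p i = 1 ∧ q i = 1 ∧ r i ≤ a + b + 1 := by
      intro hno
      have hex : ∃ i, ¬(p i * (a + 1) + q i * (b + 1) ≤ r i) := by
        by_contra hall; push_neg at hall
        exact hno (fun i => hall i)
      obtain ⟨i, hi⟩ := hex
      push_neg at hi
      have hcr := hCx i
      rcases hp i with h1 | h1 | h1 <;> rcases hq i with h2 | h2 | h2 <;>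
        first
          | (rw [h1, h2] at hi; exact ⟨i, h1, h2, by omega⟩)
          | (exfalso
             have hile : r i + 1 ≤ p i * (a + 1) + q i * (b + 1) := Int.add_one_le_iff.mpr hi
             have hrr : (r i : ℝ) + 1 ≤ (p i : ℝ) * ((a : ℝ) + 1) + (q i : ℝ) * ((b : ℝ) + 1) := by
               exact_mod_cast hile
             rw [h1, h2] at hrr hcr
             push_cast at hrr hcr
             linarith)
    have key00 : (![a, b] : Pt) ∉ S → ∃ i, p i = -1 ∧ q i = -1 ∧ r i ≤ -(a + b) - 1 := by
      intro hno
      have hex : ∃ i, ¬(p i * a + q i * b ≤ r i) := by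
        by_contra hall; push_neg at hall
        exact hno (fun i => hall i)
      obtain ⟨i, hi⟩ := hex
      push_neg at hi
      have hcr := hCx i
      rcases hp i with h1 | h1 | h1 <;> rcases hq i with h2 | h2 | h2 <;>
        first
          | (rw [h1, h2] at hi; exact ⟨i, h1, h2, by omega⟩)
          | (exfalso
             have hile : r i + 1 ≤ p i * a + q i * b := Int.add_one_le_iff.mpr hi
             have hrr : (r i : ℝ) + 1 ≤ (p i : ℝ) * (a : ℝ) + (q i : ℝ) * (b : ℝ) := by
               exact_mod_cast hile
             rw [h1, h2] at hrr hcr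
             push_cast at hrr hcr
             linarith)
    have key10 : (![a + 1, b] : Pt) ∉ S → ∃ i, p i = 1 ∧ q i = -1 ∧ r i ≤ a - b := by
      intro hno
      have hex : ∃ i, ¬(p i * (a + 1) + q i * b ≤ r i) := by
        by_contra hall; push_neg at hall
        exact hno (fun i => hall i)
      obtain ⟨i, hi⟩ := hex
      push_neg at hi
      have hcr := hCx i
      rcases hp i with h1 | h1 | h1 <;> rcases hq i with h2 | h2 | h2 <;>
        first
          | (rw [h1, h2] at hi; exact ⟨i, h1, h2, by omega⟩)
          | (exfalso
             have hile : r i + 1 ≤ p i * (a + 1) + q i * b := Int.add_one_le_iff.mpr hi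
             have hrr : (r i : ℝ) + 1 ≤ (p i : ℝ) * ((a : ℝ) + 1) + (q i : ℝ) * (b : ℝ) := by
               exact_mod_cast hile
             rw [h1, h2] at hrr hcr
             push_cast at hrr hcr
             linarith)
    have key01 : (![a, b + 1] : Pt) ∉ S → ∃ i, p i = -1 ∧ q i = 1 ∧ r i ≤ b - a := by
      intro hno
      have hex : ∃ i, ¬(p i * a + q i * (b + 1) ≤ r i) := by
        by_contra hall; push_neg at hall
        exact hno (fun i => hall i)
      obtain ⟨i, hi⟩ := hex
      push_neg at hi
      have hcr := hCx i
      rcases hp i with h1 | h1 | h1 <;> rcases hq i with h2 | h2 | h2 <;>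
        first
          | (rw [h1, h2] at hi; exact ⟨i, h1, h2, by omega⟩)
          | (exfalso
             have hile : r i + 1 ≤ p i * a + q i * (b + 1) := Int.add_one_le_iff.mpr hi
             have hrr : (r i : ℝ) + 1 ≤ (p i : ℝ) * (a : ℝ) + (q i : ℝ) * ((b : ℝ) + 1) := by
               exact_mod_cast hile
             rw [h1, h2] at hrr hcr
             push_cast at hrr hcr
             linarith)
    -- (2) real bounds from keys
    have bd11 : (![a + 1, b + 1] : Pt) ∉ S → x 0 + x 1 ≤ (a : ℝ) + (b : ℝ) + 1 := by
      intro hno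
      obtain ⟨i, h1, h2, hri⟩ := key11 hno
      have hc := hCx i
      rw [h1, h2] at hc
      push_cast at hc
      have : (r i : ℝ) ≤ (a : ℝ) + (b : ℝ) + 1 := by exact_mod_cast hri
      linarith
    have bd00 : (![a, b] : Pt) ∉ S → (a : ℝ) + (b : ℝ) + 1 ≤ x 0 + x 1 := by
      intro hno
      obtain ⟨i, h1, h2, hri⟩ := key00 hno
      have hc := hCx i
      rw [h1, h2] at hc
      push_cast at hc
      have : (r i : ℝ) ≤ -((a : ℝ) + (b : ℝ)) - 1 := by exact_mod_cast hri
      linarith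
    have bd10 : (![a + 1, b] : Pt) ∉ S → x 0 - x 1 ≤ (a : ℝ) - (b : ℝ) := by
      intro hno
      obtain ⟨i, h1, h2, hri⟩ := key10 hno
      have hc := hCx i
      rw [h1, h2] at hc
      push_cast at hc
      have : (r i : ℝ) ≤ (a : ℝ) - (b : ℝ) := by exact_mod_cast hri
      linarith
    have bd01 : (![a, b + 1] : Pt) ∉ S → x 1 - x 0 ≤ (b : ℝ) - (a : ℝ) := by
      intro hno
      obtain ⟨i, h1, h2, hri⟩ := key01 hno
      have hc := hCx i
      rw [h1, h2] at hc
      push_cast at hc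
      have : (r i : ℝ) ≤ (b : ℝ) - (a : ℝ) := by exact_mod_cast hri
      linarith
    -- (3) adjacent corners cannot both be missing
    have adjA : (![a + 1, b + 1] : Pt) ∈ S ∨ (![a + 1, b] : Pt) ∈ S := by
      by_contra hcon; push_neg at hcon
      obtain ⟨i, hp1, hq1, hr1⟩ := key11 hcon.1
      obtain ⟨j, hp2, hq2, hr2⟩ := key10 hcon.2
      have hhalf : (1 : ℝ) * x 0 + (0 : ℝ) * x 1 ≤ (a : ℝ) := by
        refine hull_halfspace (fun v hv => ?_) hx
        obtain ⟨ζ, hζ, rfl⟩ := hv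
        have g1 : p i * ζ 0 + q i * ζ 1 ≤ r i := hζ i
        have g2 : p j * ζ 0 + q j * ζ 1 ≤ r j := hζ j
        rw [hp1, hq1] at g1; rw [hp2, hq2] at g2
        have hle : ζ 0 ≤ a := by omega
        have hler : ((ζ 0 : ℤ) : ℝ) ≤ (a : ℝ) := by exact_mod_cast hle
        simp only [realify]
        linarith
      linarith
    have adjB : (![a + 1, b + 1] : Pt) ∈ S ∨ (![a, b + 1] : Pt) ∈ S := by
      by_contra hcon; push_neg at hcon
      obtain ⟨i, hp1, hq1, hr1⟩ := key11 hcon.1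
      obtain ⟨j, hp2, hq2, hr2⟩ := key01 hcon.2
      have hhalf : (0 : ℝ) * x 0 + (1 : ℝ) * x 1 ≤ (b : ℝ) := by
        refine hull_halfspace (fun v hv => ?_) hx
        obtain ⟨ζ, hζ, rfl⟩ := hv
        have g1 : p i * ζ 0 + q i * ζ 1 ≤ r i := hζ i
        have g2 : p j * ζ 0 + q j * ζ 1 ≤ r j := hζ j
        rw [hp1, hq1] at g1; rw [hp2, hq2] at g2
        have hle : ζ 1 ≤ b := by omega
        have hler : ((ζ 1 : ℤ) : ℝ) ≤ (b : ℝ) := by exact_mod_cast hle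
        simp only [realify]
        linarith
      linarith
    have adjC : (![a, b] : Pt) ∈ S ∨ (![a + 1, b] : Pt) ∈ S := by
      by_contra hcon; push_neg at hcon
      obtain ⟨i, hp1, hq1, hr1⟩ := key00 hcon.1
      obtain ⟨j, hp2, hq2, hr2⟩ := key10 hcon.2
      have hhalf : (0 : ℝ) * x 0 + (-1 : ℝ) * x 1 ≤ -((b : ℝ) + 1) := by
        refine hull_halfspace (fun v hv => ?_) hx
        obtain ⟨ζ, hζ, rfl⟩ := hv
        have g1 : p i * ζ 0 + q i * ζ 1 ≤ r i := hζ i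
        have g2 : p j * ζ 0 + q j * ζ 1 ≤ r j := hζ j
        rw [hp1, hq1] at g1; rw [hp2, hq2] at g2
        have hle : b + 1 ≤ ζ 1 := by omega
        have hler : ((b : ℝ) + 1) ≤ ((ζ 1 : ℤ) : ℝ) := by exact_mod_cast hle
        simp only [realify]
        linarith
      linarith
    have adjD : (![a, b] : Pt) ∈ S ∨ (![a, b + 1] : Pt) ∈ S := by
      by_contra hcon; push_neg at hcon
      obtain ⟨i, hp1, hq1, hr1⟩ := key00 hcon.1
      obtain ⟨j, hp2, hq2, hr2⟩ := key01 hcon.2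
      have hhalf : (-1 : ℝ) * x 0 + (0 : ℝ) * x 1 ≤ -((a : ℝ) + 1) := by
        refine hull_halfspace (fun v hv => ?_) hx
        obtain ⟨ζ, hζ, rfl⟩ := hv
        have g1 : p i * ζ 0 + q i * ζ 1 ≤ r i := hζ i
        have g2 : p j * ζ 0 + q j * ζ 1 ≤ r j := hζ j
        rw [hp1, hq1] at g1; rw [hp2, hq2] at g2
        have hle : a + 1 ≤ ζ 0 := by omega
        have hler : ((a : ℝ) + 1) ≤ ((ζ 0 : ℤ) : ℝ) := by exact_mod_cast hle
        simp only [realify]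
        linarith
      linarith
    -- (4) corner neighborhoods
    have hN : ∀ u v : ℤ, (u = a ∨ u = a + 1) → (v = b ∨ v = b + 1) →
        (![u, v] : Pt) ∈ intNbhd x := by
      intro u v hu hv i; fin_cases i
      · show |x 0 - ((u : ℤ) : ℝ)| < 1
        rcases hu with rfl | rfl
        · rw [abs_lt]; constructor <;> linarith
        · push_cast; rw [abs_lt]; constructor <;> linarith
      · show |x 1 - ((v : ℤ) : ℝ)| < 1
        rcases hv with rfl | rfl
        · rw [abs_lt]; constructor <;> linarith
        · push_cast; rw [abs_lt]; constructor <;> linarith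
    -- (5) final case analysis
    by_cases m11 : (![a + 1, b + 1] : Pt) ∈ S
    · by_cases m00 : (![a, b] : Pt) ∈ S
      · by_cases m10 : (![a + 1, b] : Pt) ∈ S
        · by_cases m01 : (![a, b + 1] : Pt) ∈ S
          · -- all four corners
            refine combo_mem ![![a, b], ![a + 1, b], ![a, b + 1], ![a + 1, b + 1]]
              (S ∩ intNbhd x)
              (fun i => by
                fin_cases i
                · exact ⟨m00, hN a b (Or.inl rfl) (Or.inl rfl)⟩
                · exact ⟨m10, hN (a + 1) b (Or.inr rfl) (Or.inl rfl)⟩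
                · exact ⟨m01, hN a (b + 1) (Or.inl rfl) (Or.inr rfl)⟩
                · exact ⟨m11, hN (a + 1) (b + 1) (Or.inr rfl) (Or.inr rfl)⟩)
              ![(1 - (x 0 - (a : ℝ))) * (1 - (x 1 - (b : ℝ))),
                (x 0 - (a : ℝ)) * (1 - (x 1 - (b : ℝ))),
                (1 - (x 0 - (a : ℝ))) * (x 1 - (b : ℝ)),
                (x 0 - (a : ℝ)) * (x 1 - (b : ℝ))]
              (fun i => by
                fin_cases i
                · show (0:ℝ) ≤ (1 - (x 0 - (a : ℝ))) * (1 - (x 1 - (b : ℝ)))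
                  apply mul_nonneg <;> linarith
                · show (0:ℝ) ≤ (x 0 - (a : ℝ)) * (1 - (x 1 - (b : ℝ)))
                  apply mul_nonneg <;> linarith
                · show (0:ℝ) ≤ (1 - (x 0 - (a : ℝ))) * (x 1 - (b : ℝ))
                  apply mul_nonneg <;> linarith
                · show (0:ℝ) ≤ (x 0 - (a : ℝ)) * (x 1 - (b : ℝ))
                  apply mul_nonneg <;> linarith)
              (by
                simp only [Fin.sum_univ_four]
                show (1 - (x 0 - (a : ℝ))) * (1 - (x 1 - (b : ℝ)))
                    + (x 0 - (a : ℝ)) * (1 - (x 1 - (b : ℝ)))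
                    + (1 - (x 0 - (a : ℝ))) * (x 1 - (b : ℝ))
                    + (x 0 - (a : ℝ)) * (x 1 - (b : ℝ)) = 1
                ring)
              (fun j => by
                fin_cases j
                · simp only [Fin.sum_univ_four]
                  show x 0 = (1 - (x 0 - (a : ℝ))) * (1 - (x 1 - (b : ℝ))) * ((a : ℤ) : ℝ)
                      + (x 0 - (a : ℝ)) * (1 - (x 1 - (b : ℝ))) * ((a + 1 : ℤ) : ℝ)
                      + (1 - (x 0 - (a : ℝ))) * (x 1 - (b : ℝ)) * ((a : ℤ) : ℝ)
                      + (x 0 - (a : ℝ)) * (x 1 - (b : ℝ)) * ((a + 1 : ℤ) : ℝ)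
                  push_cast; ring
                · simp only [Fin.sum_univ_four]
                  show x 1 = (1 - (x 0 - (a : ℝ))) * (1 - (x 1 - (b : ℝ))) * ((b : ℤ) : ℝ)
                      + (x 0 - (a : ℝ)) * (1 - (x 1 - (b : ℝ))) * ((b : ℤ) : ℝ)
                      + (1 - (x 0 - (a : ℝ))) * (x 1 - (b : ℝ)) * ((b + 1 : ℤ) : ℝ)
                      + (x 0 - (a : ℝ)) * (x 1 - (b : ℝ)) * ((b + 1 : ℤ) : ℝ)
                  push_cast; ring)
          · -- missing (a, b+1)
            have hge := bd01 m01
            refine combo_mem ![![a, b], ![a + 1, b], ![a + 1, b + 1]] (S ∩ intNbhd x)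
              (fun i => by
                fin_cases i
                · exact ⟨m00, hN a b (Or.inl rfl) (Or.inl rfl)⟩
                · exact ⟨m10, hN (a + 1) b (Or.inr rfl) (Or.inl rfl)⟩
                · exact ⟨m11, hN (a + 1) (b + 1) (Or.inr rfl) (Or.inr rfl)⟩)
              ![1 - (x 0 - (a : ℝ)), (x 0 - (a : ℝ)) - (x 1 - (b : ℝ)), x 1 - (b : ℝ)]
              (fun i => by
                fin_cases i
                · show (0:ℝ) ≤ 1 - (x 0 - (a : ℝ)); linarith
                · show (0:ℝ) ≤ (x 0 - (a : ℝ)) - (x 1 - (b : ℝ)); linarith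
                · show (0:ℝ) ≤ x 1 - (b : ℝ); linarith)
              (by
                simp only [Fin.sum_univ_three]
                show (1 - (x 0 - (a : ℝ))) + ((x 0 - (a : ℝ)) - (x 1 - (b : ℝ)))
                    + (x 1 - (b : ℝ)) = 1
                ring)
              (fun j => by
                fin_cases j
                · simp only [Fin.sum_univ_three]
                  show x 0 = (1 - (x 0 - (a : ℝ))) * ((a : ℤ) : ℝ)
                      + ((x 0 - (a : ℝ)) - (x 1 - (b : ℝ))) * ((a + 1 : ℤ) : ℝ)
                      + (x 1 - (b : ℝ)) * ((a + 1 : ℤ) : ℝ)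
                  push_cast; ring
                · simp only [Fin.sum_univ_three]
                  show x 1 = (1 - (x 0 - (a : ℝ))) * ((b : ℤ) : ℝ)
                      + ((x 0 - (a : ℝ)) - (x 1 - (b : ℝ))) * ((b : ℤ) : ℝ)
                      + (x 1 - (b : ℝ)) * ((b + 1 : ℤ) : ℝ)
                  push_cast; ring)
        · -- missing (a+1, b)
          have hge := bd10 m10
          by_cases m01 : (![a, b + 1] : Pt) ∈ S
          · refine combo_mem ![![a, b], ![a, b + 1], ![a + 1, b + 1]] (S ∩ intNbhd x)
              (fun i => by
                fin_cases i
                · exact ⟨m00, hN a b (Or.inl rfl) (Or.inl rfl)⟩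
                · exact ⟨m01, hN a (b + 1) (Or.inl rfl) (Or.inr rfl)⟩
                · exact ⟨m11, hN (a + 1) (b + 1) (Or.inr rfl) (Or.inr rfl)⟩)
              ![1 - (x 1 - (b : ℝ)), (x 1 - (b : ℝ)) - (x 0 - (a : ℝ)), x 0 - (a : ℝ)]
              (fun i => by
                fin_cases i
                · show (0:ℝ) ≤ 1 - (x 1 - (b : ℝ)); linarith
                · show (0:ℝ) ≤ (x 1 - (b : ℝ)) - (x 0 - (a : ℝ)); linarith
                · show (0:ℝ) ≤ x 0 - (a : ℝ); linarith)
              (by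
                simp only [Fin.sum_univ_three]
                show (1 - (x 1 - (b : ℝ))) + ((x 1 - (b : ℝ)) - (x 0 - (a : ℝ)))
                    + (x 0 - (a : ℝ)) = 1
                ring)
              (fun j => by
                fin_cases j
                · simp only [Fin.sum_univ_three]
                  show x 0 = (1 - (x 1 - (b : ℝ))) * ((a : ℤ) : ℝ)
                      + ((x 1 - (b : ℝ)) - (x 0 - (a : ℝ))) * ((a : ℤ) : ℝ)
                      + (x 0 - (a : ℝ)) * ((a + 1 : ℤ) : ℝ)
                  push_cast; ring
                · simp only [Fin.sum_univ_three]
                  show x 1 = (1 - (x 1 - (b : ℝ))) * ((b : ℤ) : ℝ)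
                      + ((x 1 - (b : ℝ)) - (x 0 - (a : ℝ))) * ((b + 1 : ℤ) : ℝ)
                      + (x 0 - (a : ℝ)) * ((b + 1 : ℤ) : ℝ)
                  push_cast; ring)
          · -- both diagonal corners missing: x lies on the diagonal
            have hge2 := bd01 m01
            have hdiag : x 1 - (b : ℝ) = x 0 - (a : ℝ) := by linarith
            refine combo_mem ![![a, b], ![a + 1, b + 1]] (S ∩ intNbhd x)
              (fun i => by
                fin_cases i
                · exact ⟨m00, hN a b (Or.inl rfl) (Or.inl rfl)⟩
                · exact ⟨m11, hN (a + 1) (b + 1) (Or.inr rfl) (Or.inr rfl)⟩)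
              ![1 - (x 0 - (a : ℝ)), x 0 - (a : ℝ)]
              (fun i => by
                fin_cases i
                · show (0:ℝ) ≤ 1 - (x 0 - (a : ℝ)); linarith
                · show (0:ℝ) ≤ x 0 - (a : ℝ); linarith)
              (by
                simp only [Fin.sum_univ_two]
                show (1 - (x 0 - (a : ℝ))) + (x 0 - (a : ℝ)) = 1
                ring)
              (fun j => by
                fin_cases j
                · simp only [Fin.sum_univ_two]
                  show x 0 = (1 - (x 0 - (a : ℝ))) * ((a : ℤ) : ℝ)
                      + (x 0 - (a : ℝ)) * ((a + 1 : ℤ) : ℝ)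
                  push_cast; ring
                · simp only [Fin.sum_univ_two]
                  show x 1 = (1 - (x 0 - (a : ℝ))) * ((b : ℤ) : ℝ)
                      + (x 0 - (a : ℝ)) * ((b + 1 : ℤ) : ℝ)
                  push_cast; linarith)
      · -- missing (a, b)
        have hge := bd00 m00
        have m10 : (![a + 1, b] : Pt) ∈ S := adjC.resolve_left m00
        have m01 : (![a, b + 1] : Pt) ∈ S := adjD.resolve_left m00
        refine combo_mem ![![a + 1, b], ![a, b + 1], ![a + 1, b + 1]] (S ∩ intNbhd x)
          (fun i => by
            fin_cases i
            · exact ⟨m10, hN (a + 1) b (Or.inr rfl) (Or.inl rfl)⟩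
            · exact ⟨m01, hN a (b + 1) (Or.inl rfl) (Or.inr rfl)⟩
            · exact ⟨m11, hN (a + 1) (b + 1) (Or.inr rfl) (Or.inr rfl)⟩)
          ![1 - (x 1 - (b : ℝ)), 1 - (x 0 - (a : ℝ)),
            (x 0 - (a : ℝ)) + (x 1 - (b : ℝ)) - 1]
          (fun i => by
            fin_cases i
            · show (0:ℝ) ≤ 1 - (x 1 - (b : ℝ)); linarith
            · show (0:ℝ) ≤ 1 - (x 0 - (a : ℝ)); linarith
            · show (0:ℝ) ≤ (x 0 - (a : ℝ)) + (x 1 - (b : ℝ)) - 1; linarith)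
          (by
            simp only [Fin.sum_univ_three]
            show (1 - (x 1 - (b : ℝ))) + (1 - (x 0 - (a : ℝ)))
                + ((x 0 - (a : ℝ)) + (x 1 - (b : ℝ)) - 1) = 1
            ring)
          (fun j => by
            fin_cases j
            · simp only [Fin.sum_univ_three]
              show x 0 = (1 - (x 1 - (b : ℝ))) * ((a + 1 : ℤ) : ℝ)
                  + (1 - (x 0 - (a : ℝ))) * ((a : ℤ) : ℝ)
                  + ((x 0 - (a : ℝ)) + (x 1 - (b : ℝ)) - 1) * ((a + 1 : ℤ) : ℝ)
              push_cast; ring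
            · simp only [Fin.sum_univ_three]
              show x 1 = (1 - (x 1 - (b : ℝ))) * ((b : ℤ) : ℝ)
                  + (1 - (x 0 - (a : ℝ))) * ((b + 1 : ℤ) : ℝ)
                  + ((x 0 - (a : ℝ)) + (x 1 - (b : ℝ)) - 1) * ((b + 1 : ℤ) : ℝ)
              push_cast; ring)
    · -- missing (a+1, b+1)
      have hle := bd11 m11
      have m10 : (![a + 1, b] : Pt) ∈ S := adjA.resolve_left m11
      have m01 : (![a, b + 1] : Pt) ∈ S := adjB.resolve_left m11
      by_cases m00 : (![a, b] : Pt) ∈ S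
      · refine combo_mem ![![a, b], ![a + 1, b], ![a, b + 1]] (S ∩ intNbhd x)
          (fun i => by
            fin_cases i
            · exact ⟨m00, hN a b (Or.inl rfl) (Or.inl rfl)⟩
            · exact ⟨m10, hN (a + 1) b (Or.inr rfl) (Or.inl rfl)⟩
            · exact ⟨m01, hN a (b + 1) (Or.inl rfl) (Or.inr rfl)⟩)
          ![1 - (x 0 - (a : ℝ)) - (x 1 - (b : ℝ)), x 0 - (a : ℝ), x 1 - (b : ℝ)]
          (fun i => by
            fin_cases i
            · show (0:ℝ) ≤ 1 - (x 0 - (a : ℝ)) - (x 1 - (b : ℝ)); linarith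
            · show (0:ℝ) ≤ x 0 - (a : ℝ); linarith
            · show (0:ℝ) ≤ x 1 - (b : ℝ); linarith)
          (by
            simp only [Fin.sum_univ_three]
            show (1 - (x 0 - (a : ℝ)) - (x 1 - (b : ℝ))) + (x 0 - (a : ℝ))
                + (x 1 - (b : ℝ)) = 1
            ring)
          (fun j => by
            fin_cases j
            · simp only [Fin.sum_univ_three]
              show x 0 = (1 - (x 0 - (a : ℝ)) - (x 1 - (b : ℝ))) * ((a : ℤ) : ℝ)
                  + (x 0 - (a : ℝ)) * ((a + 1 : ℤ) : ℝ)
                  + (x 1 - (b : ℝ)) * ((a : ℤ) : ℝ)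
              push_cast; ring
            · simp only [Fin.sum_univ_three]
              show x 1 = (1 - (x 0 - (a : ℝ)) - (x 1 - (b : ℝ))) * ((b : ℤ) : ℝ)
                  + (x 0 - (a : ℝ)) * ((b : ℤ) : ℝ)
                  + (x 1 - (b : ℝ)) * ((b + 1 : ℤ) : ℝ)
              push_cast; ring)
      · -- both diagonal corners missing (antidiagonal)
        have hge := bd00 m00
        refine combo_mem ![![a + 1, b], ![a, b + 1]] (S ∩ intNbhd x)
          (fun i => by
            fin_cases i
            · exact ⟨m10, hN (a + 1) b (Or.inr rfl) (Or.inl rfl)⟩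
            · exact ⟨m01, hN a (b + 1) (Or.inl rfl) (Or.inr rfl)⟩)
          ![x 0 - (a : ℝ), x 1 - (b : ℝ)]
          (fun i => by
            fin_cases i
            · show (0:ℝ) ≤ x 0 - (a : ℝ); linarith
            · show (0:ℝ) ≤ x 1 - (b : ℝ); linarith)
          (by
            simp only [Fin.sum_univ_two]
            show (x 0 - (a : ℝ)) + (x 1 - (b : ℝ)) = 1
            linarith)
          (fun j => by
            fin_cases j
            · simp only [Fin.sum_univ_two]
              show x 0 = (x 0 - (a : ℝ)) * ((a + 1 : ℤ) : ℝ)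
                  + (x 1 - (b : ℝ)) * ((a : ℤ) : ℝ)
              have h2 : x 1 - (b : ℝ) = 1 - (x 0 - (a : ℝ)) := by linarith
              rw [h2]; push_cast; ring
            · simp only [Fin.sum_univ_two]
              show x 1 = (x 0 - (a : ℝ)) * ((b : ℤ) : ℝ)
                  + (x 1 - (b : ℝ)) * ((b + 1 : ℤ) : ℝ)
              have h2 : x 0 - (a : ℝ) = 1 - (x 1 - (b : ℝ)) := by linarith
              rw [h2]; push_cast; ring)

end ICProof

/-- Characterization of integrally convex sets in ℤ² by inequalities with
coefficients in {-1,0,+1}. -/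
theorem integrally_convex_set_dim2_characterization (S : Set (Fin 2 → ℤ)) :
    IsIntegrallyConvexSet S ↔
      ∃ (m : ℕ) (p q r : Fin m → ℤ),
        (∀ i, p i = -1 ∨ p i = 0 ∨ p i = 1) ∧
        (∀ i, q i = -1 ∨ q i = 0 ∨ q i = 1) ∧
        S = {x : Fin 2 → ℤ | ∀ i, p i * x 0 + q i * x 1 ≤ r i} := by
  constructor
  · exact fun hS => ICProof.forward hS
  · rintro ⟨m, p, q, r, hp, hq, rfl⟩
    exact ICProof.backward p q r hp hq
end
end
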